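/- arXiv:1012.1777 — 5 statements merged into one kernel-verified Lean document; each statement's English description precedes it below -/
import Mathlib

section
/- Let D = ⟨x, y | x^(2^r) = y^(2^s) = [x,y]^2 = [x,[x,y]] = [y,[x,y]] = 1⟩ with r ≥ s ≥ 1. Then the order of D is 2^(r+s+1). -/
/-- The generator `x` of the free group on two letters. -/
def gx : FreeGroup (Fin 2) := FreeGroup.of 0

/-- The generator `y` of the free group on two letters. -/
def gy : FreeGroup (Fin 2) := FreeGroup.of 1

open scoped commutatorElement

/-- The relations of the Rédei presentation with parameters `r`, `s`:
`x^(2^r)`, `y^(2^s)`, `⁅x,y⁆^2`, `⁅x,⁅x,y⁆⁆`, `⁅y,⁅x,y⁆⁆`,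
where `⁅a,b⁆ = a*b*a⁻¹*b⁻¹`. -/
def redeiRels (r s : ℕ) : Set (FreeGroup (Fin 2)) :=
  {gx ^ (2 ^ r), gy ^ (2 ^ s), ⁅gx, gy⁆ ^ 2, ⁅gx, ⁅gx, gy⁆⁆, ⁅gy, ⁅gx, gy⁆⁆}

/-- The Rédei group `⟨x,y ∣ x^(2^r) = y^(2^s) = [x,y]^2 = [x,[x,y]] = [y,[x,y]] = 1⟩`. -/
abbrev RedeiGroup (r s : ℕ) := PresentedGroup (redeiRels r s)

/-! ### A concrete model of order `2^(r+s+1)` (for `r, s ≥ 1`) -/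

/-- The model group: a central extension of `ZMod (2^(r+1)) × ZMod (2^(s+1))` by `ZMod 2`. -/
@[ext]
structure Md (r s : ℕ) where
  a : ZMod (2 ^ (r + 1))
  b : ZMod (2 ^ (s + 1))
  e : ZMod 2

namespace Md

variable {r s : ℕ}

/-- Reduction mod 2 of the first coordinate ring. -/
def ca (x : ZMod (2 ^ (r + 1))) : ZMod 2 :=
  ZMod.castHom (dvd_pow_self 2 (Nat.succ_ne_zero r)) (ZMod 2) x

/-- Reduction mod 2 of the second coordinate ring. -/
def cb (x : ZMod (2 ^ (s + 1))) : ZMod 2 :=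
  ZMod.castHom (dvd_pow_self 2 (Nat.succ_ne_zero s)) (ZMod 2) x

@[simp] lemma ca_add (x y : ZMod (2 ^ (r + 1))) : ca (x + y) = ca x + ca y := map_add _ x y
@[simp] lemma ca_neg (x : ZMod (2 ^ (r + 1))) : ca (-x) = -ca x := map_neg _ x
@[simp] lemma ca_zero : ca (0 : ZMod (2 ^ (r + 1))) = 0 := map_zero _
@[simp] lemma ca_one : ca (1 : ZMod (2 ^ (r + 1))) = 1 := map_one _
@[simp] lemma cb_add (x y : ZMod (2 ^ (s + 1))) : cb (x + y) = cb x + cb y := map_add _ x y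
@[simp] lemma cb_neg (x : ZMod (2 ^ (s + 1))) : cb (-x) = -cb x := map_neg _ x
@[simp] lemma cb_zero : cb (0 : ZMod (2 ^ (s + 1))) = 0 := map_zero _
@[simp] lemma cb_one : cb (1 : ZMod (2 ^ (s + 1))) = 1 := map_one _

instance : Mul (Md r s) := ⟨fun u v => ⟨u.a + v.a, u.b + v.b, u.e + v.e + cb u.b * ca v.a⟩⟩
instance : One (Md r s) := ⟨⟨0, 0, 0⟩⟩
instance : Inv (Md r s) := ⟨fun u => ⟨-u.a, -u.b, -u.e + cb u.b * ca u.a⟩⟩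

@[simp] lemma mul_a (u v : Md r s) : (u * v).a = u.a + v.a := rfl
@[simp] lemma mul_b (u v : Md r s) : (u * v).b = u.b + v.b := rfl
@[simp] lemma mul_e (u v : Md r s) : (u * v).e = u.e + v.e + cb u.b * ca v.a := rfl
@[simp] lemma one_a : (1 : Md r s).a = 0 := rfl
@[simp] lemma one_b : (1 : Md r s).b = 0 := rfl
@[simp] lemma one_e : (1 : Md r s).e = 0 := rfl
@[simp] lemma inv_a (u : Md r s) : u⁻¹.a = -u.a := rfl
@[simp] lemma inv_b (u : Md r s) : u⁻¹.b = -u.b := rfl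
@[simp] lemma inv_e (u : Md r s) : u⁻¹.e = -u.e + cb u.b * ca u.a := rfl

instance : Group (Md r s) where
  mul_assoc u v w := by refine Md.ext ?_ ?_ ?_ <;> simp <;> ring
  one_mul u := by refine Md.ext ?_ ?_ ?_ <;> simp
  mul_one u := by refine Md.ext ?_ ?_ ?_ <;> simp
  inv_mul_cancel u := by refine Md.ext ?_ ?_ ?_ <;> simp <;> ring_nf <;> simp [show (2 : ZMod 2) = 0 from rfl]

/-- The image of `x`. -/
def X : Md r s := ⟨1, 0, 0⟩
/-- The image of `y`. -/
def Y : Md r s := ⟨0, 1, 0⟩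
/-- The image of the commutator. -/
def C : Md r s := ⟨0, 0, 1⟩

lemma X_pow (n : ℕ) : (X : Md r s) ^ n = ⟨(n : ZMod (2 ^ (r + 1))), 0, 0⟩ := by
  induction n with
  | zero => simp; rfl
  | succ n ih => rw [pow_succ, ih]; refine Md.ext ?_ ?_ ?_ <;> simp [X]

lemma Y_pow (n : ℕ) : (Y : Md r s) ^ n = ⟨0, (n : ZMod (2 ^ (s + 1))), 0⟩ := by
  induction n with
  | zero => simp; rfl
  | succ n ih => rw [pow_succ, ih]; refine Md.ext ?_ ?_ ?_ <;> simp [Y]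

lemma C_pow (n : ℕ) : (C : Md r s) ^ n = ⟨0, 0, (n : ZMod 2)⟩ := by
  induction n with
  | zero => simp; rfl
  | succ n ih => rw [pow_succ, ih]; refine Md.ext ?_ ?_ ?_ <;> simp [C]

lemma comm_XY : ⁅(X : Md r s), (Y : Md r s)⁆ = (C : Md r s) := by
  show X * Y * X⁻¹ * Y⁻¹ = C
  refine Md.ext ?_ ?_ ?_ <;> simp [X, Y, C] <;> decide

lemma comm_XC : ⁅(X : Md r s), (C : Md r s)⁆ = 1 := by
  show X * C * X⁻¹ * C⁻¹ = 1
  refine Md.ext ?_ ?_ ?_ <;> simp [X, C] <;> decide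

lemma comm_YC : ⁅(Y : Md r s), (C : Md r s)⁆ = 1 := by
  show Y * C * Y⁻¹ * C⁻¹ = 1
  refine Md.ext ?_ ?_ ?_ <;> simp [Y, C] <;> decide

lemma card_Md : Nat.card (Md r s) = 2 ^ ((r + 1) + (s + 1) + 1) := by
  have e : Md r s ≃ ZMod (2 ^ (r + 1)) × ZMod (2 ^ (s + 1)) × ZMod 2 :=
    { toFun := fun u => (u.a, u.b, u.e)
      invFun := fun p => ⟨p.1, p.2.1, p.2.2⟩
      left_inv := fun u => rfl
      right_inv := fun p => rfl }
  rw [Nat.card_congr e, Nat.card_prod, Nat.card_prod, Nat.card_zmod, Nat.card_zmod,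
    Nat.card_zmod]
  ring

end Md

namespace RedeiAux

variable {r s : ℕ}

/-- The generator `x` in the Rédei group. -/
def Xg : RedeiGroup r s := PresentedGroup.of 0
/-- The generator `y` in the Rédei group. -/
def Yg : RedeiGroup r s := PresentedGroup.of 1
/-- The commutator `⁅x, y⁆` in the Rédei group. -/
def Cg : RedeiGroup r s := ⁅(Xg : RedeiGroup r s), (Yg : RedeiGroup r s)⁆

lemma mk_rel {ρ : FreeGroup (Fin 2)} (h : ρ ∈ redeiRels r s) :
    PresentedGroup.mk (redeiRels r s) ρ = 1 :=
  (QuotientGroup.eq_one_iff _).mpr (Subgroup.subset_normalClosure h)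

lemma mk_gx : PresentedGroup.mk (redeiRels r s) gx = Xg := rfl
lemma mk_gy : PresentedGroup.mk (redeiRels r s) gy = Yg := rfl
lemma mk_c : PresentedGroup.mk (redeiRels r s) ⁅gx, gy⁆ = (Cg : RedeiGroup r s) := by
  rw [map_commutatorElement, mk_gx, mk_gy, Cg]

lemma hX : (Xg : RedeiGroup r s) ^ (2 ^ r) = 1 := by
  rw [← mk_gx, ← map_pow]
  exact mk_rel (by left; rfl)

lemma hY : (Yg : RedeiGroup r s) ^ (2 ^ s) = 1 := by
  rw [← mk_gy, ← map_pow]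
  exact mk_rel (by right; left; rfl)

lemma hC2 : (Cg : RedeiGroup r s) ^ 2 = 1 := by
  rw [← mk_c, ← map_pow]
  exact mk_rel (by right; right; left; rfl)

lemma hXC : Commute (Xg : RedeiGroup r s) Cg := by
  apply commutatorElement_eq_one_iff_commute.mp
  rw [← mk_c, ← mk_gx, ← map_commutatorElement]
  exact mk_rel (by right; right; right; left; rfl)

lemma hYC : Commute (Yg : RedeiGroup r s) Cg := by
  apply commutatorElement_eq_one_iff_commute.mp
  rw [← mk_c, ← mk_gy, ← map_commutatorElement]
  exact mk_rel (by right; right; right; right; rfl)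

lemma hCinv : (Cg : RedeiGroup r s)⁻¹ = Cg := by
  have h : (Cg : RedeiGroup r s) * Cg = 1 := by rw [← sq]; exact hC2
  exact inv_eq_of_mul_eq_one_right h

lemma hYX : (Yg : RedeiGroup r s) * Xg = Xg * Yg * Cg := by
  have h1 : (Yg : RedeiGroup r s) * Xg = ⁅(Yg : RedeiGroup r s), (Xg : RedeiGroup r s)⁆ * (Xg * Yg) := by
    rw [commutatorElement_def]; group
  have h2 : ⁅(Yg : RedeiGroup r s), (Xg : RedeiGroup r s)⁆ = Cg :=
    (commutatorElement_inv Xg Yg).symm.trans hCinv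
  have h3 : Commute (Cg : RedeiGroup r s) (Xg * Yg) :=
    Commute.mul_right hXC.symm hYC.symm
  rw [h1, h2, h3.eq, mul_assoc]

lemma moveY (b : ℕ) : (Yg : RedeiGroup r s) ^ b * Xg = Xg * Yg ^ b * Cg ^ b := by
  induction b with
  | zero => simp
  | succ b ih =>
    have hcy : (Cg : RedeiGroup r s) ^ b * Yg = Yg * Cg ^ b := (hYC.symm.pow_left b).eq
    calc (Yg : RedeiGroup r s) ^ (b + 1) * Xg
        = Yg ^ b * (Yg * Xg) := by rw [pow_succ, mul_assoc]
      _ = Yg ^ b * (Xg * Yg * Cg) := by rw [hYX]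
      _ = (Yg ^ b * Xg) * Yg * Cg := by group
      _ = (Xg * Yg ^ b * Cg ^ b) * Yg * Cg := by rw [ih]
      _ = Xg * Yg ^ b * (Cg ^ b * Yg) * Cg := by group
      _ = Xg * Yg ^ b * (Yg * Cg ^ b) * Cg := by rw [hcy]
      _ = Xg * Yg ^ (b + 1) * Cg ^ (b + 1) := by rw [pow_succ, pow_succ]; group

lemma moveYX (a b : ℕ) :
    (Yg : RedeiGroup r s) ^ b * Xg ^ a = Xg ^ a * Yg ^ b * Cg ^ (a * b) := by
  induction a with
  | zero => simp
  | succ a ih =>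
    have hcx : (Cg : RedeiGroup r s) ^ (a * b) * Xg = Xg * Cg ^ (a * b) :=
      (hXC.symm.pow_left _).eq
    calc (Yg : RedeiGroup r s) ^ b * Xg ^ (a + 1)
        = (Yg ^ b * Xg ^ a) * Xg := by rw [pow_succ]; group
      _ = Xg ^ a * Yg ^ b * Cg ^ (a * b) * Xg := by rw [ih]
      _ = Xg ^ a * Yg ^ b * (Cg ^ (a * b) * Xg) := by group
      _ = Xg ^ a * Yg ^ b * (Xg * Cg ^ (a * b)) := by rw [hcx]
      _ = Xg ^ a * (Yg ^ b * Xg) * Cg ^ (a * b) := by group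
      _ = Xg ^ a * (Xg * Yg ^ b * Cg ^ b) * Cg ^ (a * b) := by rw [moveY]
      _ = Xg ^ (a + 1) * Yg ^ b * (Cg ^ b * Cg ^ (a * b)) := by rw [pow_succ]; group
      _ = Xg ^ (a + 1) * Yg ^ b * Cg ^ ((a + 1) * b) := by
          rw [← pow_add]
          congr 1
          ring

lemma Smul (a b e a' b' e' : ℕ) :
    ((Xg : RedeiGroup r s) ^ a * Yg ^ b * Cg ^ e) * (Xg ^ a' * Yg ^ b' * Cg ^ e') =
      Xg ^ (a + a') * Yg ^ (b + b') * Cg ^ (a' * b + e + e') := by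
  have h : Commute ((Cg : RedeiGroup r s) ^ e) (Xg ^ a' * Yg ^ b') :=
    Commute.mul_right (hXC.symm.pow_pow e a') (hYC.symm.pow_pow e b')
  calc ((Xg : RedeiGroup r s) ^ a * Yg ^ b * Cg ^ e) * (Xg ^ a' * Yg ^ b' * Cg ^ e')
      = Xg ^ a * Yg ^ b * (Cg ^ e * (Xg ^ a' * Yg ^ b')) * Cg ^ e' := by group
    _ = Xg ^ a * Yg ^ b * ((Xg ^ a' * Yg ^ b') * Cg ^ e) * Cg ^ e' := by rw [h.eq]
    _ = Xg ^ a * (Yg ^ b * Xg ^ a') * (Yg ^ b' * (Cg ^ e * Cg ^ e')) := by group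
    _ = Xg ^ a * (Xg ^ a' * Yg ^ b * Cg ^ (a' * b)) * (Yg ^ b' * (Cg ^ e * Cg ^ e')) := by
        rw [moveYX]
    _ = (Xg ^ a * Xg ^ a') * Yg ^ b * (Cg ^ (a' * b) * Yg ^ b') * (Cg ^ e * Cg ^ e') := by
        group
    _ = (Xg ^ a * Xg ^ a') * Yg ^ b * (Yg ^ b' * Cg ^ (a' * b)) * (Cg ^ e * Cg ^ e') := by
        rw [(hYC.symm.pow_pow _ _).eq]
    _ = (Xg ^ a * Xg ^ a') * (Yg ^ b * Yg ^ b') * (Cg ^ (a' * b) * Cg ^ e * Cg ^ e') := by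
        group
    _ = Xg ^ (a + a') * Yg ^ (b + b') * Cg ^ (a' * b + e + e') := by
        rw [← pow_add, ← pow_add, ← pow_add, ← pow_add]

/-- The putative normal-form subgroup. -/
def S (r s : ℕ) : Subgroup (RedeiGroup r s) where
  carrier := {g | ∃ a b e : ℕ, g = Xg ^ a * Yg ^ b * Cg ^ e}
  one_mem' := ⟨0, 0, 0, by simp⟩
  mul_mem' := by
    rintro _ _ ⟨a, b, e, rfl⟩ ⟨a', b', e', rfl⟩
    exact ⟨a + a', b + b', a' * b + e + e', Smul a b e a' b' e'⟩
  inv_mem' := by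
    rintro _ ⟨a, b, e, rfl⟩
    have hx1 : (Xg : RedeiGroup r s)⁻¹ = Xg ^ (2 ^ r - 1) := by
      apply inv_eq_of_mul_eq_one_right
      rw [← pow_succ']
      have : 2 ^ r - 1 + 1 = 2 ^ r := Nat.succ_pred_eq_of_pos (pow_pos (two_pos : (0:ℕ) < 2) r)
      rw [this]; exact hX
    have hy1 : (Yg : RedeiGroup r s)⁻¹ = Yg ^ (2 ^ s - 1) := by
      apply inv_eq_of_mul_eq_one_right
      rw [← pow_succ']
      have : 2 ^ s - 1 + 1 = 2 ^ s := Nat.succ_pred_eq_of_pos (pow_pos (two_pos : (0:ℕ) < 2) s)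
      rw [this]; exact hY
    have key : ((Xg : RedeiGroup r s) ^ a * Yg ^ b * Cg ^ e)⁻¹ =
        (Xg ^ 0 * Yg ^ 0 * Cg ^ e) * ((Xg ^ 0 * Yg ^ ((2 ^ s - 1) * b) * Cg ^ 0) *
          (Xg ^ ((2 ^ r - 1) * a) * Yg ^ 0 * Cg ^ 0)) := by
      rw [mul_inv_rev, mul_inv_rev, ← inv_pow, ← inv_pow, ← inv_pow, hCinv, hx1, hy1,
        ← pow_mul, ← pow_mul]
      simp [mul_assoc]
    rw [key, Smul, Smul]
    exact ⟨_, _, _, rfl⟩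

lemma mem_S (g : RedeiGroup r s) : ∃ a b e : ℕ, g = Xg ^ a * Yg ^ b * Cg ^ e := by
  refine PresentedGroup.generated_by _ (S r s) ?_ g
  intro j
  fin_cases j
  · exact ⟨1, 0, 0, by simp [Xg]⟩
  · exact ⟨0, 1, 0, by simp [Yg]⟩

lemma surjNF : Function.Surjective
    (fun p : Fin (2 ^ r) × Fin (2 ^ s) × Fin 2 =>
      (Xg : RedeiGroup r s) ^ (p.1 : ℕ) * Yg ^ (p.2.1 : ℕ) * Cg ^ (p.2.2 : ℕ)) := by
  intro g
  obtain ⟨a, b, e, rfl⟩ := mem_S g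
  refine ⟨⟨⟨a % 2 ^ r, Nat.mod_lt _ (by positivity)⟩,
    ⟨b % 2 ^ s, Nat.mod_lt _ (by positivity)⟩,
    ⟨e % 2, Nat.mod_lt _ two_pos⟩⟩, ?_⟩
  simp only
  rw [← pow_eq_pow_mod a hX, ← pow_eq_pow_mod b hY, ← pow_eq_pow_mod e hC2]

instance : Finite (RedeiGroup r s) := Finite.of_surjective _ (surjNF (r := r) (s := s))

lemma card_le : Nat.card (RedeiGroup r s) ≤ 2 ^ (r + s + 1) := by
  have h := Nat.card_le_card_of_surjective _ (surjNF (r := r) (s := s))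
  have : Nat.card (Fin (2 ^ r) × Fin (2 ^ s) × Fin 2) = 2 ^ (r + s + 1) := by
    simp [Nat.card_prod]
    ring
  omega

/-- The homomorphism to the model group. -/
noncomputable def phi (r s : ℕ) : RedeiGroup (r + 1) (s + 1) →* Md r s := by
  refine PresentedGroup.toGroup (f := ![Md.X, Md.Y]) ?_
  intro ρ hρ
  have hx : FreeGroup.lift ![Md.X, Md.Y] gx = (Md.X : Md r s) := FreeGroup.lift_apply_of
  have hy : FreeGroup.lift ![Md.X, Md.Y] gy = (Md.Y : Md r s) := FreeGroup.lift_apply_of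
  rcases hρ with h | h | h | h | h
  · subst h
    rw [map_pow, hx, Md.X_pow]
    refine Md.ext ?_ ?_ ?_ <;> simp
  · subst h
    rw [map_pow, hy, Md.Y_pow]
    refine Md.ext ?_ ?_ ?_ <;> simp
  · rw [h, map_pow, map_commutatorElement, hx, hy, Md.comm_XY, Md.C_pow]
    refine Md.ext rfl rfl ?_
    show ((2 : ℕ) : ZMod 2) = 0
    decide
  · rw [h, map_commutatorElement, map_commutatorElement, hx, hy, Md.comm_XY, Md.comm_XC]
  · rw [h, map_commutatorElement, map_commutatorElement, hx, hy, Md.comm_XY, Md.comm_YC]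

lemma phi_Xg : phi r s (Xg : RedeiGroup (r + 1) (s + 1)) = Md.X := by
  simpa [Xg, phi] using (PresentedGroup.toGroup.of _ (x := (0 : Fin 2)))

lemma phi_Yg : phi r s (Yg : RedeiGroup (r + 1) (s + 1)) = Md.Y := by
  simpa [Yg, phi] using (PresentedGroup.toGroup.of _ (x := (1 : Fin 2)))

lemma phi_Cg : phi r s (Cg : RedeiGroup (r + 1) (s + 1)) = Md.C := by
  rw [show (Cg : RedeiGroup (r + 1) (s + 1)) = ⁅(Xg : RedeiGroup (r + 1) (s + 1)), Yg⁆
    from rfl, map_commutatorElement, phi_Xg, phi_Yg, Md.comm_XY]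

lemma phi_surj : Function.Surjective (phi r s) := by
  haveI : NeZero (2 ^ (r + 1)) := ⟨pow_ne_zero _ two_ne_zero⟩
  haveI : NeZero (2 ^ (s + 1)) := ⟨pow_ne_zero _ two_ne_zero⟩
  rintro ⟨a, b, e⟩
  refine ⟨Xg ^ a.val * Yg ^ b.val * Cg ^ e.val, ?_⟩
  rw [map_mul, map_mul, map_pow, map_pow, map_pow, phi_Xg, phi_Yg, phi_Cg,
    Md.X_pow, Md.Y_pow, Md.C_pow]
  refine Md.ext ?_ ?_ ?_ <;>
    simp [ZMod.natCast_rightInverse a, ZMod.natCast_rightInverse b, ZMod.natCast_rightInverse e]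

end RedeiAux

theorem stmt0 (r s : ℕ) (hs : 1 ≤ s) (hrs : s ≤ r) :
    Nat.card (RedeiGroup r s) = 2 ^ (r + s + 1) := by
  obtain ⟨r', rfl⟩ : ∃ r', r = r' + 1 := ⟨r - 1, (Nat.succ_pred_eq_of_pos (by omega)).symm⟩
  obtain ⟨s', rfl⟩ : ∃ s', s = s' + 1 := ⟨s - 1, (Nat.succ_pred_eq_of_pos (by omega)).symm⟩
  refine le_antisymm RedeiAux.card_le ?_
  have h := Nat.card_le_card_of_surjective _ (RedeiAux.phi_surj (r := r') (s := s'))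
  rw [Md.card_Md] at h
  omega
end

section
/- Let D = ⟨x, y | x^(2^r) = y^(2^s) = [x,y]^2 = [x,[x,y]] = [y,[x,y]] = 1⟩ with r ≥ s ≥ 1. Then the Frattini subgroup of D equals the center of D, and both equal ⟨x², y², [x,y]⟩, which is isomorphic to C_{2^(r-1)} × C_{2^(s-1)} × C₂. -/
open scoped commutatorElement

/-- The image of the generator `x` in the Rédei group. -/
def Dx (r s : ℕ) : RedeiGroup r s := PresentedGroup.of 0

/-- The image of the generator `y` in the Rédei group. -/
def Dy (r s : ℕ) : RedeiGroup r s := PresentedGroup.of 1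

/-- The element `z = [x,y]` of the Rédei group. -/
def Dz (r s : ℕ) : RedeiGroup r s := ⁅Dx r s, Dy r s⁆

namespace RedeiProof

/-- reduction mod 2 -/
def bA {N : ℕ} (x : ZMod (2 ^ (N + 1))) : ZMod 2 :=
  ZMod.castHom (dvd_pow_self 2 (Nat.succ_ne_zero N)) (ZMod 2) x

lemma bA_add {N : ℕ} (x y : ZMod (2 ^ (N + 1))) : bA (x + y) = bA x + bA y := map_add _ x y
lemma bA_zero {N : ℕ} : bA (0 : ZMod (2 ^ (N + 1))) = 0 := map_zero _
lemma bA_one {N : ℕ} : bA (1 : ZMod (2 ^ (N + 1))) = 1 := map_one _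
lemma bA_neg {N : ℕ} (x : ZMod (2 ^ (N + 1))) : bA (-x) = - bA x := map_neg _ x
lemma bA_natCast {N : ℕ} (n : ℕ) : bA ((n : ℕ) : ZMod (2 ^ (N + 1))) = (n : ZMod 2) :=
  map_natCast _ n
lemma bA_val {N : ℕ} (x : ZMod (2 ^ (N + 1))) : bA x = ((x.val : ℕ) : ZMod 2) := by
  rw [ZMod.natCast_val, bA, ZMod.castHom_apply]

@[ext] structure Md (r s : ℕ) where
  a : ZMod (2 ^ (r + 1))
  b : ZMod (2 ^ (s + 1))
  c : ZMod 2

namespace Md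
variable {r s : ℕ}

instance : Mul (Md r s) := ⟨fun m n => ⟨m.a + n.a, m.b + n.b, m.c + n.c + bA m.b * bA n.a⟩⟩
instance : One (Md r s) := ⟨⟨0, 0, 0⟩⟩
instance : Inv (Md r s) := ⟨fun m => ⟨-m.a, -m.b, -m.c + bA m.b * bA m.a⟩⟩

@[simp] lemma mul_a (m n : Md r s) : (m * n).a = m.a + n.a := rfl
@[simp] lemma mul_b (m n : Md r s) : (m * n).b = m.b + n.b := rfl
@[simp] lemma mul_c (m n : Md r s) : (m * n).c = m.c + n.c + bA m.b * bA n.a := rfl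
@[simp] lemma one_a : (1 : Md r s).a = 0 := rfl
@[simp] lemma one_b : (1 : Md r s).b = 0 := rfl
@[simp] lemma one_c : (1 : Md r s).c = 0 := rfl
@[simp] lemma inv_a (m : Md r s) : m⁻¹.a = -m.a := rfl
@[simp] lemma inv_b (m : Md r s) : m⁻¹.b = -m.b := rfl
@[simp] lemma inv_c (m : Md r s) : m⁻¹.c = -m.c + bA m.b * bA m.a := rfl

instance : Group (Md r s) where
  mul_assoc p q t := by ext <;> simp [bA_add] <;> ring
  one_mul m := by ext <;> simp [bA_zero]
  mul_one m := by ext <;> simp [bA_zero]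
  inv_mul_cancel m := by ext <;> simp [bA_neg] <;> ring_nf <;> simp [show (2 : ZMod 2) = 0 from by decide]


def X : Md r s := ⟨1, 0, 0⟩
def Y : Md r s := ⟨0, 1, 0⟩
def Z : Md r s := ⟨0, 0, 1⟩

lemma X_pow (n : ℕ) : (X : Md r s) ^ n = ⟨(n : ZMod (2^(r+1))), 0, 0⟩ := by
  induction n with
  | zero => simp [X]; rfl
  | succ k ih => rw [pow_succ, ih]; ext <;> simp [X, bA_zero]

lemma Y_pow (n : ℕ) : (Y : Md r s) ^ n = ⟨0, (n : ZMod (2^(s+1))), 0⟩ := by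
  induction n with
  | zero => simp [Y]; rfl
  | succ k ih => rw [pow_succ, ih]; ext <;> simp [Y, bA_zero]

lemma Z_pow (n : ℕ) : (Z : Md r s) ^ n = ⟨0, 0, (n : ZMod 2)⟩ := by
  induction n with
  | zero => simp [Z]; rfl
  | succ k ih => rw [pow_succ, ih]; ext <;> simp [Z, bA_zero]

lemma commXY : ⁅(X : Md r s), (Y : Md r s)⁆ = (Z : Md r s) := by
  ext <;> simp [commutatorElement_def, X, Y, Z, bA_zero, bA_one, bA_neg]

lemma Z_central (m : Md r s) : m * Z = Z * m := by
  ext <;> simp [Z, bA_zero] <;> ring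

lemma X_pow_card : (X : Md r s) ^ (2^(r+1)) = 1 := by
  rw [X_pow]; ext <;> simp
lemma Y_pow_card : (Y : Md r s) ^ (2^(s+1)) = 1 := by
  rw [Y_pow]; ext <;> simp
lemma Z_sq : (Z : Md r s) ^ 2 = 1 := by
  rw [Z_pow]; ext <;> simp; decide

end Md

section Redei

lemma mk_rel {α : Type*} {rels : Set (FreeGroup α)} {w : FreeGroup α} (h : w ∈ rels) :
    PresentedGroup.mk rels w = 1 :=
  (QuotientGroup.eq_one_iff _).mpr (Subgroup.subset_normalClosure h)

variable (r s : ℕ)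

local notation "RG" => RedeiGroup (r+1) (s+1)

def px : RG := Dx (r+1) (s+1)
def py : RG := Dy (r+1) (s+1)
def pz : RG := Dz (r+1) (s+1)

lemma px_eq : px r s = PresentedGroup.mk _ gx := rfl
lemma py_eq : py r s = PresentedGroup.mk _ gy := rfl
lemma pz_eq : pz r s = ⁅px r s, py r s⁆ := rfl

lemma hx_pow : (px r s) ^ (2^(r+1)) = 1 := by
  rw [px_eq, ← map_pow]
  exact mk_rel (by simp [redeiRels])

lemma hy_pow : (py r s) ^ (2^(s+1)) = 1 := by
  rw [py_eq, ← map_pow]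
  exact mk_rel (by simp [redeiRels])

lemma hz_sq : (pz r s) ^ 2 = 1 := by
  rw [pz_eq, px_eq, py_eq, ← map_commutatorElement, ← map_pow]
  exact mk_rel (by simp [redeiRels])

lemma comm_xz : Commute (px r s) (pz r s) := by
  rw [← commutatorElement_eq_one_iff_commute, pz_eq, px_eq, py_eq,
    ← map_commutatorElement, ← map_commutatorElement]
  exact mk_rel (by simp [redeiRels])

lemma comm_yz : Commute (py r s) (pz r s) := by
  rw [← commutatorElement_eq_one_iff_commute, pz_eq, px_eq, py_eq,
    ← map_commutatorElement, ← map_commutatorElement]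
  exact mk_rel (by simp [redeiRels])

lemma z_inv : (pz r s)⁻¹ = pz r s := by
  have h := hz_sq r s
  rw [sq] at h
  exact inv_eq_of_mul_eq_one_right h

lemma hyx : py r s * px r s = px r s * py r s * pz r s := by
  have h : px r s * py r s = pz r s * (py r s * px r s) := by
    rw [pz_eq]; group
  have h2 : py r s * px r s = (pz r s)⁻¹ * (px r s * py r s) := by
    rw [h]; group
  rw [h2, z_inv]
  have := (comm_xz r s).symm.eq
  have h3 : pz r s * (px r s * py r s) = px r s * (pz r s * py r s) := by
    rw [← mul_assoc, this, mul_assoc]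
  rw [h3, ← (comm_yz r s).eq, ← mul_assoc]

lemma hypow_x (b : ℕ) : (py r s)^b * px r s = px r s * (py r s)^b * (pz r s)^b := by
  induction b with
  | zero => simp
  | succ k ih =>
    rw [pow_succ, pow_succ]
    calc (py r s)^k * py r s * px r s
        = (py r s)^k * (px r s * py r s * pz r s) := by rw [mul_assoc, hyx]
      _ = ((py r s)^k * px r s) * py r s * pz r s := by group
      _ = px r s * (py r s)^k * (pz r s)^k * py r s * pz r s := by rw [ih]
      _ = px r s * (py r s)^k * py r s * (pz r s)^k * pz r s := by
            rw [mul_assoc (px r s * (py r s)^k), ← ((comm_yz r s).pow_right k).eq]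
            group
      _ = px r s * ((py r s)^k * py r s) * ((pz r s)^k * pz r s) := by group

lemma hypow_xpow (b a : ℕ) :
    (py r s)^b * (px r s)^a = (px r s)^a * (py r s)^b * (pz r s)^(b*a) := by
  induction a with
  | zero => simp
  | succ k ih =>
    rw [pow_succ, ← mul_assoc, ih]
    calc (px r s)^k * (py r s)^b * (pz r s)^(b*k) * px r s
        = (px r s)^k * (py r s)^b * px r s * (pz r s)^(b*k) := by
            rw [mul_assoc, ((comm_xz r s).pow_right (b*k)).eq.symm, ← mul_assoc]
      _ = (px r s)^k * (px r s * (py r s)^b * (pz r s)^b) * (pz r s)^(b*k) := by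
            rw [mul_assoc ((px r s)^k), hypow_x]
      _ = (px r s)^(k+1) * (py r s)^b * ((pz r s)^b * (pz r s)^(b*k)) := by
            rw [pow_succ]; group
      _ = (px r s)^(k+1) * (py r s)^b * (pz r s)^(b*(k+1)) := by
            rw [← pow_add]; ring_nf

lemma hzpow_comm_x (c : ℕ) : (pz r s)^c * px r s = px r s * (pz r s)^c :=
  ((comm_xz r s).pow_right c).eq.symm

lemma hzpow_comm_y (c : ℕ) : (pz r s)^c * py r s = py r s * (pz r s)^c :=
  ((comm_yz r s).pow_right c).eq.symm

instance instNZ (k : ℕ) : NeZero (2^(k+1)) := ⟨pow_ne_zero _ two_ne_zero⟩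

lemma pow_val_natCast {G : Type*} [Group G] {g : G} {N : ℕ} [NeZero N] (h : g ^ N = 1) (n : ℕ) :
    g ^ ((n : ZMod N)).val = g ^ n := by
  conv_rhs => rw [← Nat.div_add_mod n N]
  rw [pow_add, pow_mul, h, one_pow, one_mul, ZMod.val_natCast]

lemma comm_zx_pow (c a : ℕ) : (pz r s)^c * (px r s)^a = (px r s)^a * (pz r s)^c :=
  (((comm_xz r s).symm.pow_pow c a)).eq

lemma comm_zy_pow (c b : ℕ) : (pz r s)^c * (py r s)^b = (py r s)^b * (pz r s)^c :=
  (((comm_yz r s).symm.pow_pow c b)).eq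

lemma nf_mul (a b c a' b' c' : ℕ) :
    ((px r s)^a * (py r s)^b * (pz r s)^c) * ((px r s)^a' * (py r s)^b' * (pz r s)^c') =
      (px r s)^(a+a') * (py r s)^(b+b') * (pz r s)^(b*a' + (c + c')) := by
  calc ((px r s)^a * (py r s)^b * (pz r s)^c) * ((px r s)^a' * (py r s)^b' * (pz r s)^c')
      = (px r s)^a * (py r s)^b * ((pz r s)^c * (px r s)^a') * (py r s)^b' * (pz r s)^c' := by
        group
    _ = (px r s)^a * ((py r s)^b * (px r s)^a') * ((pz r s)^c * (py r s)^b') * (pz r s)^c' := by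
        rw [comm_zx_pow]; group
    _ = (px r s)^a * ((px r s)^a' * (py r s)^b * (pz r s)^(b*a')) * ((py r s)^b' * (pz r s)^c)
          * (pz r s)^c' := by rw [hypow_xpow, comm_zy_pow]
    _ = (px r s)^(a+a') * (py r s)^b * (((pz r s)^(b*a') * (py r s)^b') * ((pz r s)^c
          * (pz r s)^c')) := by rw [pow_add]; group
    _ = (px r s)^(a+a') * (py r s)^b * ((py r s)^b' * ((pz r s)^(b*a') * ((pz r s)^c
          * (pz r s)^c'))) := by rw [comm_zy_pow]; group
    _ = (px r s)^(a+a') * ((py r s)^b * (py r s)^b') * ((pz r s)^(b*a') * ((pz r s)^c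
          * (pz r s)^c')) := by group
    _ = (px r s)^(a+a') * (py r s)^(b+b') * (pz r s)^(b*a' + (c + c')) := by
        rw [← pow_add, ← pow_add, ← pow_add]

/-- normal form map -/
def rho (m : Md r s) : RG :=
  (px r s) ^ (m.a.val) * (py r s) ^ (m.b.val) * (pz r s) ^ (m.c.val)

lemma rho_mul (m n : Md r s) : rho r s (m * n) = rho r s m * rho r s n := by
  have ea : m.a + n.a = ((m.a.val + n.a.val : ℕ) : ZMod (2^(r+1))) := by
    push_cast [ZMod.natCast_val, ZMod.cast_id]; ring
  have eb : m.b + n.b = ((m.b.val + n.b.val : ℕ) : ZMod (2^(s+1))) := by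
    push_cast [ZMod.natCast_val, ZMod.cast_id]; ring
  have ec : m.c + n.c + bA m.b * bA n.a
      = ((m.b.val * n.a.val + (m.c.val + n.c.val) : ℕ) : ZMod 2) := by
    rw [bA_val, bA_val]
    push_cast [ZMod.natCast_val, ZMod.cast_id]
    ring
  unfold rho
  rw [Md.mul_a, Md.mul_b, Md.mul_c, ea, eb, ec,
    pow_val_natCast (hx_pow r s), pow_val_natCast (hy_pow r s), pow_val_natCast (hz_sq r s),
    nf_mul]

/-- images of generators in the model -/
def fgen : Fin 2 → Md r s := ![Md.X, Md.Y]

lemma commXZ : ⁅(Md.X : Md r s), ⁅(Md.X : Md r s), (Md.Y : Md r s)⁆⁆ = 1 := by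
  rw [Md.commXY, commutatorElement_eq_one_iff_commute]
  exact Md.Z_central Md.X


lemma commYZ : ⁅(Md.Y : Md r s), ⁅(Md.X : Md r s), (Md.Y : Md r s)⁆⁆ = 1 := by
  rw [Md.commXY, commutatorElement_eq_one_iff_commute]
  exact Md.Z_central Md.Y

lemma rels_hold : ∀ w ∈ redeiRels (r+1) (s+1), FreeGroup.lift (fgen r s) w = 1 := by
  intro w hw
  have h0 : FreeGroup.lift (fgen r s) gx = Md.X := FreeGroup.lift_apply_of
  have h1 : FreeGroup.lift (fgen r s) gy = Md.Y := FreeGroup.lift_apply_of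
  rcases hw with h | h | h | h | h <;> subst h <;>
    simp only [map_pow, map_commutatorElement, h0, h1]
  · exact Md.X_pow_card
  · exact Md.Y_pow_card
  · rw [Md.commXY]; exact Md.Z_sq
  · exact commXZ r s
  · exact commYZ r s

def phi : RG →* Md r s := PresentedGroup.toGroup (rels_hold r s)

lemma phi_x : phi r s (px r s) = Md.X := PresentedGroup.toGroup.of _
lemma phi_y : phi r s (py r s) = Md.Y := PresentedGroup.toGroup.of _
lemma phi_z : phi r s (pz r s) = Md.Z := by
  rw [pz_eq, map_commutatorElement, phi_x, phi_y, Md.commXY]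

lemma XYZpow (p q t : ℕ) : (Md.X : Md r s)^p * Md.Y^q * Md.Z^t
    = ⟨(p : ZMod (2^(r+1))), (q : ZMod (2^(s+1))), (t : ZMod 2)⟩ := by
  rw [Md.X_pow, Md.Y_pow, Md.Z_pow]
  ext <;> simp [bA_zero]

lemma phi_rho (m : Md r s) : phi r s (rho r s m) = m := by
  unfold rho
  rw [map_mul, map_mul, map_pow, map_pow, map_pow, phi_x, phi_y, phi_z, XYZpow]
  ext <;> simp [ZMod.natCast_val, ZMod.cast_id]

lemma rho_one : rho r s 1 = 1 := by
  unfold rho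
  simp

lemma rho_surj : Function.Surjective (rho r s) := by
  intro g
  induction g using PresentedGroup.induction_on with
  | H w =>
    induction w using FreeGroup.induction_on with
    | C1 => exact ⟨1, by rw [rho_one]; exact map_one (PresentedGroup.mk _)⟩
    | of i =>
      fin_cases i
      · refine ⟨Md.X, ?_⟩
        unfold rho Md.X
        haveI : Fact (1 < 2^(r+1)) := ⟨Nat.one_lt_two_pow (Nat.succ_ne_zero r)⟩
        have : ((1 : ZMod (2^(r+1))).val) = 1 := ZMod.val_one _
        simp only [this]
        have h0 : ((0 : ZMod (2^(s+1))).val) = 0 := ZMod.val_zero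
        have h0' : ((0 : ZMod 2).val) = 0 := ZMod.val_zero
        rw [h0, h0']
        simp [px_eq]
        rfl
      · refine ⟨Md.Y, ?_⟩
        unfold rho Md.Y
        haveI : Fact (1 < 2^(s+1)) := ⟨Nat.one_lt_two_pow (Nat.succ_ne_zero s)⟩
        have : ((1 : ZMod (2^(s+1))).val) = 1 := ZMod.val_one _
        have h0 : ((0 : ZMod (2^(r+1))).val) = 0 := ZMod.val_zero
        have h0' : ((0 : ZMod 2).val) = 0 := ZMod.val_zero
        rw [this, h0, h0']
        simp [py_eq]
        rfl
    | inv_of i ih =>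
      obtain ⟨m, hm⟩ := ih
      refine ⟨m⁻¹, ?_⟩
      have : rho r s m⁻¹ * rho r s m = 1 := by
        rw [← rho_mul, inv_mul_cancel, rho_one]
      rw [map_inv]
      exact eq_inv_of_mul_eq_one_left (by rw [hm] at this; exact this)
    | mul u v ihu ihv =>
      obtain ⟨m, hm⟩ := ihu
      obtain ⟨n, hn⟩ := ihv
      exact ⟨m * n, by rw [rho_mul, hm, hn, map_mul]⟩

lemma phi_bij : Function.Bijective (phi r s) := by
  constructor
  · intro g h hgh
    obtain ⟨m, rfl⟩ := rho_surj r s g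
    obtain ⟨n, rfl⟩ := rho_surj r s h
    rw [phi_rho, phi_rho] at hgh
    rw [hgh]
  · intro m
    exact ⟨rho r s m, phi_rho r s m⟩

/-- the isomorphism between the Rédei group and the model -/
noncomputable def eqv : RG ≃* Md r s := MulEquiv.ofBijective _ (phi_bij r s)

lemma eqv_apply (g : RG) : eqv r s g = phi r s g := rfl

end Redei
section CenterMd
variable (r s : ℕ)

instance instNZpow (k : ℕ) : NeZero (2^k) := ⟨pow_ne_zero _ two_ne_zero⟩

lemma mem_center_md (m : Md r s) :
    m ∈ Subgroup.center (Md r s) ↔ bA m.a = 0 ∧ bA m.b = 0 := by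
  rw [Subgroup.mem_center_iff]
  constructor
  · intro h
    have hx := congrArg Md.c (h Md.X)
    have hy := congrArg Md.c (h Md.Y)
    simp only [Md.mul_c, Md.X, Md.Y, bA_zero, bA_one, mul_zero, zero_mul, mul_one, one_mul,
      add_zero, zero_add] at hx hy
    exact ⟨add_eq_left.mp hy, (left_eq_add.mp hx)⟩
  · rintro ⟨h1, h2⟩ g
    ext
    · simp [add_comm]
    · simp [add_comm]
    · simp [h1, h2]
      ring

lemma center_md_eq_closure :
    Subgroup.center (Md r s) = Subgroup.closure {(Md.X : Md r s)^2, Md.Y^2, Md.Z} := by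
  apply le_antisymm
  · intro m hm
    obtain ⟨h1, h2⟩ := (mem_center_md r s m).mp hm
    have d1 : 2 ∣ m.a.val := by
      rw [bA_val] at h1
      exact (ZMod.natCast_eq_zero_iff _ _).mp h1
    have d2 : 2 ∣ m.b.val := by
      rw [bA_val] at h2
      exact (ZMod.natCast_eq_zero_iff _ _).mp h2
    have key : m = ((Md.X : Md r s)^2)^(m.a.val/2) * (Md.Y^2)^(m.b.val/2) * Md.Z^(m.c.val) := by
      rw [← pow_mul, ← pow_mul, Nat.mul_div_cancel' d1, Nat.mul_div_cancel' d2, XYZpow]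
      ext <;> simp [ZMod.natCast_val, ZMod.cast_id]
    rw [key]
    refine Subgroup.mul_mem _ (Subgroup.mul_mem _ ?_ ?_) ?_
    · exact Subgroup.pow_mem _ (Subgroup.subset_closure (by simp)) _
    · exact Subgroup.pow_mem _ (Subgroup.subset_closure (by simp)) _
    · exact Subgroup.pow_mem _ (Subgroup.subset_closure (by simp)) _
  · rw [Subgroup.closure_le]
    rintro m (rfl | rfl | rfl) <;> rw [SetLike.mem_coe, mem_center_md]
    · rw [Md.X_pow]; exact ⟨by rw [bA_natCast]; decide, bA_zero⟩
    · rw [Md.Y_pow]; exact ⟨bA_zero, by rw [bA_natCast]; decide⟩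
    · exact ⟨bA_zero, bA_zero⟩

end CenterMd

section Gm
variable (r s : ℕ)

abbrev Tgt (r s : ℕ) := Multiplicative (ZMod (2^r)) × Multiplicative (ZMod (2^s)) ×
  Multiplicative (ZMod 2)

lemma cast2 (k : ℕ) (x y : ZMod (2^k)) :
    ((2 * (x+y).val : ℕ) : ZMod (2^(k+1))) = ((2*x.val : ℕ) : ZMod (2^(k+1))) + ((2*y.val : ℕ) : ZMod (2^(k+1))) := by
  rw [← Nat.cast_add, ← Nat.mul_add, ZMod.natCast_eq_natCast_iff]
  have h : (x.val + y.val) % 2^k ≡ x.val + y.val [MOD 2^k] := Nat.mod_modEq _ _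
  have h2 := h.mul_left' (c := 2)
  rw [ZMod.val_add, pow_succ']
  exact h2

lemma bA_two_mul (k n : ℕ) : bA ((2 * n : ℕ) : ZMod (2^(k+1))) = 0 := by
  rw [bA_natCast, Nat.cast_mul, show ((2:ℕ) : ZMod 2) = 0 from by decide, zero_mul]

/-- embedding of the abstract product group into the model -/
def gm : Tgt r s →* Md r s where
  toFun u := ⟨((2 * (Multiplicative.toAdd u.1).val : ℕ) : ZMod (2^(r+1))),
              ((2 * (Multiplicative.toAdd u.2.1).val : ℕ) : ZMod (2^(s+1))),
              (((Multiplicative.toAdd u.2.2).val : ℕ) : ZMod 2)⟩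
  map_one' := by
    ext <;> simp
  map_mul' u v := by
    ext
    · simp only [Md.mul_a, toAdd_mul]
      exact cast2 r _ _
    · simp only [Md.mul_b, toAdd_mul]
      exact cast2 s _ _
    · simp only [Md.mul_c, Prod.snd_mul, Prod.fst_mul, toAdd_mul, bA_two_mul, mul_zero,
        zero_mul, add_zero]
      rw [ZMod.val_add, ZMod.natCast_mod, Nat.cast_add]

lemma gm_inj : Function.Injective (gm r s) := by
  rw [injective_iff_map_eq_one]
  intro u hu
  have ha := congrArg Md.a hu
  have hb := congrArg Md.b hu
  have hc := congrArg Md.c hu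
  simp only [gm, MonoidHom.coe_mk, OneHom.coe_mk, Md.one_a, Md.one_b, Md.one_c] at ha hb hc
  have fix : ∀ (k : ℕ) (x : ZMod (2^k)), ((2 * x.val : ℕ) : ZMod (2^(k+1))) = 0 → x = 0 := by
    intro k x hx
    rw [ZMod.natCast_eq_zero_iff, pow_succ'] at hx
    have hdvd := (mul_dvd_mul_iff_left (a := (2:ℕ)) two_ne_zero).mp hx
    exact (ZMod.val_eq_zero x).mp (Nat.eq_zero_of_dvd_of_lt hdvd (ZMod.val_lt x))
  have h1 : Multiplicative.toAdd u.1 = 0 := fix r _ ha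
  have h2 : Multiplicative.toAdd u.2.1 = 0 := fix s _ hb
  have h3 : Multiplicative.toAdd u.2.2 = 0 := by
    rw [ZMod.natCast_eq_zero_iff] at hc
    exact (ZMod.val_eq_zero _).mp (Nat.eq_zero_of_dvd_of_lt hc (ZMod.val_lt _))
  have : u = ((1 : Multiplicative (ZMod (2^r))), (1 : Multiplicative (ZMod (2^s))),
      (1 : Multiplicative (ZMod 2))) := by
    ext
    · exact h1
    · exact h2
    · exact h3
  exact this

end Gm

section GmRange
variable (r s : ℕ)

lemma val_div_lemma (k : ℕ) (x : ZMod (2^(k+1))) (hx : 2 ∣ x.val) :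
    ((2 * ((x.val / 2 : ℕ) : ZMod (2^k)).val : ℕ) : ZMod (2^(k+1))) = x := by
  have hlt : x.val / 2 < 2^k := by
    have h1 := ZMod.val_lt x
    have h2 : (2:ℕ)^(k+1) = 2 * 2^k := by ring
    omega
  rw [ZMod.val_natCast, Nat.mod_eq_of_lt hlt, Nat.mul_div_cancel' hx, ZMod.natCast_val,
    ZMod.cast_id]

lemma gm_range : (gm r s).range = Subgroup.center (Md r s) := by
  ext m
  constructor
  · rintro ⟨u, rfl⟩
    rw [mem_center_md]
    exact ⟨bA_two_mul r _, bA_two_mul s _⟩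
  · intro hm
    obtain ⟨h1, h2⟩ := (mem_center_md r s m).mp hm
    have d1 : 2 ∣ m.a.val := by
      rw [bA_val] at h1; exact (ZMod.natCast_eq_zero_iff _ _).mp h1
    have d2 : 2 ∣ m.b.val := by
      rw [bA_val] at h2; exact (ZMod.natCast_eq_zero_iff _ _).mp h2
    refine ⟨(Multiplicative.ofAdd ((m.a.val / 2 : ℕ) : ZMod (2^r)),
            Multiplicative.ofAdd ((m.b.val / 2 : ℕ) : ZMod (2^s)),
            Multiplicative.ofAdd ((m.c.val : ℕ) : ZMod 2)), ?_⟩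
    ext
    · exact val_div_lemma r m.a d1
    · exact val_div_lemma s m.b d2
    · show (((((m.c.val : ℕ) : ZMod 2)).val : ℕ) : ZMod 2) = m.c
      rw [ZMod.val_natCast, Nat.mod_eq_of_lt (ZMod.val_lt m.c), ZMod.natCast_val, ZMod.cast_id]

/-- the center of the model is the product of cyclic groups -/
noncomputable def centerIsoMd : Subgroup.center (Md r s) ≃* Tgt r s :=
  (MulEquiv.subgroupCongr (gm_range r s).symm).trans (MonoidHom.ofInjective (gm_inj r s)).symm

end GmRange

section PG
variable (r s : ℕ)

instance : Finite (Md r s) :=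
  Finite.of_injective (fun m => (m.a, m.b, m.c))
    (by intro m n h; ext <;> simp_all)

lemma central_pow (m : Md r s) (hma : bA m.a = 0) (n : ℕ) :
    m ^ n = ⟨(n : ZMod (2^(r+1))) * m.a, (n : ZMod (2^(s+1))) * m.b, (n : ZMod 2) * m.c⟩ := by
  induction n with
  | zero => ext <;> simp
  | succ k ih =>
    rw [pow_succ, ih]
    ext
    · show (k : ZMod (2^(r+1))) * m.a + m.a = _
      push_cast; ring
    · show (k : ZMod (2^(s+1))) * m.b + m.b = _
      push_cast; ring
    · show (k : ZMod 2) * m.c + m.c + bA ((k : ZMod (2^(s+1))) * m.b) * bA m.a = _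
      rw [hma, mul_zero, add_zero]
      push_cast; ring

lemma isPGroup_md : IsPGroup 2 (Md r s) := by
  intro g
  refine ⟨r + s + 2, ?_⟩
  have h2 : bA (g*g).a = 0 := by
    rw [Md.mul_a, bA_add, ← two_mul]
    simp [show ((2:ℕ) : ZMod 2) = 0 from by decide]
    left; decide
  have : g ^ (2^(r+s+2)) = (g*g) ^ (2^(r+s+1)) := by
    rw [← sq, ← pow_mul, ← pow_succ']
  rw [this, central_pow r s _ h2]
  have e1 : ((2^(r+s+1) : ℕ) : ZMod (2^(r+1))) = 0 :=
    (ZMod.natCast_eq_zero_iff _ _).mpr (pow_dvd_pow 2 (by omega))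
  have e2 : ((2^(r+s+1) : ℕ) : ZMod (2^(s+1))) = 0 :=
    (ZMod.natCast_eq_zero_iff _ _).mpr (pow_dvd_pow 2 (by omega))
  have e3 : ((2^(r+s+1) : ℕ) : ZMod 2) = 0 :=
    (ZMod.natCast_eq_zero_iff _ _).mpr (dvd_pow_self 2 (by omega))
  push_cast at e1 e2 e3
  ext
  · show ((2^(r+s+1) : ℕ) : ZMod (2^(r+1))) * (g*g).a = (1 : Md r s).a
    push_cast
    rw [e1, zero_mul]; rfl
  · show ((2^(r+s+1) : ℕ) : ZMod (2^(s+1))) * (g*g).b = (1 : Md r s).b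
    push_cast
    rw [e2, zero_mul]; rfl
  · show ((2^(r+s+1) : ℕ) : ZMod 2) * (g*g).c = (1 : Md r s).c
    push_cast
    rw [e3, zero_mul]; rfl

end PG

section Assemble
variable (r s : ℕ)

local notation "RG" => RedeiGroup (r+1) (s+1)

lemma phi_mem_center_iff (g : RG) :
    g ∈ Subgroup.center RG ↔ phi r s g ∈ Subgroup.center (Md r s) := by
  rw [Subgroup.mem_center_iff, Subgroup.mem_center_iff]
  constructor
  · intro h m
    obtain ⟨h', rfl⟩ := (phi_bij r s).2 m
    rw [← map_mul, ← map_mul, h]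
  · intro h g'
    apply (phi_bij r s).1
    rw [map_mul, map_mul, h]

lemma map_phi_center :
    Subgroup.map (phi r s) (Subgroup.center RG) = Subgroup.center (Md r s) := by
  ext m
  rw [Subgroup.mem_map]
  constructor
  · rintro ⟨g, hg, rfl⟩
    exact (phi_mem_center_iff r s g).mp hg
  · intro hm
    obtain ⟨g, rfl⟩ := (phi_bij r s).2 m
    exact ⟨g, (phi_mem_center_iff r s g).mpr hm, rfl⟩

lemma center_eq_closure_redei :
    Subgroup.center RG = Subgroup.closure {(px r s)^2, (py r s)^2, pz r s} := by
  apply Subgroup.map_injective (phi_bij r s).1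
  rw [map_phi_center, MonoidHom.map_closure]
  have himg : (phi r s) '' {(px r s)^2, (py r s)^2, pz r s}
      = {(Md.X : Md r s)^2, Md.Y^2, Md.Z} := by
    rw [Set.image_insert_eq, Set.image_insert_eq, Set.image_singleton,
      map_pow, map_pow, phi_x, phi_y, phi_z]
  rw [himg, center_md_eq_closure]

/-- first projection character -/
def hA : Md r s →* Multiplicative (ZMod 2) where
  toFun m := Multiplicative.ofAdd (bA m.a)
  map_one' := by simp [bA_zero]
  map_mul' m n := by simp [Md.mul_a, bA_add]

def hB : Md r s →* Multiplicative (ZMod 2) where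
  toFun m := Multiplicative.ofAdd (bA m.b)
  map_one' := by simp [bA_zero]
  map_mul' m n := by simp [Md.mul_b, bA_add]

lemma isCoatom_of_index_two {G : Type*} [Group G] {K : Subgroup G} (h : K.index = 2) :
    IsCoatom K := by
  constructor
  · intro ht
    rw [ht, Subgroup.index_top] at h
    omega
  · intro H hH
    have hle := hH.le
    have hmul := Subgroup.relIndex_mul_index hle
    rw [h] at hmul
    have hdvd : H.index ∣ 2 := Dvd.intro_left _ hmul
    rcases (Nat.prime_two.eq_one_or_self_of_dvd _ hdvd) with h1 | h2
    · exact Subgroup.index_eq_one.mp h1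
    · rw [h2] at hmul
      have : K.relIndex H = 1 := by omega
      exact absurd (Subgroup.relIndex_eq_one.mp this) hH.not_ge

lemma surj_hA : Function.Surjective ((hA r s).comp (phi r s)) := by
  intro t
  have h2 : ∀ x : ZMod 2, x = 0 ∨ x = 1 := by decide
  rcases h2 (Multiplicative.toAdd t) with h | h
  · exact ⟨1, by rw [map_one]; rw [← ofAdd_toAdd t, h]; rfl⟩
  · refine ⟨px r s, ?_⟩
    show hA r s (phi r s (px r s)) = t
    rw [phi_x, ← ofAdd_toAdd t, h]
    show Multiplicative.ofAdd (bA (Md.X : Md r s).a) = _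
    rw [show (Md.X : Md r s).a = 1 from rfl, bA_one]

lemma surj_hB : Function.Surjective ((hB r s).comp (phi r s)) := by
  intro t
  have h2 : ∀ x : ZMod 2, x = 0 ∨ x = 1 := by decide
  rcases h2 (Multiplicative.toAdd t) with h | h
  · exact ⟨1, by rw [map_one]; rw [← ofAdd_toAdd t, h]; rfl⟩
  · refine ⟨py r s, ?_⟩
    show hB r s (phi r s (py r s)) = t
    rw [phi_y, ← ofAdd_toAdd t, h]
    show Multiplicative.ofAdd (bA (Md.Y : Md r s).b) = _
    rw [show (Md.Y : Md r s).b = 1 from rfl, bA_one]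

lemma index_two_of_surj {G : Type*} [Group G] {f : G →* Multiplicative (ZMod 2)}
    (hf : Function.Surjective f) : f.ker.index = 2 := by
  rw [Subgroup.index_ker, MonoidHom.range_eq_top.mpr hf, Subgroup.card_top,
    Nat.card_eq_fintype_card, Fintype.card_multiplicative, ZMod.card]

lemma frattini_le_center : frattini RG ≤ Subgroup.center RG := by
  have c1 : IsCoatom ((hA r s).comp (phi r s)).ker :=
    isCoatom_of_index_two (index_two_of_surj (surj_hA r s))
  have c2 : IsCoatom ((hB r s).comp (phi r s)).ker :=
    isCoatom_of_index_two (index_two_of_surj (surj_hB r s))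
  intro g hg
  have m1 : g ∈ ((hA r s).comp (phi r s)).ker := frattini_le_coatom c1 hg
  have m2 : g ∈ ((hB r s).comp (phi r s)).ker := frattini_le_coatom c2 hg
  rw [MonoidHom.mem_ker] at m1 m2
  have e1 : bA (phi r s g).a = 0 := by
    have := congrArg Multiplicative.toAdd m1
    simpa [hA] using this
  have e2 : bA (phi r s g).b = 0 := by
    have := congrArg Multiplicative.toAdd m2
    simpa [hB] using this
  exact (phi_mem_center_iff r s g).mpr ((mem_center_md r s _).mpr ⟨e1, e2⟩)

lemma center_le_frattini : Subgroup.center RG ≤ frattini RG := by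
  haveI : Finite RG := Finite.of_equiv _ (eqv r s).symm.toEquiv
  have pg : IsPGroup 2 RG := (isPGroup_md r s).of_equiv (eqv r s).symm
  haveI : Fact (Nat.Prime 2) := ⟨Nat.prime_two⟩
  haveI : Group.IsNilpotent RG := pg.isNilpotent
  rw [frattini, Order.radical]
  refine le_iInf fun K => le_iInf fun hK => ?_
  haveI : K.Normal := Subgroup.NormalizerCondition.normal_of_coatom K normalizerCondition_of_isNilpotent hK
  set f := QuotientGroup.mk' K with hf
  have sq1 : ∀ q : RG ⧸ K, q * q = 1 := by
    intro q
    by_contra hq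
    set H' := Subgroup.zpowers (q * q) with hH'
    have hKle : K ≤ Subgroup.comap f H' := by
      intro k hk
      have h1 : f k = 1 := (QuotientGroup.eq_one_iff k).mpr hk
      rw [Subgroup.mem_comap, h1]
      exact Subgroup.one_mem _
    have hmap : Subgroup.map f (Subgroup.comap f H') = H' :=
      Subgroup.map_comap_eq_self_of_surjective (QuotientGroup.mk'_surjective K) _
    rcases eq_or_lt_of_le hKle with heq | hlt
    · have hbot : H' = ⊥ := by
        rw [← hmap, ← heq]
        apply le_bot_iff.mp
        rintro t ⟨k, hk, rfl⟩
        simp only [Subgroup.mem_bot]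
        exact (QuotientGroup.eq_one_iff k).mpr hk
      have : q * q ∈ H' := Subgroup.mem_zpowers _
      rw [hbot, Subgroup.mem_bot] at this
      exact hq this
    · have htop : Subgroup.comap f H' = ⊤ := hK.2 _ hlt
      have hH : H' = ⊤ := by
        rw [← hmap, htop]
        exact Subgroup.map_top_of_surjective f (QuotientGroup.mk'_surjective K)
      have hq' : q ∈ H' := hH ▸ Subgroup.mem_top q
      obtain ⟨n, hn⟩ := hq'
      have hn' : (q * q) ^ n = q := hn
      have hzp : q ^ (2 * n - 1) = 1 := by
        have h1 : (q * q) ^ n = q ^ (2 * n) := by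
          rw [← zpow_two, ← zpow_mul]
        rw [h1] at hn'
        rw [zpow_sub, hn', zpow_one, mul_inv_cancel]
      have hdvd : (orderOf q : ℤ) ∣ (2 * n - 1) := orderOf_dvd_iff_zpow_eq_one.mpr hzp
      obtain ⟨k, hk⟩ := pg.to_quotient K q
      have hord : orderOf q ∣ 2 ^ k := orderOf_dvd_of_pow_eq_one hk
      obtain ⟨j, hj, hoq⟩ := (Nat.dvd_prime_pow Nat.prime_two).mp hord
      rcases Nat.eq_zero_or_pos j with rfl | hjpos
      · rw [pow_zero] at hoq
        have : q = 1 := orderOf_eq_one_iff.mp hoq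
        rw [this, one_mul] at hq
        exact hq rfl
      · have hnat : (2 : ℕ) ∣ orderOf q := hoq ▸ dvd_pow_self 2 (Nat.pos_iff_ne_zero.mp hjpos)
        have h2dvd : (2 : ℤ) ∣ (orderOf q : ℤ) := by exact_mod_cast hnat
        have : (2 : ℤ) ∣ (2 * n - 1) := dvd_trans h2dvd hdvd
        omega
  rw [center_eq_closure_redei, Subgroup.closure_le]
  rintro g (rfl | rfl | rfl) <;> rw [SetLike.mem_coe, ← QuotientGroup.eq_one_iff]
  · rw [← QuotientGroup.mk'_apply, map_pow, sq]
    exact sq1 _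
  · rw [← QuotientGroup.mk'_apply, map_pow, sq]
    exact sq1 _
  · rw [← QuotientGroup.mk'_apply, pz_eq, map_commutatorElement]
    set a := QuotientGroup.mk' K (px r s)
    set b := QuotientGroup.mk' K (py r s)
    have ha : a⁻¹ = a := inv_eq_of_mul_eq_one_right (sq1 a)
    have hb : b⁻¹ = b := inv_eq_of_mul_eq_one_right (sq1 b)
    rw [commutatorElement_def, ha, hb]
    calc a * b * a * b = (a * b) * (a * b) := by group
      _ = 1 := sq1 _

lemma eqv_toMonoidHom : (eqv r s).toMonoidHom = phi r s := rfl

/-- the center of the Rédei group is the product of cyclic groups -/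
noncomputable def centerIsoRedei : Subgroup.center RG ≃* Tgt r s :=
  ((eqv r s).subgroupMap (Subgroup.center RG)).trans
    ((MulEquiv.subgroupCongr (show Subgroup.map ((eqv r s : RG ≃* Md r s) : RG →* Md r s)
        (Subgroup.center RG) = Subgroup.center (Md r s) from map_phi_center r s)).trans
      (centerIsoMd r s))

end Assemble

lemma frattini_eq_center (r s : ℕ) :
    frattini (RedeiGroup (r+1) (s+1)) = Subgroup.center (RedeiGroup (r+1) (s+1)) :=
  le_antisymm (frattini_le_center r s) (center_le_frattini r s)

end RedeiProof

theorem stmt1 (r s : ℕ) (hs : 1 ≤ s) (hrs : s ≤ r) :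
    frattini (RedeiGroup r s) = Subgroup.center (RedeiGroup r s) ∧
    Subgroup.center (RedeiGroup r s) =
      Subgroup.closure {(Dx r s) ^ 2, (Dy r s) ^ 2, Dz r s} ∧
    Nonempty ((Subgroup.center (RedeiGroup r s)) ≃*
      Multiplicative (ZMod (2 ^ (r - 1))) × Multiplicative (ZMod (2 ^ (s - 1))) ×
        Multiplicative (ZMod 2)) := by
  obtain ⟨r0, rfl⟩ : ∃ r0, r = r0 + 1 := ⟨r - 1, by omega⟩
  obtain ⟨s0, rfl⟩ : ∃ s0, s = s0 + 1 := ⟨s - 1, by omega⟩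
  refine ⟨RedeiProof.frattini_eq_center r0 s0, RedeiProof.center_eq_closure_redei r0 s0, ?_⟩
  exact ⟨RedeiProof.centerIsoRedei r0 s0⟩
end

section
/- Let D = ⟨x, y | x^(2^r) = y^(2^s) = [x,y]^2 = [x,[x,y]] = [y,[x,y]] = 1⟩ with r ≥ s ≥ 1. Then the number of conjugacy classes of D (equivalently, the number of irreducible complex characters of D) is 5·2^(r+s-2). -/
open scoped commutatorElement

def fm (n : ℕ) : ZMod (2^(n+1)) →+* ZMod 2 :=
  ZMod.castHom (dvd_pow_self 2 n.succ_ne_zero) _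

@[ext] structure Model (n m : ℕ) where
  a : ZMod (2^(n+1))
  b : ZMod (2^(m+1))
  c : ZMod 2

namespace Model
variable {n m : ℕ}

instance : Mul (Model n m) := ⟨fun u v => ⟨u.a + v.a, u.b + v.b, u.c + v.c + fm m u.b * fm n v.a⟩⟩
instance : One (Model n m) := ⟨⟨0, 0, 0⟩⟩
instance : Inv (Model n m) := ⟨fun u => ⟨-u.a, -u.b, -u.c + fm m u.b * fm n u.a⟩⟩

@[simp] lemma mul_a (u v : Model n m) : (u * v).a = u.a + v.a := rfl
@[simp] lemma mul_b (u v : Model n m) : (u * v).b = u.b + v.b := rfl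
@[simp] lemma mul_c (u v : Model n m) : (u * v).c = u.c + v.c + fm m u.b * fm n v.a := rfl
@[simp] lemma one_a : (1 : Model n m).a = 0 := rfl
@[simp] lemma one_b : (1 : Model n m).b = 0 := rfl
@[simp] lemma one_c : (1 : Model n m).c = 0 := rfl
@[simp] lemma inv_a (u : Model n m) : (u⁻¹).a = -u.a := rfl
@[simp] lemma inv_b (u : Model n m) : (u⁻¹).b = -u.b := rfl
@[simp] lemma inv_c (u : Model n m) : (u⁻¹).c = -u.c + fm m u.b * fm n u.a := rfl

instance : Group (Model n m) where
  mul_assoc u v w := by ext <;> simp [map_add] <;> ring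
  one_mul u := by ext <;> simp
  mul_one u := by ext <;> simp
  inv_mul_cancel u := by ext <;> simp [map_neg] <;> ring_nf <;> simp [show (2 : ZMod 2) = 0 from rfl]

end Model

namespace Model
variable {n m : ℕ}

def X : Model n m := ⟨1, 0, 0⟩
def Y : Model n m := ⟨0, 1, 0⟩
def Z : Model n m := ⟨0, 0, 1⟩

@[simp] lemma X_pow (k : ℕ) : (X : Model n m) ^ k = ⟨(k : ZMod (2^(n+1))), 0, 0⟩ := by
  induction k with
  | zero => ext <;> simp
  | succ k ih => rw [pow_succ, ih]; ext <;> simp [X] <;> push_cast <;> ring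

@[simp] lemma Y_pow (k : ℕ) : (Y : Model n m) ^ k = ⟨0, (k : ZMod (2^(m+1))), 0⟩ := by
  induction k with
  | zero => ext <;> simp
  | succ k ih => rw [pow_succ, ih]; ext <;> simp [Y] <;> push_cast <;> ring

lemma commXY : ⁅(X : Model n m), (Y : Model n m)⁆ = Z := by
  ext <;> simp [commutatorElement_def, X, Y, Z] <;> decide

lemma Z_comm (u : Model n m) : Z * u = u * Z := by
  ext <;> simp [Z] <;> ring

lemma relXM : (X : Model n m) ^ (2 ^ (n+1)) = 1 := by
  rw [X_pow]; ext <;> simp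
lemma relYM : (Y : Model n m) ^ (2 ^ (m+1)) = 1 := by
  rw [Y_pow]; ext <;> simp
lemma relZM : (Z : Model n m) ^ 2 = 1 := by
  ext <;> simp [Z, pow_succ] <;> decide
lemma relXZM : ⁅(X : Model n m), ⁅(X : Model n m), (Y : Model n m)⁆⁆ = 1 := by
  rw [commXY, commutatorElement_eq_one_iff_commute]
  exact (Commute.eq (Z_comm X)).symm
end Model


-- the quotient hom
def mk (r s : ℕ) : FreeGroup (Fin 2) →* RedeiGroup r s :=
  QuotientGroup.mk' (Subgroup.normalClosure (redeiRels r s))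

lemma mk_rel (r s : ℕ) {g : FreeGroup (Fin 2)} (h : g ∈ redeiRels r s) : mk r s g = 1 :=
  (QuotientGroup.eq_one_iff _).2 (Subgroup.subset_normalClosure h)

lemma mk_gx (r s : ℕ) : mk r s gx = Dx r s := rfl
lemma mk_gy (r s : ℕ) : mk r s gy = Dy r s := rfl

lemma relX (r s : ℕ) : Dx r s ^ (2^r) = 1 := by
  have := mk_rel r s (show gx ^ 2^r ∈ redeiRels r s by left; rfl)
  simpa [map_pow, mk_gx] using this
lemma relY (r s : ℕ) : Dy r s ^ (2^s) = 1 := by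
  have := mk_rel r s (show gy ^ 2^s ∈ redeiRels r s by right; left; rfl)
  simpa [map_pow, mk_gy] using this
lemma relZ (r s : ℕ) : Dz r s ^ 2 = 1 := by
  have := mk_rel r s (show ⁅gx,gy⁆ ^ 2 ∈ redeiRels r s by right; right; left; rfl)
  simpa [map_pow, map_commutatorElement, mk_gx, mk_gy, Dz] using this
lemma commXZ (r s : ℕ) : Commute (Dx r s) (Dz r s) := by
  have := mk_rel r s (show ⁅gx,⁅gx,gy⁆⁆ ∈ redeiRels r s by right; right; right; left; rfl)
  rw [map_commutatorElement, map_commutatorElement] at this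
  exact commutatorElement_eq_one_iff_commute.1 this
lemma commYZ (r s : ℕ) : Commute (Dy r s) (Dz r s) := by
  have := mk_rel r s (show ⁅gy,⁅gx,gy⁆⁆ ∈ redeiRels r s by right; right; right; right; rfl)
  rw [map_commutatorElement, map_commutatorElement] at this
  exact commutatorElement_eq_one_iff_commute.1 this

lemma relYX (r s : ℕ) : Dy r s * Dx r s = Dx r s * Dy r s * Dz r s := by
  have hz2 := relZ r s
  have : Dz r s * (Dy r s * Dx r s) = Dx r s * Dy r s := by
    rw [Dz]; group
  calc Dy r s * Dx r s = Dz r s * (Dz r s * (Dy r s * Dx r s)) := by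
        rw [← mul_assoc, ← sq, hz2, one_mul]
    _ = Dz r s * (Dx r s * Dy r s) := by rw [this]
    _ = Dx r s * Dy r s * Dz r s := by
        rw [(commXZ r s).symm.mul_right (commYZ r s).symm |>.eq]

variable {r s : ℕ}

lemma relYXpow (A B : ℕ) :
    Dy r s ^ B * Dx r s ^ A = Dx r s ^ A * Dy r s ^ B * Dz r s ^ (B * A) := by
  have hx := (commXZ r s).symm
  have hy := (commYZ r s).symm
  have key : ∀ A, Dy r s * Dx r s ^ A = Dx r s ^ A * Dy r s * Dz r s ^ A := by
    intro A
    induction A with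
    | zero => simp
    | succ A ih =>
      calc Dy r s * Dx r s ^ (A+1) = (Dy r s * Dx r s ^ A) * Dx r s := by
            rw [pow_succ, mul_assoc]
        _ = Dx r s ^ A * Dy r s * (Dz r s ^ A * Dx r s) := by rw [ih]; group
        _ = Dx r s ^ A * Dy r s * (Dx r s * Dz r s ^ A) := by rw [(hx.pow_left A).eq]
        _ = Dx r s ^ A * (Dy r s * Dx r s) * Dz r s ^ A := by group
        _ = Dx r s ^ A * (Dx r s * Dy r s * Dz r s) * Dz r s ^ A := by rw [relYX]
        _ = Dx r s ^ (A+1) * Dy r s * Dz r s ^ (A+1) := by rw [pow_succ, pow_succ]; group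
  induction B with
  | zero => simp
  | succ B ih =>
    calc Dy r s ^ (B+1) * Dx r s ^ A = Dy r s ^ B * (Dy r s * Dx r s ^ A) := by
          rw [pow_succ]; group
      _ = Dy r s ^ B * (Dx r s ^ A * Dy r s * Dz r s ^ A) := by rw [key]
      _ = (Dy r s ^ B * Dx r s ^ A) * Dy r s * Dz r s ^ A := by group
      _ = Dx r s ^ A * Dy r s ^ B * Dz r s ^ (B*A) * Dy r s * Dz r s ^ A := by rw [ih]
      _ = Dx r s ^ A * Dy r s ^ B * (Dz r s ^ (B*A) * Dy r s) * Dz r s ^ A := by group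
      _ = Dx r s ^ A * Dy r s ^ B * (Dy r s * Dz r s ^ (B*A)) * Dz r s ^ A := by
          rw [(hy.pow_left (B*A)).eq]
      _ = Dx r s ^ A * Dy r s ^ (B+1) * Dz r s ^ ((B+1)*A) := by
          rw [pow_succ, show (B+1)*A = B*A+A by ring, pow_add]; group

def nform (r s : ℕ) (A B C : ℕ) : RedeiGroup r s := Dx r s ^ A * Dy r s ^ B * Dz r s ^ C

lemma nform_mul (A B C A' B' C' : ℕ) :
    nform r s A B C * nform r s A' B' C' = nform r s (A+A') (B+B') (C+C'+B*A') := by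
  have hx := (commXZ r s).symm
  have hy := (commYZ r s).symm
  unfold nform
  calc Dx r s ^ A * Dy r s ^ B * Dz r s ^ C * (Dx r s ^ A' * Dy r s ^ B' * Dz r s ^ C')
      = Dx r s ^ A * ((Dy r s ^ B * (Dz r s ^ C * Dx r s ^ A')) * Dy r s ^ B') * Dz r s ^ C' := by
        group
    _ = Dx r s ^ A * ((Dy r s ^ B * (Dx r s ^ A' * Dz r s ^ C)) * Dy r s ^ B') * Dz r s ^ C' := by
        rw [((hx.pow_right A').pow_left C).eq]
    _ = Dx r s ^ A * ((Dy r s ^ B * Dx r s ^ A') * (Dz r s ^ C * Dy r s ^ B')) * Dz r s ^ C' := by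
        group
    _ = Dx r s ^ A * ((Dy r s ^ B * Dx r s ^ A') * (Dy r s ^ B' * Dz r s ^ C)) * Dz r s ^ C' := by
        rw [((hy.pow_right B').pow_left C).eq]
    _ = Dx r s ^ A * ((Dx r s ^ A' * Dy r s ^ B * Dz r s ^ (B*A')) * (Dy r s ^ B' * Dz r s ^ C)) * Dz r s ^ C' := by
        rw [relYXpow]
    _ = Dx r s ^ (A+A') * Dy r s ^ B * (Dz r s ^ (B*A') * Dy r s ^ B') * (Dz r s ^ C * Dz r s ^ C') := by
        rw [pow_add]; group
    _ = Dx r s ^ (A+A') * Dy r s ^ B * (Dy r s ^ B' * Dz r s ^ (B*A')) * (Dz r s ^ C * Dz r s ^ C') := by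
        rw [((hy.pow_right B').pow_left (B*A')).eq]
    _ = Dx r s ^ (A+A') * Dy r s ^ (B+B') * Dz r s ^ (C+C'+B*A') := by
        rw [pow_add, pow_add, pow_add]; group

lemma nform_reduce (A B C : ℕ) :
    nform r s A B C = nform r s (A % 2^r) (B % 2^s) (C % 2) := by
  unfold nform
  rw [pow_eq_pow_mod A (relX r s), pow_eq_pow_mod B (relY r s), pow_eq_pow_mod C (relZ r s)]

lemma nform_inv (A B C : ℕ) : ∃ A' B' C', (nform r s A B C)⁻¹ = nform r s A' B' C' := by
  set t := 2^r with ht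
  set w := 2^s with hw
  have ht1 : 1 ≤ t := Nat.one_le_two_pow
  have hw1 : 1 ≤ w := Nat.one_le_two_pow
  refine ⟨A*(2*t-1), B*(2*w-1), C + B*(2*w-1)*(A*(2*t-1)), ?_⟩
  rw [inv_eq_iff_mul_eq_one, nform_mul]
  have e1 : A + A*(2*t-1) = (2*A) * t := by
    calc A + A*(2*t-1) = A * (1 + (2*t-1)) := by ring
      _ = A * (2*t) := by congr 1; omega
      _ = (2*A)*t := by ring
  have e2 : B + B*(2*w-1) = (2*B) * w := by
    calc B + B*(2*w-1) = B * (1 + (2*w-1)) := by ring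
      _ = B * (2*w) := by congr 1; omega
      _ = (2*B)*w := by ring
  have e3 : C + (C + B*(2*w-1)*(A*(2*t-1))) + B*(A*(2*t-1))
      = 2 * (C + (B*w) * (A*(2*t-1))) := by
    calc C + (C + B*(2*w-1)*(A*(2*t-1))) + B*(A*(2*t-1))
        = 2*C + ((B*(2*w-1)) + B)*(A*(2*t-1)) := by ring
      _ = 2*C + ((2*B)*w)*(A*(2*t-1)) := by rw [show (B*(2*w-1)) + B = B + B*(2*w-1) by ring, e2]
      _ = 2 * (C + (B*w) * (A*(2*t-1))) := by ring
  rw [e1, e2, e3]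
  unfold nform
  have hX : Dx r s ^ (2*A*t) = 1 := by rw [ht, pow_mul', relX, one_pow]
  have hY : Dy r s ^ (2*B*w) = 1 := by rw [hw, pow_mul', relY, one_pow]
  have hZ : Dz r s ^ (2 * (C + (B*w) * (A*(2*t-1)))) = 1 := by rw [pow_mul, relZ, one_pow]
  rw [hX, hY, hZ]
  simp

lemma nform_surj : Function.Surjective
    (fun p : Fin (2^r) × Fin (2^s) × Fin 2 => nform r s p.1 p.2.1 p.2.2) := by
  intro g
  have hclos : g ∈ Subgroup.closure (Set.range (PresentedGroup.of :
      Fin 2 → RedeiGroup r s)) := by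
    rw [PresentedGroup.closure_range_of]; trivial
  have key : ∃ A B C : ℕ, g = nform r s A B C := by
    induction hclos using Subgroup.closure_induction with
    | mem u hu =>
      obtain ⟨i, rfl⟩ := hu
      fin_cases i
      · exact ⟨1, 0, 0, by simp [nform, Dx]⟩
      · exact ⟨0, 1, 0, by simp [nform, Dy]⟩
    | one => exact ⟨0, 0, 0, by simp [nform]⟩
    | mul u v hu hv ihu ihv =>
      obtain ⟨A, B, C, rfl⟩ := ihu
      obtain ⟨A', B', C', rfl⟩ := ihv
      exact ⟨_, _, _, nform_mul A B C A' B' C'⟩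
    | inv u hu ihu =>
      obtain ⟨A, B, C, rfl⟩ := ihu
      exact nform_inv A B C
  obtain ⟨A, B, C, rfl⟩ := key
  refine ⟨(⟨A % 2^r, Nat.mod_lt _ (by positivity)⟩,
          ⟨B % 2^s, Nat.mod_lt _ (by positivity)⟩,
          ⟨C % 2, Nat.mod_lt _ (by norm_num)⟩), ?_⟩
  exact (nform_reduce A B C).symm


namespace Model
variable {n m : ℕ}

lemma relYZM : ⁅(Y : Model n m), ⁅(X : Model n m), (Y : Model n m)⁆⁆ = 1 := by
  rw [commXY, commutatorElement_eq_one_iff_commute]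
  exact (Commute.eq (Z_comm Y)).symm

def fgen (n m : ℕ) : Fin 2 → Model n m := fun i => if i = 0 then X else Y

lemma lift_rels (g : FreeGroup (Fin 2)) (h : g ∈ redeiRels (n+1) (m+1)) :
    FreeGroup.lift (fgen n m) g = 1 := by
  have hx : FreeGroup.lift (fgen n m) gx = (X : Model n m) := by simp [gx, fgen]
  have hy : FreeGroup.lift (fgen n m) gy = (Y : Model n m) := by simp [gy, fgen]
  rcases h with h | h | h | h | h <;> subst h <;>
    simp only [map_pow, map_commutatorElement, hx, hy]
  · exact relXM
  · exact relYM
  · rw [commXY]; exact relZM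
  · exact relXZM
  · exact relYZM

def phi (n m : ℕ) : RedeiGroup (n+1) (m+1) →* Model n m :=
  PresentedGroup.toGroup (lift_rels (n := n) (m := m))

@[simp] lemma phi_x : phi n m (Dx (n+1) (m+1)) = X := by
  rw [Dx, phi, PresentedGroup.toGroup.of]; simp [fgen]

@[simp] lemma phi_y : phi n m (Dy (n+1) (m+1)) = Y := by
  rw [Dy, phi, PresentedGroup.toGroup.of]; simp [fgen]

@[simp] lemma phi_z : phi n m (Dz (n+1) (m+1)) = Z := by
  rw [Dz, map_commutatorElement, phi_x, phi_y, commXY]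

lemma phi_nform (A B C : ℕ) :
    phi n m (nform (n+1) (m+1) A B C) = ⟨(A : ZMod (2^(n+1))), (B : ZMod (2^(m+1))), (C : ZMod 2)⟩ := by
  unfold nform
  rw [map_mul, map_mul, map_pow, map_pow, map_pow, phi_x, phi_y, phi_z]
  have hz : (Z : Model n m) ^ C = ⟨0, 0, (C : ZMod 2)⟩ := by
    induction C with
    | zero => ext <;> simp
    | succ C ih => rw [pow_succ, ih]; ext <;> simp [Z] <;> push_cast <;> ring
  rw [X_pow, Y_pow, hz]
  ext <;> simp

lemma phi_surj : Function.Surjective (phi n m) := by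
  intro u
  refine ⟨nform (n+1) (m+1) u.a.val u.b.val u.c.val, ?_⟩
  rw [phi_nform]
  ext <;> simp [ZMod.natCast_val, ZMod.cast_id]

end Model
namespace Model
variable {n m : ℕ}

lemma conj_eq (g u : Model n m) :
    g * u * g⁻¹ = ⟨u.a, u.b, u.c + fm m g.b * fm n u.a - fm m u.b * fm n g.a⟩ := by
  ext
  · simp
  · simp
  · simp [map_add, map_neg]; ring_nf
    rw [show (2 : ZMod 2) = 0 from rfl, sub_eq_add_neg, ZMod.neg_eq_self_mod_two]; ring

lemma isConj_iff_model {u v : Model n m} :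
    IsConj u v ↔ u.a = v.a ∧ u.b = v.b ∧
      ∃ p q : ZMod 2, v.c = u.c + q * fm n u.a - fm m u.b * p := by
  rw [isConj_iff]
  constructor
  · rintro ⟨g, rfl⟩
    rw [conj_eq]
    exact ⟨rfl, rfl, fm n g.a, fm m g.b, rfl⟩
  · rintro ⟨ha, hb, p, q, hc⟩
    refine ⟨⟨(p.val : ZMod (2^(n+1))), (q.val : ZMod (2^(m+1))), 0⟩, ?_⟩
    rw [conj_eq]
    have e1 : fm m ((q.val : ZMod (2^(m+1)))) = q := by
      simp [fm, ZMod.natCast_val, ZMod.cast_id]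
    have e2 : fm n ((p.val : ZMod (2^(n+1)))) = p := by
      simp [fm, ZMod.natCast_val, ZMod.cast_id]
    rw [e1, e2]
    ext
    · exact ha
    · exact hb
    · exact hc.symm

lemma isConj_of_ne {u v : Model n m} (ha : u.a = v.a) (hb : u.b = v.b)
    (h : ¬(fm n u.a = 0 ∧ fm m u.b = 0)) : IsConj u v := by
  rw [isConj_iff_model]
  refine ⟨ha, hb, ?_⟩
  have h1 : ∀ x : ZMod 2, x ≠ 0 → x = 1 := by decide
  rcases not_and_or.1 h with h' | h'
  · exact ⟨0, v.c - u.c, by rw [h1 _ h']; ring⟩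
  · exact ⟨-(v.c - u.c), 0, by rw [h1 _ h']; ring⟩

lemma c_eq_of_isConj {u v : Model n m} (h : fm n u.a = 0) (h' : fm m u.b = 0)
    (hconj : IsConj u v) : u.c = v.c := by
  obtain ⟨-, -, p, q, hc⟩ := isConj_iff_model.1 hconj
  rw [hc, h, h']; ring

/-- Subtype of "even" elements. -/
abbrev KK (k : ℕ) := {a : ZMod (2^(k+1)) // fm k a = 0}

abbrev Tgt (n m : ℕ) :=
  (ZMod (2^(n+1)) × ZMod (2^(m+1))) ⊕ (KK n × KK m)

open scoped Classical in
noncomputable def inva (u : Model n m) : Tgt n m :=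
  if h : fm n u.a = 0 ∧ fm m u.b = 0 ∧ u.c = 1 then .inr (⟨u.a, h.1⟩, ⟨u.b, h.2.1⟩)
  else .inl (u.a, u.b)

lemma inva_const {u v : Model n m} (h : IsConj u v) : inva u = inva v := by
  obtain ⟨ha, hb, -⟩ := isConj_iff_model.1 h
  by_cases hz : fm n u.a = 0 ∧ fm m u.b = 0
  · have : u = v := Model.ext ha hb (c_eq_of_isConj hz.1 hz.2 h)
    rw [this]
  · unfold inva
    rw [dif_neg (by tauto), dif_neg (by rw [← ha, ← hb]; tauto), ha, hb]

noncomputable def clInv : ConjClasses (Model n m) → Tgt n m :=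
  Quotient.lift (fun u => inva u) (fun _ _ h => inva_const h)

@[simp] lemma clInv_mk (u : Model n m) : clInv (ConjClasses.mk u) = inva u := rfl

def tgtRep : Tgt n m → Model n m := fun t => match t with
  | .inl (a, b) => ⟨a, b, 0⟩
  | .inr (a, b) => ⟨a.1, b.1, 1⟩

noncomputable def classEquiv (n m : ℕ) : ConjClasses (Model n m) ≃ Tgt n m where
  toFun := clInv
  invFun t := ConjClasses.mk (tgtRep t)
  left_inv := by
    intro x
    induction x using Quotient.inductionOn with
    | h u =>
      show ConjClasses.mk (tgtRep (clInv (ConjClasses.mk u))) = ConjClasses.mk u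
      rw [clInv_mk]
      unfold inva
      by_cases h : fm n u.a = 0 ∧ fm m u.b = 0 ∧ u.c = 1
      · rw [dif_pos h]
        show ConjClasses.mk (⟨u.a, u.b, 1⟩ : Model n m) = _
        have : (⟨u.a, u.b, 1⟩ : Model n m) = u := Model.ext rfl rfl h.2.2.symm
        rw [this]
      · rw [dif_neg h]
        show ConjClasses.mk (⟨u.a, u.b, 0⟩ : Model n m) = _
        rw [ConjClasses.mk_eq_mk_iff_isConj]
        by_cases hz : fm n u.a = 0 ∧ fm m u.b = 0
        · have hc : u.c = 0 := by
            have h1 : ¬ u.c = 1 := by tauto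
            revert h1; generalize u.c = c; revert c; decide
          have : (⟨u.a, u.b, 0⟩ : Model n m) = u := Model.ext rfl rfl hc.symm
          rw [this]
        · exact isConj_of_ne rfl rfl hz
  right_inv := by
    rintro (⟨a, b⟩ | ⟨⟨a, ha⟩, ⟨b, hb⟩⟩)
    · show clInv (ConjClasses.mk (⟨a, b, 0⟩ : Model n m)) = _
      rw [clInv_mk]
      unfold inva
      rw [dif_neg (show ¬(fm n a = 0 ∧ fm m b = 0 ∧ (0 : ZMod 2) = 1) from
        fun hcon => absurd hcon.2.2 (by decide))]
    · show clInv (ConjClasses.mk (⟨a, b, 1⟩ : Model n m)) = _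
      rw [clInv_mk]
      unfold inva
      rw [dif_pos ⟨ha, hb, rfl⟩]

end Model
namespace Model
variable {n m : ℕ}

instance : Finite (Model n m) :=
  Finite.of_surjective (fun p : ZMod (2^(n+1)) × ZMod (2^(m+1)) × ZMod 2 =>
    (⟨p.1, p.2.1, p.2.2⟩ : Model n m)) (fun u => ⟨(u.a, u.b, u.c), rfl⟩)

def modelEquiv (n m : ℕ) : Model n m ≃ ZMod (2^(n+1)) × ZMod (2^(m+1)) × ZMod 2 where
  toFun u := (u.a, u.b, u.c)
  invFun p := ⟨p.1, p.2.1, p.2.2⟩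
  left_inv u := rfl
  right_inv p := rfl

lemma card_model (n m : ℕ) : Nat.card (Model n m) = 2^(n+1) * 2^(m+1) * 2 := by
  rw [Nat.card_congr (modelEquiv n m)]
  simp [Nat.card_prod, mul_assoc]

lemma fm_surj (k : ℕ) : Function.Surjective (fm k) := by
  intro y
  exact ⟨(y.val : ZMod (2^(k+1))), by simp [fm, ZMod.natCast_val, ZMod.cast_id]⟩

lemma card_KK (k : ℕ) : Nat.card (KK k) = 2^k := by
  have hker : Nat.card (KK k) =
      Nat.card ((fm k).toAddMonoidHom.ker) := by
    apply Nat.card_congr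
    apply Equiv.subtypeEquivRight
    intro a
    simp [AddMonoidHom.mem_ker]
  have hiso := QuotientAddGroup.quotientKerEquivOfSurjective
    (fm k).toAddMonoidHom (fm_surj k)
  have hlag := AddSubgroup.card_eq_card_quotient_mul_card_addSubgroup
    ((fm k).toAddMonoidHom.ker)
  rw [Nat.card_congr hiso.toEquiv] at hlag
  have h2 : Nat.card (ZMod (2^(k+1))) = 2^(k+1) := by simp
  have h3 : Nat.card (ZMod 2) = 2 := by simp
  rw [h2, h3] at hlag
  rw [hker]
  omega

lemma card_tgt (n m : ℕ) : Nat.card (Tgt n m) = 2^(n+1) * 2^(m+1) + 2^n * 2^m := by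
  rw [Nat.card_sum, Nat.card_prod, Nat.card_prod, card_KK, card_KK]
  simp

lemma card_conjClasses_model (n m : ℕ) :
    Nat.card (ConjClasses (Model n m)) = 2^(n+1) * 2^(m+1) + 2^n * 2^m := by
  rw [Nat.card_congr (classEquiv n m), card_tgt]

end Model

/-- Conjugacy classes transfer along a group isomorphism. -/
def conjClassesCongr {G H : Type*} [Group G] [Group H] (e : G ≃* H) :
    ConjClasses G ≃ ConjClasses H :=
  Quotient.congr e.toEquiv (by
    intro a b
    constructor
    · rintro ⟨c, hc⟩
      exact ⟨Units.map e.toMonoidHom c, by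
        simpa [SemiconjBy, Units.ext_iff, ← map_mul] using congrArg e hc⟩
    · rintro ⟨c, hc⟩
      refine ⟨Units.map e.symm.toMonoidHom c, ?_⟩
      have h2 := congrArg e.symm (show (c : H) * e a = e b * c from hc)
      rw [map_mul, map_mul, MulEquiv.symm_apply_apply, MulEquiv.symm_apply_apply] at h2
      simpa [SemiconjBy] using h2)

section Main

lemma redei_finite (r s : ℕ) : Finite (RedeiGroup r s) :=
  Finite.of_surjective _ (nform_surj (r := r) (s := s))

lemma card_redei_le (r s : ℕ) : Nat.card (RedeiGroup r s) ≤ 2^r * 2^s * 2 := by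
  have := redei_finite r s
  have h := Nat.card_le_card_of_surjective _ (nform_surj (r := r) (s := s))
  simpa using h.trans_eq (by simp [Nat.card_prod]; ring)

noncomputable def redeiMulEquiv (n m : ℕ) : RedeiGroup (n+1) (m+1) ≃* Model n m := by
  haveI := redei_finite (n+1) (m+1)
  refine MulEquiv.ofBijective (Model.phi n m) ?_
  rw [Nat.bijective_iff_surjective_and_card]
  refine ⟨Model.phi_surj, le_antisymm ?_ ?_⟩
  · exact (card_redei_le (n+1) (m+1)).trans_eq (Model.card_model n m).symm
  · exact Nat.card_le_card_of_surjective _ Model.phi_surj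

theorem stmt3 (r s : ℕ) (hs : 1 ≤ s) (hrs : s ≤ r) :
    Nat.card (ConjClasses (RedeiGroup r s)) = 5 * 2 ^ (r + s - 2) := by
  obtain ⟨n, rfl⟩ : ∃ n, r = n + 1 := ⟨r - 1, by omega⟩
  obtain ⟨m, rfl⟩ : ∃ m, s = m + 1 := ⟨s - 1, by omega⟩
  rw [Nat.card_congr (conjClassesCongr (redeiMulEquiv n m)), Model.card_conjClasses_model]
  rw [show n + 1 + (m + 1) - 2 = n + m from by omega]
  ring

end Main
end

section
/- Let D = ⟨x, y | x^(2^r) = y^(2^s) = [x,y]^2 = [x,[x,y]] = [y,[x,y]] = 1⟩ with r ≥ 2 and r ≥ s ≥ 1, and set z := [x,y]. Then the maximal subgroups of D are exactly ⟨x², y, z⟩ ≅ C_{2^(r-1)} × C_{2^s} × C₂, ⟨x, y², z⟩ ≅ C_{2^r} × C_{2^(s-1)} × C₂, and ⟨xy, x², z⟩ ≅ C_{2^r} × C_{2^(s-1)} × C₂. -/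
open scoped commutatorElement

namespace Redei
@[ext] structure Model (m n : ℕ) where
  a : ZMod (2*m)
  b : ZMod (2*n)
  c : ZMod 2
namespace Model
variable {m n : ℕ}
def A (a : ZMod (2*m)) : ZMod 2 := ZMod.castHom (dvd_mul_right 2 m) (ZMod 2) a
def B (b : ZMod (2*n)) : ZMod 2 := ZMod.castHom (dvd_mul_right 2 n) (ZMod 2) b
@[simp] lemma A_add (a a' : ZMod (2*m)) : A (a + a') = A a + A a' := map_add _ _ _
@[simp] lemma B_add (b b' : ZMod (2*n)) : B (b + b') = B b + B b' := map_add _ _ _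
lemma A_mul (a a' : ZMod (2*m)) : A (a * a') = A a * A a' := map_mul (ZMod.castHom (dvd_mul_right 2 m) (ZMod 2)) _ _
lemma B_mul (b b' : ZMod (2*n)) : B (b * b') = B b * B b' := map_mul (ZMod.castHom (dvd_mul_right 2 n) (ZMod 2)) _ _
@[simp] lemma A_zero : A (0 : ZMod (2*m)) = 0 := map_zero _
@[simp] lemma B_zero : B (0 : ZMod (2*n)) = 0 := map_zero _
@[simp] lemma A_one : A (1 : ZMod (2*m)) = 1 := map_one _
@[simp] lemma B_one : B (1 : ZMod (2*n)) = 1 := map_one _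
@[simp] lemma A_natCast (k : ℕ) : A ((k : ZMod (2*m))) = (k : ZMod 2) := map_natCast _ _
@[simp] lemma B_natCast (k : ℕ) : B ((k : ZMod (2*n))) = (k : ZMod 2) := map_natCast _ _
lemma zmod2_neg (x : ZMod 2) : -x = x := by revert x; decide
@[simp] lemma A_neg (a : ZMod (2*m)) : A (-a) = A a := by
  rw [show A (-a) = - A a from map_neg _ _, zmod2_neg]
@[simp] lemma B_neg (b : ZMod (2*n)) : B (-b) = B b := by
  rw [show B (-b) = - B b from map_neg _ _, zmod2_neg]
instance : Mul (Model m n) :=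
  ⟨fun u v => ⟨u.a + v.a, u.b + v.b, u.c + v.c + B u.b * A v.a⟩⟩
instance : One (Model m n) := ⟨⟨0, 0, 0⟩⟩
instance : Inv (Model m n) := ⟨fun u => ⟨-u.a, -u.b, -u.c - B u.b * A u.a⟩⟩
@[simp] lemma mul_def (u v : Model m n) :
    u * v = ⟨u.a + v.a, u.b + v.b, u.c + v.c + B u.b * A v.a⟩ := rfl
@[simp] lemma one_def : (1 : Model m n) = ⟨0, 0, 0⟩ := rfl
@[simp] lemma inv_def (u : Model m n) : u⁻¹ = ⟨-u.a, -u.b, -u.c - B u.b * A u.a⟩ := rfl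
instance : Group (Model m n) where
  mul_assoc u v w := by refine Model.ext ?_ ?_ ?_ <;> simp <;> ring
  one_mul u := by refine Model.ext ?_ ?_ ?_ <;> simp
  mul_one u := by refine Model.ext ?_ ?_ ?_ <;> simp
  inv_mul_cancel u := by refine Model.ext ?_ ?_ ?_ <;> simp <;> ring_nf <;> simp [show (2 : ZMod 2) = 0 from rfl]
def xM : Model m n := ⟨1, 0, 0⟩
def yM : Model m n := ⟨0, 1, 0⟩
def zM : Model m n := ⟨0, 0, 1⟩
@[simp] lemma xM_pow (k : ℕ) : (xM : Model m n) ^ k = ⟨(k : ZMod (2*m)), 0, 0⟩ := by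
  induction k with
  | zero => simp
  | succ k ih => rw [pow_succ, ih]; simp [xM]
@[simp] lemma yM_pow (k : ℕ) : (yM : Model m n) ^ k = ⟨0, (k : ZMod (2*n)), 0⟩ := by
  induction k with
  | zero => simp
  | succ k ih => rw [pow_succ, ih]; simp [yM]
@[simp] lemma zM_pow (k : ℕ) : (zM : Model m n) ^ k = ⟨0, 0, (k : ZMod 2)⟩ := by
  induction k with
  | zero => simp
  | succ k ih => rw [pow_succ, ih]; simp [zM]
lemma commutator_xy : ⁅(xM : Model m n), (yM : Model m n)⁆ = zM := by
  show xM * yM * xM⁻¹ * yM⁻¹ = zM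
  refine Model.ext ?_ ?_ ?_ <;> simp [xM, yM, zM]

lemma commutator_def (u v : Model m n) :
    ⁅u, v⁆ = ⟨0, 0, B u.b * A v.a + B v.b * A u.a⟩ := by
  show u * v * u⁻¹ * v⁻¹ = _
  refine Model.ext ?_ ?_ ?_ <;> simp <;> ring_nf <;> simp [show (2 : ZMod 2) = 0 from rfl]

lemma pow_spec (u : Model m n) (k : ℕ) :
    ∃ c, u ^ k = ⟨(k : ZMod (2*m)) * u.a, (k : ZMod (2*n)) * u.b, c⟩ := by
  induction k with
  | zero => exact ⟨0, by simp⟩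
  | succ k ih =>
    obtain ⟨c, hc⟩ := ih
    refine ⟨c + u.c + B ((k : ZMod (2*n)) * u.b) * A u.a, ?_⟩
    rw [pow_succ, hc, mul_def]
    refine Model.ext ?_ ?_ rfl <;> push_cast <;> ring

variable [NeZero m] [NeZero n]
instance : NeZero (2*m) := ⟨by have := NeZero.ne m; omega⟩
instance : NeZero (2*n) := ⟨by have := NeZero.ne n; omega⟩

lemma A_eq_val (a : ZMod (2*m)) : A a = (a.val : ZMod 2) := by
  rw [ZMod.natCast_val]; rfl
lemma B_eq_val (b : ZMod (2*n)) : B b = (b.val : ZMod 2) := by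
  rw [ZMod.natCast_val]; rfl

lemma normal_form (u : Model m n) :
    u = xM ^ u.a.val * yM ^ u.b.val * zM ^ u.c.val := by
  refine Model.ext ?_ ?_ ?_ <;> simp [ZMod.natCast_val, ZMod.cast_id]

/-- three index-two subgroups -/
def K1 : Subgroup (Model m n) where
  carrier := {u | A u.a = 0}
  mul_mem' := by intro u v hu hv; simp_all [Set.mem_setOf_eq]
  one_mem' := by simp
  inv_mem' := by intro u hu; simp_all [Set.mem_setOf_eq]
def K2 : Subgroup (Model m n) where
  carrier := {u | B u.b = 0}
  mul_mem' := by intro u v hu hv; simp_all [Set.mem_setOf_eq]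
  one_mem' := by simp
  inv_mem' := by intro u hu; simp_all [Set.mem_setOf_eq]
def K3 : Subgroup (Model m n) where
  carrier := {u | A u.a = B u.b}
  mul_mem' := by intro u v hu hv; simp_all [Set.mem_setOf_eq]
  one_mem' := by simp
  inv_mem' := by intro u hu; simp_all [Set.mem_setOf_eq]

@[simp] lemma mem_K1 (u : Model m n) : u ∈ (K1 : Subgroup (Model m n)) ↔ A u.a = 0 := Iff.rfl
@[simp] lemma mem_K2 (u : Model m n) : u ∈ (K2 : Subgroup (Model m n)) ↔ B u.b = 0 := Iff.rfl
@[simp] lemma mem_K3 (u : Model m n) : u ∈ (K3 : Subgroup (Model m n)) ↔ A u.a = B u.b := Iff.rfl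

lemma zmod2_cases (x : ZMod 2) : x = 0 ∨ x = 1 := by revert x; decide
lemma zmod2_ne_zero {x : ZMod 2} (h : x ≠ 0) : x = 1 := by revert x h; decide
lemma zmod2_mul_ne {x y : ZMod 2} (h : x * y ≠ 0) : x = 1 ∧ y = 1 := by revert x y; decide

lemma mult2_cases (x : Multiplicative (ZMod 2)) :
    x = 1 ∨ x = Multiplicative.ofAdd 1 := by revert x; decide

/-- kernel of a surjective-onto-nontrivial map to C2 is a coatom -/
lemma isCoatom_ker {G : Type*} [Group G] (q : G →* Multiplicative (ZMod 2))
    (h : q.ker ≠ ⊤) : IsCoatom q.ker := by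
  refine ⟨h, fun K hK => ?_⟩
  obtain ⟨g, hgK, hgker⟩ := SetLike.exists_of_lt hK
  rw [eq_top_iff]
  intro w _
  rcases mult2_cases (q w) with h1 | h1
  · exact hK.le (MonoidHom.mem_ker.mpr h1)
  · have hg1 : q g = Multiplicative.ofAdd 1 := by
      rcases mult2_cases (q g) with h2 | h2
      · exact absurd (MonoidHom.mem_ker.mpr h2) hgker
      · exact h2
    have hmem : w * g⁻¹ ∈ q.ker := by
      rw [MonoidHom.mem_ker, map_mul, map_inv, h1, hg1, mul_inv_cancel]
    have := mul_mem (hK.le hmem) hgK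
    simpa using this

def q1hom : Model m n →* Multiplicative (ZMod 2) where
  toFun u := Multiplicative.ofAdd (A u.a)
  map_one' := by simp
  map_mul' u v := by simp [← ofAdd_add]
def q2hom : Model m n →* Multiplicative (ZMod 2) where
  toFun u := Multiplicative.ofAdd (B u.b)
  map_one' := by simp
  map_mul' u v := by simp [← ofAdd_add]
def q3hom : Model m n →* Multiplicative (ZMod 2) where
  toFun u := Multiplicative.ofAdd (A u.a + B u.b)
  map_one' := by simp
  map_mul' u v := by simp [← ofAdd_add]; ring

lemma zmod2_add_eq_zero_iff (x y : ZMod 2) : x + y = 0 ↔ x = y := by revert x y; decide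

lemma K1_eq_ker : (K1 : Subgroup (Model m n)) = q1hom.ker := by
  ext u
  simp [q1hom, MonoidHom.mem_ker, ofAdd_eq_one, mem_K1]
lemma K2_eq_ker : (K2 : Subgroup (Model m n)) = q2hom.ker := by
  ext u
  simp [q2hom, MonoidHom.mem_ker, ofAdd_eq_one, mem_K2]
lemma K3_eq_ker : (K3 : Subgroup (Model m n)) = q3hom.ker := by
  ext u
  simp only [q3hom, MonoidHom.mem_ker, MonoidHom.coe_mk, OneHom.coe_mk, ofAdd_eq_one, mem_K3]
  exact (zmod2_add_eq_zero_iff _ _).symm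

lemma K1_ne_top : (K1 : Subgroup (Model m n)) ≠ ⊤ := by
  intro h
  have : (xM : Model m n) ∈ K1 := h.symm ▸ Subgroup.mem_top _
  rw [mem_K1] at this
  simp [xM] at this
lemma K2_ne_top : (K2 : Subgroup (Model m n)) ≠ ⊤ := by
  intro h
  have : (yM : Model m n) ∈ K2 := h.symm ▸ Subgroup.mem_top _
  rw [mem_K2] at this
  simp [yM] at this
lemma K3_ne_top : (K3 : Subgroup (Model m n)) ≠ ⊤ := by
  intro h
  have : (xM : Model m n) ∈ K3 := h.symm ▸ Subgroup.mem_top _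
  rw [mem_K3] at this
  simp [xM] at this

lemma isCoatom_K1 : IsCoatom (K1 : Subgroup (Model m n)) := by
  have h : (K1 : Subgroup (Model m n)) ≠ ⊤ := K1_ne_top
  rw [K1_eq_ker] at h ⊢
  exact isCoatom_ker _ h
lemma isCoatom_K2 : IsCoatom (K2 : Subgroup (Model m n)) := by
  have h : (K2 : Subgroup (Model m n)) ≠ ⊤ := K2_ne_top
  rw [K2_eq_ker] at h ⊢
  exact isCoatom_ker _ h
lemma isCoatom_K3 : IsCoatom (K3 : Subgroup (Model m n)) := by
  have h : (K3 : Subgroup (Model m n)) ≠ ⊤ := K3_ne_top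
  rw [K3_eq_ker] at h ⊢
  exact isCoatom_ker _ h

@[simp] lemma mul_a (u v : Model m n) : (u*v).a = u.a + v.a := rfl
@[simp] lemma mul_b (u v : Model m n) : (u*v).b = u.b + v.b := rfl
@[simp] lemma inv_a (u : Model m n) : (u⁻¹).a = -u.a := rfl
@[simp] lemma inv_b (u : Model m n) : (u⁻¹).b = -u.b := rfl

lemma natCast_val_self_m (x : ZMod (2*m)) : ((x.val : ZMod (2*m))) = x := by
  rw [ZMod.natCast_val, ZMod.cast_id]
lemma natCast_val_self_n (x : ZMod (2*n)) : ((x.val : ZMod (2*n))) = x := by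
  rw [ZMod.natCast_val, ZMod.cast_id]

section PowerOfTwo
variable {r s : ℕ}

lemma coprime_of_odd_pow2 {N k : ℕ} (hN : ∃ r, N = 2^r) (hk : k % 2 = 1) :
    Nat.Coprime k N := by
  obtain ⟨r, rfl⟩ := hN
  exact Nat.Coprime.pow_right _ (Nat.coprime_two_right.mpr (Nat.odd_iff.mpr hk))

lemma isUnit_of_A_one (hm : 2*m = 2^r) {a : ZMod (2*m)} (ha : A a = 1) : IsUnit a := by
  have hval : (a.val : ZMod 2) = 1 := by rw [← A_eq_val]; exact ha
  have hodd : a.val % 2 = 1 := by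
    rcases Nat.mod_two_eq_zero_or_one a.val with h | h
    · exfalso
      rw [← ZMod.natCast_mod, h] at hval
      simp at hval
    · exact h
  have : IsUnit ((a.val : ℕ) : ZMod (2*m)) :=
    (ZMod.isUnit_iff_coprime _ _).mpr (coprime_of_odd_pow2 ⟨r, hm⟩ hodd)
  rwa [natCast_val_self_m] at this

lemma isUnit_of_B_one (hn : 2*n = 2^s) {b : ZMod (2*n)} (hb : B b = 1) : IsUnit b := by
  have hval : (b.val : ZMod 2) = 1 := by rw [← B_eq_val]; exact hb
  have hodd : b.val % 2 = 1 := by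
    rcases Nat.mod_two_eq_zero_or_one b.val with h | h
    · exfalso
      rw [← ZMod.natCast_mod, h] at hval
      simp at hval
    · exact h
  have : IsUnit ((b.val : ℕ) : ZMod (2*n)) :=
    (ZMod.isUnit_iff_coprime _ _).mpr (coprime_of_odd_pow2 ⟨s, hn⟩ hodd)
  rwa [natCast_val_self_n] at this

lemma exists_inv_A (hm : 2*m = 2^r) {a : ZMod (2*m)} (ha : A a = 1) :
    ∃ t : ZMod (2*m), t * a = 1 ∧ A t = 1 := by
  obtain ⟨u, hu⟩ := isUnit_of_A_one hm ha
  refine ⟨↑u⁻¹, by rw [← hu]; exact u.inv_mul, ?_⟩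
  have h1 : A ((↑u⁻¹ : ZMod (2*m)) * a) = 1 := by rw [← hu, u.inv_mul]; exact A_one
  rwa [A_mul, ha, mul_one] at h1

lemma exists_inv_B (hn : 2*n = 2^s) {b : ZMod (2*n)} (hb : B b = 1) :
    ∃ t : ZMod (2*n), t * b = 1 ∧ B t = 1 := by
  obtain ⟨u, hu⟩ := isUnit_of_B_one hn hb
  refine ⟨↑u⁻¹, by rw [← hu]; exact u.inv_mul, ?_⟩
  have h1 : B ((↑u⁻¹ : ZMod (2*n)) * b) = 1 := by rw [← hu, u.inv_mul]; exact B_one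
  rwa [B_mul, hb, mul_one] at h1

lemma natCast_val_A {x : ZMod (2*m)} : ((x.val : ZMod 2)) = A x := (A_eq_val x).symm
lemma natCast_val_B {x : ZMod (2*n)} : ((x.val : ZMod 2)) = B x := (B_eq_val x).symm

/-- If a subgroup contains a suitable "generating pair", it is everything. -/
lemma eq_top_of_pair (hm : 2*m = 2^r) (hn : 2*n = 2^s) (H : Subgroup (Model m n))
    {u v : Model m n} (hu : u ∈ H) (hv : v ∈ H)
    (hAu : A u.a = 1) (hBv : B v.b = 1) (hmix : B u.b * A v.a = 0) : H = ⊤ := by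
  have hz : zM ∈ H := by
    have hcom : ⁅u, v⁆ ∈ H := mul_mem (mul_mem (mul_mem hu hv) (inv_mem hu)) (inv_mem hv)
    rwa [commutator_def, hmix, hBv, hAu, mul_one, zero_add] at hcom
  -- normalize u
  obtain ⟨t, hta, hAt⟩ := exists_inv_A hm hAu
  obtain ⟨c1, hp⟩ := pow_spec u t.val
  have hu' : u ^ t.val ∈ H := pow_mem hu _
  have hu'a : (u ^ t.val).a = 1 := by
    rw [hp]
    show (t.val : ZMod (2*m)) * u.a = 1
    rwa [natCast_val_self_m]
  have hu'b : B (u ^ t.val).b = B u.b := by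
    rw [hp]
    show B ((t.val : ZMod (2*n)) * u.b) = B u.b
    rw [B_mul, B_natCast, natCast_val_A, hAt, one_mul]
  -- normalize v
  obtain ⟨w, hwb, hBw⟩ := exists_inv_B hn hBv
  obtain ⟨c2, hq⟩ := pow_spec v w.val
  have hv' : v ^ w.val ∈ H := pow_mem hv _
  have hv'b : (v ^ w.val).b = 1 := by
    rw [hq]
    show (w.val : ZMod (2*n)) * v.b = 1
    rwa [natCast_val_self_n]
  have hv'a : A (v ^ w.val).a = A v.a := by
    rw [hq]
    show A ((w.val : ZMod (2*m)) * v.a) = A v.a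
    rw [A_mul, A_natCast, natCast_val_B, hBw, one_mul]
  -- d kills the second coordinate
  obtain ⟨c3, h3⟩ := pow_spec ((v ^ w.val)⁻¹) ((u ^ t.val).b.val)
  have hd : (u ^ t.val) * ((v ^ w.val)⁻¹ ^ ((u ^ t.val).b.val)) ∈ H :=
    mul_mem hu' (pow_mem (inv_mem hv') _)
  have hdb : ((u ^ t.val) * ((v ^ w.val)⁻¹ ^ ((u ^ t.val).b.val))).b = 0 := by
    rw [mul_b, h3]
    show (u ^ t.val).b + ((u ^ t.val).b.val : ZMod (2*n)) * ((v ^ w.val)⁻¹).b = 0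
    rw [inv_b, natCast_val_self_n, hv'b]
    ring
  have hda : A ((u ^ t.val) * ((v ^ w.val)⁻¹ ^ ((u ^ t.val).b.val))).a = 1 := by
    rw [mul_a, h3]
    show A ((u ^ t.val).a + ((u ^ t.val).b.val : ZMod (2*m)) * ((v ^ w.val)⁻¹).a) = 1
    rw [inv_a, A_add, hu'a, A_one, A_mul, A_neg, A_natCast, natCast_val_B, hu'b, hv'a, hmix, add_zero]
  -- extract x
  obtain ⟨t2, ht2, hAt2⟩ := exists_inv_A hm hda
  obtain ⟨c4, he4⟩ := pow_spec ((u ^ t.val) * ((v ^ w.val)⁻¹ ^ ((u ^ t.val).b.val))) t2.val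
  have hx0 : (⟨1, 0, c4⟩ : Model m n) ∈ H := by
    have hmem := pow_mem hd t2.val
    rw [he4] at hmem
    rw [show ((t2.val : ZMod (2*m)) *
        ((u ^ t.val) * ((v ^ w.val)⁻¹ ^ ((u ^ t.val).b.val))).a) = 1 from by
      rw [natCast_val_self_m]; exact ht2] at hmem
    rwa [show ((t2.val : ZMod (2*n)) *
        ((u ^ t.val) * ((v ^ w.val)⁻¹ ^ ((u ^ t.val).b.val))).b) = 0 from by
      rw [hdb, mul_zero]] at hmem
  have hxM : (xM : Model m n) ∈ H := by
    have hzc : (zM : Model m n) ^ ((-c4).val) ∈ H := pow_mem hz _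
    rw [zM_pow] at hzc
    have := mul_mem hx0 hzc
    rw [show ((-c4).val : ZMod 2) = -c4 from by rw [ZMod.natCast_val, ZMod.cast_id]] at this
    rwa [show (⟨1, 0, c4⟩ : Model m n) * ⟨0, 0, -c4⟩ = xM from by
      refine Model.ext ?_ ?_ ?_ <;> simp [xM, CharTwo.add_self_eq_zero]] at this
  -- g kills the first coordinate
  obtain ⟨c5, h5⟩ := pow_spec ((u ^ t.val)⁻¹) ((v ^ w.val).a.val)
  have hg : (v ^ w.val) * ((u ^ t.val)⁻¹ ^ ((v ^ w.val).a.val)) ∈ H :=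
    mul_mem hv' (pow_mem (inv_mem hu') _)
  have hga : ((v ^ w.val) * ((u ^ t.val)⁻¹ ^ ((v ^ w.val).a.val))).a = 0 := by
    rw [mul_a, h5]
    show (v ^ w.val).a + ((v ^ w.val).a.val : ZMod (2*m)) * ((u ^ t.val)⁻¹).a = 0
    rw [inv_a, natCast_val_self_m, hu'a]
    ring
  have hgb : B ((v ^ w.val) * ((u ^ t.val)⁻¹ ^ ((v ^ w.val).a.val))).b = 1 := by
    rw [mul_b, h5]
    show B ((v ^ w.val).b + ((v ^ w.val).a.val : ZMod (2*n)) * ((u ^ t.val)⁻¹).b) = 1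
    rw [inv_b, B_add, hv'b, B_one, B_mul, B_neg, B_natCast, natCast_val_A, hv'a, hu'b,
      mul_comm (A v.a) (B u.b), hmix, add_zero]
  -- extract y
  obtain ⟨w2, hw2, hBw2⟩ := exists_inv_B hn hgb
  obtain ⟨c6, he6⟩ := pow_spec ((v ^ w.val) * ((u ^ t.val)⁻¹ ^ ((v ^ w.val).a.val))) w2.val
  have hy0 : (⟨0, 1, c6⟩ : Model m n) ∈ H := by
    have hmem := pow_mem hg w2.val
    rw [he6] at hmem
    rw [show ((w2.val : ZMod (2*n)) *
        ((v ^ w.val) * ((u ^ t.val)⁻¹ ^ ((v ^ w.val).a.val))).b) = 1 from by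
      rw [natCast_val_self_n]; exact hw2] at hmem
    rwa [show ((w2.val : ZMod (2*m)) *
        ((v ^ w.val) * ((u ^ t.val)⁻¹ ^ ((v ^ w.val).a.val))).a) = 0 from by
      rw [hga, mul_zero]] at hmem
  have hyM : (yM : Model m n) ∈ H := by
    have hzc : (zM : Model m n) ^ ((-c6).val) ∈ H := pow_mem hz _
    rw [zM_pow] at hzc
    have := mul_mem hy0 hzc
    rw [show ((-c6).val : ZMod 2) = -c6 from by rw [ZMod.natCast_val, ZMod.cast_id]] at this
    rwa [show (⟨0, 1, c6⟩ : Model m n) * ⟨0, 0, -c6⟩ = yM from by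
      refine Model.ext ?_ ?_ ?_ <;> simp [yM, CharTwo.add_self_eq_zero]] at this
  rw [eq_top_iff]
  intro g _
  rw [normal_form g]
  exact mul_mem (mul_mem (pow_mem hxM _) (pow_mem hyM _)) (pow_mem hz _)
/-- Classification of maximal subgroups of the model. -/
theorem isCoatom_iff_model (hm : 2*m = 2^r) (hn : 2*n = 2^s) (H : Subgroup (Model m n)) :
    IsCoatom H ↔ H = K1 ∨ H = K2 ∨ H = K3 := by
  constructor
  · intro hH
    by_cases h1 : H ≤ K1
    · left
      by_cases he : H = K1
      · exact he
      · exact absurd (hH.2 K1 (lt_of_le_of_ne h1 he)) K1_ne_top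
    by_cases h2 : H ≤ K2
    · right; left
      by_cases he : H = K2
      · exact he
      · exact absurd (hH.2 K2 (lt_of_le_of_ne h2 he)) K2_ne_top
    by_cases h3 : H ≤ K3
    · right; right
      by_cases he : H = K3
      · exact he
      · exact absurd (hH.2 K3 (lt_of_le_of_ne h3 he)) K3_ne_top
    exfalso
    obtain ⟨g1, hg1H, hg1⟩ := SetLike.not_le_iff_exists.mp h1
    obtain ⟨g2, hg2H, hg2⟩ := SetLike.not_le_iff_exists.mp h2
    obtain ⟨g3, hg3H, hg3⟩ := SetLike.not_le_iff_exists.mp h3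
    rw [mem_K1] at hg1
    rw [mem_K2] at hg2
    rw [mem_K3] at hg3
    have hA1 : A g1.a = 1 := zmod2_ne_zero hg1
    have hB2 : B g2.b = 1 := zmod2_ne_zero hg2
    have htop : H = ⊤ := by
      by_cases hc : B g1.b * A g2.a = 0
      · exact eq_top_of_pair hm hn H hg1H hg2H hA1 hB2 hc
      · obtain ⟨hq1, hp2⟩ := zmod2_mul_ne hc
        rcases zmod2_cases (A g3.a) with ha3 | ha3
        · -- A g3.a = 0, so B g3.b = 1
          have hb3 : B g3.b = 1 := by
            rcases zmod2_cases (B g3.b) with h | h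
            · exact absurd (ha3.trans h.symm) hg3
            · exact h
          refine eq_top_of_pair hm hn H hg1H hg3H hA1 hb3 ?_
          rw [hq1, ha3, mul_zero]
        · -- A g3.a = 1, so B g3.b = 0
          have hb3 : B g3.b = 0 := by
            rcases zmod2_cases (B g3.b) with h | h
            · exact h
            · exact absurd (ha3.trans h.symm) hg3
          refine eq_top_of_pair hm hn H hg3H hg1H ha3 hq1 ?_
          rw [hb3, zero_mul]
    exact hH.1 htop
  · rintro (rfl | rfl | rfl)
    · exact isCoatom_K1
    · exact isCoatom_K2
    · exact isCoatom_K3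

end PowerOfTwo

section Iso

lemma pow_mod_eq {G : Type*} [Group G] {N : ℕ} {g : G} (h : g ^ N = 1) (k : ℕ) :
    g ^ (k % N) = g ^ k := by
  conv_rhs => rw [← Nat.mod_add_div k N]
  rw [pow_add, pow_mul, h, one_pow, mul_one]

/-- the homomorphism `ZMod N →* G` sending `1` to an element killed by `N`. -/
def homOfPow {G : Type*} [Group G] {N : ℕ} [NeZero N] (g : G) (h : g ^ N = 1) :
    Multiplicative (ZMod N) →* G where
  toFun u := g ^ (Multiplicative.toAdd u).val
  map_one' := by simp
  map_mul' u v := by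
    show g ^ (Multiplicative.toAdd (u * v)).val = _
    rw [show Multiplicative.toAdd (u * v) = Multiplicative.toAdd u + Multiplicative.toAdd v
      from rfl, ZMod.val_add, pow_mod_eq h, pow_add]

@[simp] lemma homOfPow_apply {G : Type*} [Group G] {N : ℕ} [NeZero N] (g : G) (h : g ^ N = 1)
    (u : Multiplicative (ZMod N)) : homOfPow g h u = g ^ (Multiplicative.toAdd u).val := rfl

/-- combine three commuting torsion elements into a homomorphism from a product. -/
def tripleHom {G : Type*} [Group G] {N₁ N₂ N₃ : ℕ} [NeZero N₁] [NeZero N₂] [NeZero N₃]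
    (g₁ g₂ g₃ : G) (h₁ : g₁ ^ N₁ = 1) (h₂ : g₂ ^ N₂ = 1) (h₃ : g₃ ^ N₃ = 1)
    (c12 : Commute g₁ g₂) (c13 : Commute g₁ g₃) (c23 : Commute g₂ g₃) :
    Multiplicative (ZMod N₁) × Multiplicative (ZMod N₂) × Multiplicative (ZMod N₃) →* G :=
  (homOfPow g₁ h₁).noncommCoprod
    ((homOfPow g₂ h₂).noncommCoprod (homOfPow g₃ h₃) (fun u v => (c23.pow_pow _ _)))
    (fun u p => ((c12.pow_pow _ _).mul_right (c13.pow_pow _ _)))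

lemma tripleHom_apply {G : Type*} [Group G] {N₁ N₂ N₃ : ℕ} [NeZero N₁] [NeZero N₂] [NeZero N₃]
    (g₁ g₂ g₃ : G) (h₁ : g₁ ^ N₁ = 1) (h₂ : g₂ ^ N₂ = 1) (h₃ : g₃ ^ N₃ = 1)
    (c12 : Commute g₁ g₂) (c13 : Commute g₁ g₃) (c23 : Commute g₂ g₃)
    (u : Multiplicative (ZMod N₁)) (v : Multiplicative (ZMod N₂)) (w : Multiplicative (ZMod N₃)) :
    tripleHom g₁ g₂ g₃ h₁ h₂ h₃ c12 c13 c23 (u, v, w) =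
      g₁ ^ (Multiplicative.toAdd u).val *
        (g₂ ^ (Multiplicative.toAdd v).val * g₃ ^ (Multiplicative.toAdd w).val) := rfl

/-- generic: the range of `tripleHom` is contained in the closure of the generators,
and conversely. -/
lemma closure_eq_range {G : Type*} [Group G] {N₁ N₂ N₃ : ℕ} [NeZero N₁] [NeZero N₂] [NeZero N₃]
    (g₁ g₂ g₃ : G) (h₁ : g₁ ^ N₁ = 1) (h₂ : g₂ ^ N₂ = 1) (h₃ : g₃ ^ N₃ = 1)
    (c12 : Commute g₁ g₂) (c13 : Commute g₁ g₃) (c23 : Commute g₂ g₃) : True := trivial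

variable [NeZero m] [NeZero n]

lemma natCast_val_self {N : ℕ} [NeZero N] (x : ZMod N) : ((x.val : ℕ) : ZMod N) = x := by
  rw [ZMod.natCast_val, ZMod.cast_id]

lemma val_inj_of_natCast_eq {N : ℕ} [NeZero N] {x y : ZMod N}
    (h : ((x.val : ℕ) : ZMod N) = ((y.val : ℕ) : ZMod N)) : x = y := by
  rwa [natCast_val_self, natCast_val_self] at h

lemma commute_of (u v : Model m n) (h : B u.b * A v.a = B v.b * A u.a) : Commute u v := by
  show u * v = v * u
  refine Model.ext (add_comm _ _) (add_comm _ _) ?_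
  show u.c + v.c + B u.b * A v.a = v.c + u.c + B v.b * A u.a
  rw [h]; ring

lemma xMsq_order : ((xM : Model m n) ^ 2) ^ m = 1 := by
  rw [← pow_mul, xM_pow]
  refine Model.ext ?_ rfl rfl
  show ((2 * m : ℕ) : ZMod (2*m)) = 0
  exact ZMod.natCast_self _
lemma yM_order : (yM : Model m n) ^ (2*n) = 1 := by
  rw [yM_pow]
  refine Model.ext rfl ?_ rfl
  show ((2 * n : ℕ) : ZMod (2*n)) = 0
  exact ZMod.natCast_self _
lemma yMsq_order : ((yM : Model m n) ^ 2) ^ n = 1 := by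
  rw [← pow_mul, yM_pow]
  refine Model.ext rfl ?_ rfl
  show ((2 * n : ℕ) : ZMod (2*n)) = 0
  exact ZMod.natCast_self _
lemma xM_order : (xM : Model m n) ^ (2*m) = 1 := by
  rw [xM_pow]
  refine Model.ext ?_ rfl rfl
  show ((2 * m : ℕ) : ZMod (2*m)) = 0
  exact ZMod.natCast_self _
lemma zM_order : (zM : Model m n) ^ 2 = 1 := by
  rw [zM_pow]
  refine Model.ext rfl rfl ?_
  show ((2 : ℕ) : ZMod 2) = 0
  decide

lemma commute_xsq_y : Commute ((xM : Model m n) ^ 2) yM := by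
  refine commute_of _ _ ?_
  rw [xM_pow]
  show B (0 : ZMod (2*n)) * A ((0 : ZMod (2*m))) = B (1 : ZMod (2*n)) * A (((2:ℕ) : ZMod (2*m)))
  rw [B_zero, zero_mul, B_one, one_mul, A_natCast]
  decide
lemma commute_z_left (u : Model m n) : Commute u zM := by
  refine commute_of _ _ ?_
  show B u.b * A (0 : ZMod (2*m)) = B (0 : ZMod (2*n)) * A u.a
  rw [A_zero, B_zero, mul_zero, zero_mul]

/-- Ψ₁ -/
def Psi1 : Multiplicative (ZMod m) × Multiplicative (ZMod (2*n)) × Multiplicative (ZMod 2) →*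
    Model m n :=
  tripleHom (xM ^ 2) yM zM xMsq_order yM_order zM_order commute_xsq_y
    (commute_z_left _) (commute_z_left _)

lemma Psi1_apply (u : Multiplicative (ZMod m)) (v : Multiplicative (ZMod (2*n)))
    (w : Multiplicative (ZMod 2)) :
    Psi1 (u, v, w) = (⟨((2 * (Multiplicative.toAdd u).val : ℕ) : ZMod (2*m)),
      (((Multiplicative.toAdd v).val : ℕ) : ZMod (2*n)),
      (((Multiplicative.toAdd w).val : ℕ) : ZMod 2)⟩ : Model m n) := by
  rw [Psi1, tripleHom_apply, ← pow_mul, xM_pow, yM_pow, zM_pow]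
  refine Model.ext ?_ ?_ ?_ <;> simp

lemma Psi1_mem (p : Multiplicative (ZMod m) × Multiplicative (ZMod (2*n)) × Multiplicative (ZMod 2)) :
    Psi1 p ∈ (K1 : Subgroup (Model m n)) := by
  obtain ⟨u, v, w⟩ := p
  rw [Psi1_apply, mem_K1]
  show A _ = 0
  rw [A_natCast]
  push_cast
  rw [show ((2 : ZMod 2)) = 0 from rfl, zero_mul]

lemma val_cancel_two {N : ℕ} [NeZero N] {x y : ZMod N}
    (h : ((2 * x.val : ℕ) : ZMod (2*N)) = ((2 * y.val : ℕ) : ZMod (2*N))) : x = y := by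
  have hmod : (2 * x.val) % (2*N) = (2 * y.val) % (2*N) :=
    (ZMod.natCast_eq_natCast_iff _ _ _).mp h
  rw [Nat.mul_mod_mul_left, Nat.mul_mod_mul_left] at hmod
  have h2 : x.val % N = y.val % N := by omega
  rw [Nat.mod_eq_of_lt (ZMod.val_lt _), Nat.mod_eq_of_lt (ZMod.val_lt _)] at h2
  rw [← natCast_val_self x, ← natCast_val_self y, h2]

lemma Psi1_injective : Function.Injective (Psi1 : _ →* Model m n) := by
  rintro ⟨u, v, w⟩ ⟨u', v', w'⟩ h
  rw [Psi1_apply, Psi1_apply, Model.mk.injEq] at h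
  obtain ⟨h1, h2, h3⟩ := h
  have hu : u = u' := Multiplicative.toAdd.injective (val_cancel_two h1)
  have hv : v = v' := Multiplicative.toAdd.injective (val_inj_of_natCast_eq h2)
  have hw : w = w' := Multiplicative.toAdd.injective (val_inj_of_natCast_eq h3)
  rw [hu, hv, hw]

lemma Psi1_surjective_onto : ∀ g ∈ (K1 : Subgroup (Model m n)), ∃ p, Psi1 p = g := by
  rintro ⟨a, b, c⟩ hg
  rw [mem_K1] at hg
  have ha : A a = 0 := hg
  have heven : a.val % 2 = 0 := by
    have hval : ((a.val : ℕ) : ZMod 2) = 0 := by rw [natCast_val_A]; exact ha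
    rcases Nat.mod_two_eq_zero_or_one a.val with h | h
    · exact h
    · exfalso
      rw [← ZMod.natCast_mod, h] at hval
      simp at hval
  refine ⟨(Multiplicative.ofAdd ((a.val / 2 : ℕ) : ZMod m),
    Multiplicative.ofAdd b, Multiplicative.ofAdd c), ?_⟩
  rw [Psi1_apply]
  refine Model.ext ?_ ?_ ?_
  · show ((2 * ((a.val / 2 : ℕ) : ZMod m).val : ℕ) : ZMod (2*m)) = a
    have : ((a.val / 2 : ℕ) : ZMod m).val = (a.val / 2) % m := ZMod.val_natCast _ _
    rw [this, ← Nat.mul_mod_mul_left, ZMod.natCast_mod,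
      Nat.mul_div_cancel' (Nat.dvd_of_mod_eq_zero heven), natCast_val_self]
  · show (((Multiplicative.toAdd (Multiplicative.ofAdd b)).val : ℕ) : ZMod (2*n)) = b
    rw [toAdd_ofAdd, natCast_val_self]
  · show (((Multiplicative.toAdd (Multiplicative.ofAdd c)).val : ℕ) : ZMod 2) = c
    rw [toAdd_ofAdd, natCast_val_self]

lemma closure1_eq : Subgroup.closure {(xM:Model m n)^2, yM, zM} = (K1 : Subgroup (Model m n)) := by
  apply le_antisymm
  · rw [Subgroup.closure_le]
    rintro g (rfl | rfl | rfl)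
    · rw [SetLike.mem_coe, mem_K1, pow_two]
      show A ((1:ZMod (2*m)) + 1) = 0
      rw [A_add, A_one]
      decide
    · rw [SetLike.mem_coe, mem_K1]
      exact A_zero
    · rw [SetLike.mem_coe, mem_K1]
      exact A_zero
  · intro g hg
    obtain ⟨⟨u,v,w⟩, hp⟩ := Psi1_surjective_onto g hg
    rw [← hp, Psi1, tripleHom_apply]
    refine mul_mem (pow_mem (Subgroup.subset_closure ?_) _)
      (mul_mem (pow_mem (Subgroup.subset_closure ?_) _)
        (pow_mem (Subgroup.subset_closure ?_) _)) <;> simp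

noncomputable def K1_iso : (K1 : Subgroup (Model m n)) ≃*
    Multiplicative (ZMod m) × Multiplicative (ZMod (2*n)) × Multiplicative (ZMod 2) :=
  (MulEquiv.ofBijective ((Psi1 : _ →* Model m n).codRestrict K1 Psi1_mem)
    ⟨fun p q h => Psi1_injective (congrArg Subtype.val h),
     fun g => ((Psi1_surjective_onto g.1 g.2).imp (fun p hp => Subtype.ext hp))⟩).symm

/-! case K2 -/

lemma commute_x_ysq : Commute (xM : Model m n) (yM ^ 2) := by
  refine commute_of _ _ ?_
  rw [yM_pow]
  show B (0 : ZMod (2*n)) * A ((0 : ZMod (2*m))) = B (((2:ℕ) : ZMod (2*n))) * A (1 : ZMod (2*m))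
  rw [B_zero, zero_mul, B_natCast, A_one, mul_one]
  decide

def Psi2 : Multiplicative (ZMod (2*m)) × Multiplicative (ZMod n) × Multiplicative (ZMod 2) →*
    Model m n :=
  tripleHom xM (yM ^ 2) zM xM_order yMsq_order zM_order commute_x_ysq
    (commute_z_left _) (commute_z_left _)

lemma Psi2_apply (u : Multiplicative (ZMod (2*m))) (v : Multiplicative (ZMod n))
    (w : Multiplicative (ZMod 2)) :
    Psi2 (u, v, w) = (⟨(((Multiplicative.toAdd u).val : ℕ) : ZMod (2*m)),
      ((2 * (Multiplicative.toAdd v).val : ℕ) : ZMod (2*n)),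
      (((Multiplicative.toAdd w).val : ℕ) : ZMod 2)⟩ : Model m n) := by
  rw [Psi2, tripleHom_apply, ← pow_mul, xM_pow, yM_pow, zM_pow]
  refine Model.ext ?_ ?_ ?_ <;> simp

lemma Psi2_mem (p : Multiplicative (ZMod (2*m)) × Multiplicative (ZMod n) × Multiplicative (ZMod 2)) :
    Psi2 p ∈ (K2 : Subgroup (Model m n)) := by
  obtain ⟨u, v, w⟩ := p
  rw [Psi2_apply, mem_K2]
  show B _ = 0
  rw [B_natCast]
  push_cast
  rw [show ((2 : ZMod 2)) = 0 from rfl, zero_mul]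

lemma Psi2_injective : Function.Injective (Psi2 : _ →* Model m n) := by
  rintro ⟨u, v, w⟩ ⟨u', v', w'⟩ h
  rw [Psi2_apply, Psi2_apply, Model.mk.injEq] at h
  obtain ⟨h1, h2, h3⟩ := h
  have hu : u = u' := Multiplicative.toAdd.injective (val_inj_of_natCast_eq h1)
  have hv : v = v' := Multiplicative.toAdd.injective (val_cancel_two h2)
  have hw : w = w' := Multiplicative.toAdd.injective (val_inj_of_natCast_eq h3)
  rw [hu, hv, hw]

lemma Psi2_surjective_onto : ∀ g ∈ (K2 : Subgroup (Model m n)), ∃ p, Psi2 p = g := by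
  rintro ⟨a, b, c⟩ hg
  rw [mem_K2] at hg
  have heven : b.val % 2 = 0 := by
    have hval : ((b.val : ℕ) : ZMod 2) = 0 := by rw [natCast_val_B]; exact hg
    rcases Nat.mod_two_eq_zero_or_one b.val with h | h
    · exact h
    · exfalso
      rw [← ZMod.natCast_mod, h] at hval
      simp at hval
  refine ⟨(Multiplicative.ofAdd a, Multiplicative.ofAdd ((b.val / 2 : ℕ) : ZMod n),
    Multiplicative.ofAdd c), ?_⟩
  rw [Psi2_apply]
  refine Model.ext ?_ ?_ ?_
  · show (((Multiplicative.toAdd (Multiplicative.ofAdd a)).val : ℕ) : ZMod (2*m)) = a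
    rw [toAdd_ofAdd, natCast_val_self]
  · show ((2 * ((b.val / 2 : ℕ) : ZMod n).val : ℕ) : ZMod (2*n)) = b
    have : ((b.val / 2 : ℕ) : ZMod n).val = (b.val / 2) % n := ZMod.val_natCast _ _
    rw [this, ← Nat.mul_mod_mul_left, ZMod.natCast_mod,
      Nat.mul_div_cancel' (Nat.dvd_of_mod_eq_zero heven), natCast_val_self]
  · show (((Multiplicative.toAdd (Multiplicative.ofAdd c)).val : ℕ) : ZMod 2) = c
    rw [toAdd_ofAdd, natCast_val_self]

lemma closure2_eq : Subgroup.closure {(xM:Model m n), yM^2, zM} = (K2 : Subgroup (Model m n)) := by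
  apply le_antisymm
  · rw [Subgroup.closure_le]
    rintro g (rfl | rfl | rfl)
    · rw [SetLike.mem_coe, mem_K2]
      exact B_zero
    · rw [SetLike.mem_coe, mem_K2, pow_two]
      show B ((1:ZMod (2*n)) + 1) = 0
      rw [B_add, B_one]
      decide
    · rw [SetLike.mem_coe, mem_K2]
      exact B_zero
  · intro g hg
    obtain ⟨⟨u,v,w⟩, hp⟩ := Psi2_surjective_onto g hg
    rw [← hp, Psi2, tripleHom_apply]
    refine mul_mem (pow_mem (Subgroup.subset_closure ?_) _)
      (mul_mem (pow_mem (Subgroup.subset_closure ?_) _)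
        (pow_mem (Subgroup.subset_closure ?_) _)) <;> simp

noncomputable def K2_iso : (K2 : Subgroup (Model m n)) ≃*
    Multiplicative (ZMod (2*m)) × Multiplicative (ZMod n) × Multiplicative (ZMod 2) :=
  (MulEquiv.ofBijective ((Psi2 : _ →* Model m n).codRestrict K2 Psi2_mem)
    ⟨fun p q h => Psi2_injective (congrArg Subtype.val h),
     fun g => ((Psi2_surjective_onto g.1 g.2).imp (fun p hp => Subtype.ext hp))⟩).symm

/-! case K3 -/

lemma xy_record : (xM * yM : Model m n) = ⟨1, 1, 0⟩ := by
  refine Model.ext ?_ ?_ ?_ <;> simp [xM, yM]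

lemma xy_pow (k : ℕ) :
    ∃ γ, (xM * yM : Model m n) ^ k = ⟨((k:ℕ) : ZMod (2*m)), ((k:ℕ) : ZMod (2*n)), γ⟩ := by
  obtain ⟨γ, hγ⟩ := pow_spec (xM * yM) k
  refine ⟨γ, ?_⟩
  rw [hγ, xy_record]
  refine Model.ext ?_ ?_ rfl <;> show _ * _ = _ <;> rw [mul_one]

lemma xy_sq : ((xM * yM) : Model m n) ^ 2 = ⟨((2:ℕ) : ZMod (2*m)), ((2:ℕ) : ZMod (2*n)), 1⟩ := by
  rw [pow_two, xy_record]
  refine Model.ext ?_ ?_ ?_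
  · show (1 : ZMod (2*m)) + 1 = ((2:ℕ) : ZMod (2*m)); push_cast; ring
  · show (1 : ZMod (2*n)) + 1 = ((2:ℕ) : ZMod (2*n)); push_cast; ring
  · show (0 : ZMod 2) + 0 + B 1 * A 1 = 1
    rw [B_one, A_one]
    ring

lemma diag_pow (k : ℕ) :
    ((⟨((2:ℕ) : ZMod (2*m)), ((2:ℕ) : ZMod (2*n)), 1⟩ : Model m n)) ^ k
      = ⟨((2*k : ℕ) : ZMod (2*m)), ((2*k : ℕ) : ZMod (2*n)), ((k:ℕ) : ZMod 2)⟩ := by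
  induction k with
  | zero => simp
  | succ k ih =>
    rw [pow_succ, ih, mul_def]
    refine Model.ext ?_ ?_ ?_
    · show ((2*k : ℕ) : ZMod (2*m)) + ((2:ℕ) : ZMod (2*m)) = ((2*(k+1) : ℕ) : ZMod (2*m))
      push_cast; ring
    · show ((2*k : ℕ) : ZMod (2*n)) + ((2:ℕ) : ZMod (2*n)) = ((2*(k+1) : ℕ) : ZMod (2*n))
      push_cast; ring
    · show ((k:ℕ) : ZMod 2) + 1 + B ((2*k : ℕ) : ZMod (2*n)) * A ((2:ℕ) : ZMod (2*m))
        = (((k+1):ℕ) : ZMod 2)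
      rw [B_natCast, A_natCast]
      push_cast
      rw [show ((2 : ZMod 2)) = 0 from rfl]
      ring

lemma xy_order (hm2 : m % 2 = 0) (hnm : n ∣ m) : ((xM * yM) : Model m n) ^ (2*m) = 1 := by
  rw [pow_mul, xy_sq, diag_pow]
  refine Model.ext ?_ ?_ ?_
  · show ((2*m : ℕ) : ZMod (2*m)) = 0
    exact ZMod.natCast_self _
  · show ((2*m : ℕ) : ZMod (2*n)) = 0
    obtain ⟨d, rfl⟩ := hnm
    rw [show 2*(n*d) = (2*n)*d from by ring, Nat.cast_mul, ZMod.natCast_self, zero_mul]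
  · show ((m : ℕ) : ZMod 2) = 0
    rw [← ZMod.natCast_mod, hm2]
    rfl

lemma commute_xy_ysq : Commute (xM * yM : Model m n) (yM ^ 2) := by
  refine commute_of _ _ ?_
  rw [yM_pow, xy_record]
  show B (1 : ZMod (2*n)) * A ((0 : ZMod (2*m))) = B (((2:ℕ) : ZMod (2*n))) * A (1 : ZMod (2*m))
  rw [A_zero, mul_zero, B_natCast, A_one, mul_one]
  decide

def Psi3 (hm2 : m % 2 = 0) (hnm : n ∣ m) :
    Multiplicative (ZMod (2*m)) × Multiplicative (ZMod n) × Multiplicative (ZMod 2) →*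
    Model m n :=
  tripleHom (xM * yM) (yM ^ 2) zM (xy_order hm2 hnm) yMsq_order zM_order commute_xy_ysq
    (commute_z_left _) (commute_z_left _)

lemma ysq_z_pow (j w : ℕ) :
    ((yM : Model m n) ^ 2) ^ j * zM ^ w = ⟨0, ((2*j : ℕ) : ZMod (2*n)), ((w:ℕ) : ZMod 2)⟩ := by
  rw [← pow_mul, yM_pow, zM_pow, mul_def]
  refine Model.ext ?_ ?_ ?_
  · show (0 : ZMod (2*m)) + 0 = 0; ring
  · show ((2*j : ℕ) : ZMod (2*n)) + 0 = ((2*j : ℕ) : ZMod (2*n)); rw [add_zero]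
  · show (0 : ZMod 2) + ((w:ℕ) : ZMod 2) + B (((2*j : ℕ)) : ZMod (2*n)) * A (0 : ZMod (2*m))
      = ((w:ℕ) : ZMod 2)
    rw [A_zero, mul_zero]
    ring

lemma Psi3_apply (hm2 : m % 2 = 0) (hnm : n ∣ m) (u : Multiplicative (ZMod (2*m))) (v : Multiplicative (ZMod n))
    (w : Multiplicative (ZMod 2)) :
    Psi3 hm2 hnm (u, v, w) = (xM * yM) ^ (Multiplicative.toAdd u).val *
      (⟨0, ((2 * (Multiplicative.toAdd v).val : ℕ) : ZMod (2*n)),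
        (((Multiplicative.toAdd w).val : ℕ) : ZMod 2)⟩ : Model m n) := by
  rw [Psi3, tripleHom_apply, ysq_z_pow]

lemma Psi3_mem (hm2 : m % 2 = 0) (hnm : n ∣ m) (p) : Psi3 hm2 hnm p ∈ (K3 : Subgroup (Model m n)) := by
  obtain ⟨u, v, w⟩ := p
  obtain ⟨γ, hγ⟩ := xy_pow (m := m) (n := n) (Multiplicative.toAdd u).val
  rw [Psi3_apply, hγ, mul_def, mem_K3]
  show A (((Multiplicative.toAdd u).val : ZMod (2*m)) + 0)
    = B (((Multiplicative.toAdd u).val : ZMod (2*n)) + ((2 * (Multiplicative.toAdd v).val : ℕ) : ZMod (2*n)))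
  rw [add_zero, A_natCast, B_add, B_natCast, B_natCast]
  push_cast
  rw [show ((2 : ZMod 2)) = 0 from rfl]
  ring

lemma Psi3_injective (hm2 : m % 2 = 0) (hnm : n ∣ m) : Function.Injective (Psi3 hm2 hnm : _ →* Model m n) := by
  rintro ⟨u, v, w⟩ ⟨u', v', w'⟩ h
  rw [Psi3_apply, Psi3_apply] at h
  obtain ⟨γ, hγ⟩ := xy_pow (m := m) (n := n) (Multiplicative.toAdd u).val
  obtain ⟨γ', hγ'⟩ := xy_pow (m := m) (n := n) (Multiplicative.toAdd u').val
  have hu : u = u' := by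
    have ha := congrArg Model.a h
    rw [hγ, hγ', mul_def, mul_def] at ha
    have : (((Multiplicative.toAdd u).val : ℕ) : ZMod (2*m)) + 0
        = (((Multiplicative.toAdd u').val : ℕ) : ZMod (2*m)) + 0 := ha
    rw [add_zero, add_zero] at this
    exact Multiplicative.toAdd.injective (val_inj_of_natCast_eq this)
  rw [hu] at h
  have h2 := mul_left_cancel h
  rw [Model.mk.injEq] at h2
  obtain ⟨-, hb, hc⟩ := h2
  have hv : v = v' := Multiplicative.toAdd.injective (val_cancel_two hb)
  have hw : w = w' := Multiplicative.toAdd.injective (val_inj_of_natCast_eq hc)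
  rw [hu, hv, hw]

lemma Psi3_surjective_onto (hm2 : m % 2 = 0) (hnm : n ∣ m) :
    ∀ g ∈ (K3 : Subgroup (Model m n)), ∃ p, Psi3 hm2 hnm p = g := by
  rintro ⟨a, b, c⟩ hg
  rw [mem_K3] at hg
  obtain ⟨γ, hγ⟩ := xy_pow (m := m) (n := n) a.val
  set t : ZMod (2*n) := b - ((a.val : ℕ) : ZMod (2*n)) with ht
  have hBt : B t = 0 := by
    rw [ht, show B (b - ((a.val : ℕ) : ZMod (2*n))) = B b - B ((a.val : ℕ) : ZMod (2*n))
      from map_sub (ZMod.castHom (dvd_mul_right 2 n) (ZMod 2)) _ _, B_natCast, natCast_val_A, ← hg]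
    ring
  have heven : t.val % 2 = 0 := by
    have hval : ((t.val : ℕ) : ZMod 2) = 0 := by rw [natCast_val_B]; exact hBt
    rcases Nat.mod_two_eq_zero_or_one t.val with h | h
    · exact h
    · exfalso
      rw [← ZMod.natCast_mod, h] at hval
      simp at hval
  refine ⟨(Multiplicative.ofAdd a, Multiplicative.ofAdd ((t.val / 2 : ℕ) : ZMod n),
    Multiplicative.ofAdd (c - γ)), ?_⟩
  rw [Psi3_apply]
  have h2v : ((2 * (((t.val / 2 : ℕ) : ZMod n)).val : ℕ) : ZMod (2*n)) = t := by
    have : ((t.val / 2 : ℕ) : ZMod n).val = (t.val / 2) % n := ZMod.val_natCast _ _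
    rw [this, ← Nat.mul_mod_mul_left, ZMod.natCast_mod,
      Nat.mul_div_cancel' (Nat.dvd_of_mod_eq_zero heven), natCast_val_self]
  rw [toAdd_ofAdd, toAdd_ofAdd, toAdd_ofAdd, h2v, hγ, mul_def]
  refine Model.ext ?_ ?_ ?_
  · show ((a.val : ℕ) : ZMod (2*m)) + 0 = a
    rw [add_zero, natCast_val_self]
  · show ((a.val : ℕ) : ZMod (2*n)) + t = b
    rw [ht]; ring
  · show γ + (((c - γ).val : ℕ) : ZMod 2) + B ((a.val : ℕ) : ZMod (2*n)) * A (0 : ZMod (2*m)) = c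
    rw [natCast_val_self, A_zero, mul_zero]
    ring

lemma closure3_eq : Subgroup.closure {(xM:Model m n) * yM, xM^2, zM}
    = (K3 : Subgroup (Model m n)) := by
  apply le_antisymm
  · rw [Subgroup.closure_le]
    rintro g (rfl | rfl | rfl)
    · rw [SetLike.mem_coe, mem_K3, xy_record]
      show A (1 : ZMod (2*m)) = B (1 : ZMod (2*n))
      rw [A_one, B_one]
    · rw [SetLike.mem_coe, mem_K3, pow_two]
      show A ((1:ZMod (2*m)) + 1) = B ((0:ZMod (2*n)) + 0)
      rw [A_add, A_one, add_zero, B_zero]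
      decide
    · rw [SetLike.mem_coe, mem_K3]
      show A (0 : ZMod (2*m)) = B (0 : ZMod (2*n))
      rw [A_zero, B_zero]
  · rintro ⟨a, b, c⟩ hg
    rw [mem_K3] at hg
    obtain ⟨γ, hγ⟩ := xy_pow (m := m) (n := n) b.val
    set t : ZMod (2*m) := a - ((b.val : ℕ) : ZMod (2*m)) with ht
    have hAt : A t = 0 := by
      rw [ht, show A (a - ((b.val : ℕ) : ZMod (2*m))) = A a - A ((b.val : ℕ) : ZMod (2*m))
        from map_sub (ZMod.castHom (dvd_mul_right 2 m) (ZMod 2)) _ _, A_natCast, natCast_val_B, hg]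
      ring
    have heven : t.val % 2 = 0 := by
      have hval : ((t.val : ℕ) : ZMod 2) = 0 := by rw [natCast_val_A]; exact hAt
      rcases Nat.mod_two_eq_zero_or_one t.val with h | h
      · exact h
      · exfalso
        rw [← ZMod.natCast_mod, h] at hval
        simp at hval
    have h2k : ((2 * (t.val / 2) : ℕ) : ZMod (2*m)) = t := by
      rw [Nat.mul_div_cancel' (Nat.dvd_of_mod_eq_zero heven), natCast_val_self]
    have hxy : (xM * yM : Model m n) ∈ Subgroup.closure {(xM:Model m n) * yM, xM^2, zM} :=
      Subgroup.subset_closure (by simp)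
    have hxsq : ((xM:Model m n)^2) ∈ Subgroup.closure {(xM:Model m n) * yM, xM^2, zM} :=
      Subgroup.subset_closure (by simp)
    have hzc : (zM : Model m n) ∈ Subgroup.closure {(xM:Model m n) * yM, xM^2, zM} :=
      Subgroup.subset_closure (by simp)
    have hmem : ((xM * yM : Model m n) ^ b.val * ((xM^2) ^ (t.val / 2)))
        * zM ^ ((c - γ).val) ∈ Subgroup.closure {(xM:Model m n) * yM, xM^2, zM} :=
      mul_mem (mul_mem (pow_mem hxy _) (pow_mem hxsq _)) (pow_mem hzc _)
    have heq : ((xM * yM : Model m n) ^ b.val * ((xM^2) ^ (t.val / 2)))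
        * zM ^ ((c - γ).val) = ⟨a, b, c⟩ := by
      rw [hγ, ← pow_mul, xM_pow, zM_pow, mul_def, mul_def]
      refine Model.ext ?_ ?_ ?_
      · show ((b.val : ℕ) : ZMod (2*m)) + ((2 * (t.val/2) : ℕ) : ZMod (2*m)) + 0 = a
        rw [h2k, add_zero, ht]; ring
      · show ((b.val : ℕ) : ZMod (2*n)) + 0 + 0 = b
        rw [add_zero, add_zero, natCast_val_self]
      · show γ + 0 + B ((b.val : ℕ) : ZMod (2*n)) * A ((2 * (t.val/2) : ℕ) : ZMod (2*m))
          + (((c - γ).val : ℕ) : ZMod 2)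
          + B (((b.val : ℕ) : ZMod (2*n)) + 0) * A (0 : ZMod (2*m)) = c
        rw [A_natCast, A_zero, mul_zero, natCast_val_self]
        push_cast
        rw [show ((2 : ZMod 2)) = 0 from rfl]
        ring_nf
        rw [natCast_val_self]
        ring
    rw [← heq] at *
    exact hmem

noncomputable def K3_iso (hm2 : m % 2 = 0) (hnm : n ∣ m) : (K3 : Subgroup (Model m n)) ≃*
    Multiplicative (ZMod (2*m)) × Multiplicative (ZMod n) × Multiplicative (ZMod 2) :=
  (MulEquiv.ofBijective ((Psi3 hm2 hnm : _ →* Model m n).codRestrict K3 (Psi3_mem hm2 hnm))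
    ⟨fun p q h => Psi3_injective hm2 hnm (congrArg Subtype.val h),
     fun g => ((Psi3_surjective_onto hm2 hnm g.1 g.2).imp (fun p hp => Subtype.ext hp))⟩).symm

end Iso
end Model
end Redei

namespace Redei
open Model

section Bridge

variable {r s m n : ℕ} [NeZero m] [NeZero n]

/-- the target generators in the model -/
def fGen : Fin 2 → Model m n := fun i => if i = 0 then xM else yM

lemma lift_gx : FreeGroup.lift (fGen (m := m) (n := n)) gx = xM := by
  rw [gx, FreeGroup.lift_apply_of]; rfl
lemma lift_gy : FreeGroup.lift (fGen (m := m) (n := n)) gy = yM := by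
  rw [gy, FreeGroup.lift_apply_of]; rfl

lemma hrels (hm : 2^r = 2*m) (hn : 2^s = 2*n) :
    ∀ ρ ∈ redeiRels r s, FreeGroup.lift (fGen (m := m) (n := n)) ρ = 1 := by
  intro ρ hρ
  simp only [redeiRels, Set.mem_insert_iff, Set.mem_singleton_iff] at hρ
  rcases hρ with rfl | rfl | rfl | rfl | rfl
  · rw [map_pow, lift_gx, hm]; exact xM_order
  · rw [map_pow, lift_gy, hn]; exact yM_order
  · rw [map_pow, map_commutatorElement, lift_gx, lift_gy, commutator_xy]; exact zM_order
  · rw [map_commutatorElement, map_commutatorElement, lift_gx, lift_gy, commutator_xy]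
    exact commutatorElement_eq_one_iff_commute.mpr (commute_z_left xM)
  · rw [map_commutatorElement, map_commutatorElement, lift_gx, lift_gy, commutator_xy]
    exact commutatorElement_eq_one_iff_commute.mpr (commute_z_left yM)

/-- the homomorphism from the Rédei group to the model -/
def phi (hm : 2^r = 2*m) (hn : 2^s = 2*n) : RedeiGroup r s →* Model m n :=
  PresentedGroup.toGroup (hrels hm hn)

@[simp] lemma phi_x (hm : 2^r = 2*m) (hn : 2^s = 2*n) : phi hm hn (Dx r s) = xM :=
  PresentedGroup.toGroup.of (hrels hm hn)
@[simp] lemma phi_y (hm : 2^r = 2*m) (hn : 2^s = 2*n) : phi hm hn (Dy r s) = yM :=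
  PresentedGroup.toGroup.of (hrels hm hn)
@[simp] lemma phi_z (hm : 2^r = 2*m) (hn : 2^s = 2*n) : phi hm hn (Dz r s) = zM := by
  rw [Dz, map_commutatorElement, phi_x, phi_y, commutator_xy]

/-- relations hold in the Rédei group -/
lemma rel_holds {ρ : FreeGroup (Fin 2)} (hρ : ρ ∈ redeiRels r s) :
    PresentedGroup.mk (redeiRels r s) ρ = 1 :=
  (QuotientGroup.eq_one_iff _).mpr (Subgroup.subset_normalClosure hρ)

lemma mk_gx : PresentedGroup.mk (redeiRels r s) gx = Dx r s := rfl
lemma mk_gy : PresentedGroup.mk (redeiRels r s) gy = Dy r s := rfl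

lemma RX : (Dx r s) ^ (2^r) = 1 := by
  have := rel_holds (r := r) (s := s) (Set.mem_insert _ _)
  rwa [map_pow, mk_gx] at this
lemma RY : (Dy r s) ^ (2^s) = 1 := by
  have := rel_holds (r := r) (s := s)
    (Set.mem_insert_of_mem _ (Set.mem_insert _ _))
  rwa [map_pow, mk_gy] at this
lemma RZ2 : (Dz r s) ^ 2 = 1 := by
  have := rel_holds (r := r) (s := s)
    (Set.mem_insert_of_mem _ (Set.mem_insert_of_mem _ (Set.mem_insert _ _)))
  rwa [map_pow, map_commutatorElement, mk_gx, mk_gy] at this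
lemma hXZ : Commute (Dx r s) (Dz r s) := by
  have := rel_holds (r := r) (s := s) (Set.mem_insert_of_mem _ (Set.mem_insert_of_mem _
    (Set.mem_insert_of_mem _ (Set.mem_insert _ _))))
  rw [map_commutatorElement, map_commutatorElement, mk_gx, mk_gy] at this
  exact commutatorElement_eq_one_iff_commute.mp this
lemma hYZ : Commute (Dy r s) (Dz r s) := by
  have := rel_holds (r := r) (s := s) (Set.mem_insert_of_mem _ (Set.mem_insert_of_mem _
    (Set.mem_insert_of_mem _ (Set.mem_insert_of_mem _ rfl))))
  rw [map_commutatorElement, map_commutatorElement, mk_gx, mk_gy] at this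
  exact commutatorElement_eq_one_iff_commute.mp this

/-- subgroup of elements commuting with a given element -/
def commuteSub {G : Type*} [Group G] (z : G) : Subgroup G where
  carrier := {g | Commute g z}
  one_mem' := Commute.one_left _
  mul_mem' := fun h1 h2 => h1.mul_left h2
  inv_mem' := fun h => h.inv_left

lemma z_central (g : RedeiGroup r s) : Commute g (Dz r s) :=
  PresentedGroup.generated_by _ (commuteSub (Dz r s))
    (fun j => by fin_cases j
                 · exact hXZ
                 · exact hYZ) g

lemma L_yx : Dy r s * Dx r s = Dx r s * Dy r s * Dz r s := by
  have h1 : Dx r s * Dy r s = Dz r s * (Dy r s * Dx r s) := by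
    rw [show Dz r s = ⁅Dx r s, Dy r s⁆ from rfl, commutatorElement_def]
    group
  rw [(z_central (Dx r s * Dy r s)).eq, h1, ← mul_assoc, ← pow_two, RZ2, one_mul]

lemma L1 (b : ℕ) : (Dy r s)^b * Dx r s = Dx r s * (Dy r s)^b * (Dz r s)^b := by
  induction b with
  | zero => simp
  | succ b ih =>
    calc (Dy r s)^(b+1) * Dx r s = (Dy r s)^b * (Dy r s * Dx r s) := by
          rw [pow_succ, mul_assoc]
      _ = (Dy r s)^b * (Dx r s * Dy r s * Dz r s) := by rw [L_yx]
      _ = ((Dy r s)^b * Dx r s) * (Dy r s * Dz r s) := by group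
      _ = (Dx r s * (Dy r s)^b * (Dz r s)^b) * (Dy r s * Dz r s) := by rw [ih]
      _ = Dx r s * ((Dy r s)^b * ((Dz r s)^b * Dy r s)) * Dz r s := by group
      _ = Dx r s * ((Dy r s)^b * (Dy r s * (Dz r s)^b)) * Dz r s := by
          rw [((hYZ (r := r) (s := s)).symm.pow_left b).eq]
      _ = Dx r s * (Dy r s)^(b+1) * (Dz r s)^(b+1) := by rw [pow_succ, pow_succ]; group

lemma L2 (a b : ℕ) : (Dy r s)^b * (Dx r s)^a = (Dx r s)^a * (Dy r s)^b * (Dz r s)^(a*b) := by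
  induction a with
  | zero => simp
  | succ a ih =>
    calc (Dy r s)^b * (Dx r s)^(a+1) = ((Dy r s)^b * (Dx r s)^a) * Dx r s := by
          rw [pow_succ, mul_assoc]
      _ = ((Dx r s)^a * (Dy r s)^b * (Dz r s)^(a*b)) * Dx r s := by rw [ih]
      _ = (Dx r s)^a * ((Dy r s)^b * ((Dz r s)^(a*b) * Dx r s)) := by group
      _ = (Dx r s)^a * ((Dy r s)^b * (Dx r s * (Dz r s)^(a*b))) := by
          rw [((z_central (Dx r s)).symm.pow_left (a*b)).eq]
      _ = (Dx r s)^a * ((Dy r s)^b * Dx r s) * (Dz r s)^(a*b) := by group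
      _ = (Dx r s)^a * (Dx r s * (Dy r s)^b * (Dz r s)^b) * (Dz r s)^(a*b) := by rw [L1]
      _ = (Dx r s)^(a+1) * (Dy r s)^b * ((Dz r s)^b * (Dz r s)^(a*b)) := by
          rw [pow_succ]; group
      _ = (Dx r s)^(a+1) * (Dy r s)^b * (Dz r s)^((a+1)*b) := by
          rw [← pow_add]
          congr 1
          ring

lemma key (a b c a' b' c' : ℕ) :
    ((Dx r s)^a * (Dy r s)^b * (Dz r s)^c) * ((Dx r s)^a' * (Dy r s)^b' * (Dz r s)^c')
      = (Dx r s)^(a+a') * (Dy r s)^(b+b') * (Dz r s)^(a'*b + c + c') := by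
  calc ((Dx r s)^a * (Dy r s)^b * (Dz r s)^c) * ((Dx r s)^a' * (Dy r s)^b' * (Dz r s)^c')
      = (Dx r s)^a * (Dy r s)^b * ((Dz r s)^c * ((Dx r s)^a' * (Dy r s)^b')) * (Dz r s)^c' := by
        group
    _ = (Dx r s)^a * (Dy r s)^b * (((Dx r s)^a' * (Dy r s)^b') * (Dz r s)^c) * (Dz r s)^c' := by
        rw [((z_central ((Dx r s)^a' * (Dy r s)^b')).pow_right c).symm.eq]
    _ = (Dx r s)^a * ((Dy r s)^b * (Dx r s)^a') * (Dy r s)^b' * ((Dz r s)^c * (Dz r s)^c') := by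
        group
    _ = (Dx r s)^a * ((Dx r s)^a' * (Dy r s)^b * (Dz r s)^(a'*b)) * (Dy r s)^b'
          * ((Dz r s)^c * (Dz r s)^c') := by rw [L2]
    _ = (Dx r s)^(a+a') * (Dy r s)^b * ((Dz r s)^(a'*b) * (Dy r s)^b')
          * ((Dz r s)^c * (Dz r s)^c') := by rw [pow_add]; group
    _ = (Dx r s)^(a+a') * (Dy r s)^b * ((Dy r s)^b' * (Dz r s)^(a'*b))
          * ((Dz r s)^c * (Dz r s)^c') := by
        rw [(((z_central (Dy r s)).pow_left b').symm.pow_left (a'*b)).eq]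
    _ = (Dx r s)^(a+a') * (Dy r s)^(b+b') * ((Dz r s)^(a'*b) * (Dz r s)^c * (Dz r s)^c') := by
        rw [pow_add]; group
    _ = (Dx r s)^(a+a') * (Dy r s)^(b+b') * (Dz r s)^(a'*b + c + c') := by
        rw [← pow_add, ← pow_add]

lemma pow_eq_of_zmod {G : Type*} [Group G] {N : ℕ} [NeZero N] {g : G} (h : g ^ N = 1)
    {k l : ℕ} (hkl : (k : ZMod N) = (l : ZMod N)) : g ^ k = g ^ l := by
  rw [← pow_mod_eq h k, ← pow_mod_eq h l, ← ZMod.val_natCast N k, ← ZMod.val_natCast N l, hkl]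

/-- the inverse homomorphism -/
def theta (hm : 2^r = 2*m) (hn : 2^s = 2*n) : Model m n →* RedeiGroup r s where
  toFun u := (Dx r s)^(u.a.val) * (Dy r s)^(u.b.val) * (Dz r s)^(u.c.val)
  map_one' := by simp
  map_mul' u v := by
    show (Dx r s)^((u.a+v.a).val) * (Dy r s)^((u.b+v.b).val)
        * (Dz r s)^((u.c+v.c+B u.b * A v.a).val) = _
    rw [key]
    have hX : (Dx r s) ^ (2*m) = 1 := by rw [← hm]; exact RX
    have hY : (Dy r s) ^ (2*n) = 1 := by rw [← hn]; exact RY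
    have hZ : (Dz r s) ^ 2 = 1 := RZ2
    have e1 : (Dx r s)^((u.a+v.a).val) = (Dx r s)^(u.a.val + v.a.val) :=
      pow_eq_of_zmod hX (by push_cast [natCast_val_self]; rfl)
    have e2 : (Dy r s)^((u.b+v.b).val) = (Dy r s)^(u.b.val + v.b.val) :=
      pow_eq_of_zmod hY (by push_cast [natCast_val_self]; rfl)
    have e3 : (Dz r s)^((u.c+v.c+B u.b * A v.a).val)
        = (Dz r s)^(v.a.val * u.b.val + u.c.val + v.c.val) :=
      pow_eq_of_zmod hZ (by
        rw [natCast_val_self]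
        push_cast
        rw [natCast_val_self, natCast_val_self, natCast_val_A, natCast_val_B]
        ring)
    rw [e1, e2, e3]

lemma phi_theta (hm : 2^r = 2*m) (hn : 2^s = 2*n) (u : Model m n) :
    phi hm hn (theta hm hn u) = u := by
  show phi hm hn ((Dx r s)^(u.a.val) * (Dy r s)^(u.b.val) * (Dz r s)^(u.c.val)) = u
  rw [map_mul, map_mul, map_pow, map_pow, map_pow, phi_x, phi_y, phi_z]
  exact (normal_form u).symm

lemma theta_surjective (hm : 2^r = 2*m) (hn : 2^s = 2*n) :
    Function.Surjective (theta hm hn) := by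
  have h2m : (1 : ZMod (2*m)).val = 1 := by
    haveI : Fact (1 < 2*m) := ⟨by have := NeZero.ne m; omega⟩
    exact ZMod.val_one _
  have h2n : (1 : ZMod (2*n)).val = 1 := by
    haveI : Fact (1 < 2*n) := ⟨by have := NeZero.ne n; omega⟩
    exact ZMod.val_one _
  intro g
  have : ∀ x : RedeiGroup r s, x ∈ (theta hm hn).range := by
    intro x
    refine PresentedGroup.generated_by _ _ (fun j => ?_) x
    fin_cases j
    · refine ⟨⟨1, 0, 0⟩, ?_⟩
      show (Dx r s)^((1 : ZMod (2*m)).val) * (Dy r s)^((0 : ZMod (2*n)).val)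
        * (Dz r s)^((0 : ZMod 2).val) = Dx r s
      rw [h2m, ZMod.val_zero, ZMod.val_zero]
      group
    · refine ⟨⟨0, 1, 0⟩, ?_⟩
      show (Dx r s)^((0 : ZMod (2*m)).val) * (Dy r s)^((1 : ZMod (2*n)).val)
        * (Dz r s)^((0 : ZMod 2).val) = Dy r s
      rw [h2n, ZMod.val_zero, ZMod.val_zero]
      group
  exact this g

/-- the Rédei group is isomorphic to the model -/
noncomputable def redeiEquiv (hm : 2^r = 2*m) (hn : 2^s = 2*n) :
    RedeiGroup r s ≃* Model m n := by
  refine MulEquiv.ofBijective (phi hm hn) ⟨?_, ?_⟩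
  · intro g g' hgg
    obtain ⟨u, rfl⟩ := theta_surjective hm hn g
    obtain ⟨u', rfl⟩ := theta_surjective hm hn g'
    rw [phi_theta, phi_theta] at hgg
    rw [hgg]
  · intro v
    exact ⟨theta hm hn v, phi_theta hm hn v⟩

@[simp] lemma redeiEquiv_x (hm : 2^r = 2*m) (hn : 2^s = 2*n) :
    redeiEquiv hm hn (Dx r s) = xM := phi_x hm hn
@[simp] lemma redeiEquiv_y (hm : 2^r = 2*m) (hn : 2^s = 2*n) :
    redeiEquiv hm hn (Dy r s) = yM := phi_y hm hn
@[simp] lemma redeiEquiv_z (hm : 2^r = 2*m) (hn : 2^s = 2*n) :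
    redeiEquiv hm hn (Dz r s) = zM := phi_z hm hn

end Bridge

/-- subgroup lattices of isomorphic groups are order isomorphic -/
def subgroupOrderIso {G H : Type*} [Group G] [Group H] (e : G ≃* H) :
    Subgroup G ≃o Subgroup H where
  toFun K := K.map e.toMonoidHom
  invFun K := K.comap e.toMonoidHom
  left_inv K := Subgroup.comap_map_eq_self_of_injective e.injective K
  right_inv K := Subgroup.map_comap_eq_self_of_surjective e.surjective K
  map_rel_iff' := Subgroup.map_le_map_iff_of_injective e.injective

end Redei

namespace Redei
section Final

variable {r s m n : ℕ} [NeZero m] [NeZero n]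

open Model

lemma map_closure1 (hm : 2^r = 2*m) (hn : 2^s = 2*n) :
    Subgroup.map (redeiEquiv hm hn : RedeiGroup r s →* Model m n)
      (Subgroup.closure {(Dx r s)^2, Dy r s, Dz r s}) = Model.K1 := by
  rw [MonoidHom.map_closure, ← Model.closure1_eq]
  congr 1
  rw [Set.image_insert_eq, Set.image_insert_eq, Set.image_singleton, map_pow]
  show ({(redeiEquiv hm hn (Dx r s))^2, redeiEquiv hm hn (Dy r s), redeiEquiv hm hn (Dz r s)}
    : Set (Model m n)) = _
  rw [redeiEquiv_x, redeiEquiv_y, redeiEquiv_z]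

lemma map_closure2 (hm : 2^r = 2*m) (hn : 2^s = 2*n) :
    Subgroup.map (redeiEquiv hm hn : RedeiGroup r s →* Model m n)
      (Subgroup.closure {Dx r s, (Dy r s)^2, Dz r s}) = Model.K2 := by
  rw [MonoidHom.map_closure, ← Model.closure2_eq]
  congr 1
  rw [Set.image_insert_eq, Set.image_insert_eq, Set.image_singleton, map_pow]
  show ({redeiEquiv hm hn (Dx r s), (redeiEquiv hm hn (Dy r s))^2, redeiEquiv hm hn (Dz r s)}
    : Set (Model m n)) = _
  rw [redeiEquiv_x, redeiEquiv_y, redeiEquiv_z]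

lemma map_closure3 (hm : 2^r = 2*m) (hn : 2^s = 2*n) :
    Subgroup.map (redeiEquiv hm hn : RedeiGroup r s →* Model m n)
      (Subgroup.closure {Dx r s * Dy r s, (Dx r s)^2, Dz r s}) = Model.K3 := by
  rw [MonoidHom.map_closure, ← Model.closure3_eq]
  congr 1
  rw [Set.image_insert_eq, Set.image_insert_eq, Set.image_singleton, map_pow, map_mul]
  show ({redeiEquiv hm hn (Dx r s) * redeiEquiv hm hn (Dy r s),
    (redeiEquiv hm hn (Dx r s))^2, redeiEquiv hm hn (Dz r s)} : Set (Model m n)) = _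
  rw [redeiEquiv_x, redeiEquiv_y, redeiEquiv_z]

lemma coatom_iff (hm : 2^r = 2*m) (hn : 2^s = 2*n) (M : Subgroup (RedeiGroup r s)) :
    IsCoatom M ↔
      (M = Subgroup.closure {(Dx r s) ^ 2, Dy r s, Dz r s} ∨
       M = Subgroup.closure {Dx r s, (Dy r s) ^ 2, Dz r s} ∨
       M = Subgroup.closure {Dx r s * Dy r s, (Dx r s) ^ 2, Dz r s}) := by
  have hco : IsCoatom M ↔
      IsCoatom (Subgroup.map (redeiEquiv hm hn : RedeiGroup r s →* Model m n) M) :=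
    ((subgroupOrderIso (redeiEquiv hm hn)).isCoatom_iff M).symm
  have inj : Function.Injective
      (Subgroup.map (redeiEquiv hm hn : RedeiGroup r s →* Model m n)) :=
    Subgroup.map_injective (redeiEquiv hm hn).injective
  have h1 : M = Subgroup.closure {(Dx r s) ^ 2, Dy r s, Dz r s} ↔
      Subgroup.map (redeiEquiv hm hn : RedeiGroup r s →* Model m n) M = Model.K1 := by
    rw [← map_closure1 hm hn]; exact inj.eq_iff.symm
  have h2 : M = Subgroup.closure {Dx r s, (Dy r s) ^ 2, Dz r s} ↔
      Subgroup.map (redeiEquiv hm hn : RedeiGroup r s →* Model m n) M = Model.K2 := by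
    rw [← map_closure2 hm hn]; exact inj.eq_iff.symm
  have h3 : M = Subgroup.closure {Dx r s * Dy r s, (Dx r s) ^ 2, Dz r s} ↔
      Subgroup.map (redeiEquiv hm hn : RedeiGroup r s →* Model m n) M = Model.K3 := by
    rw [← map_closure3 hm hn]; exact inj.eq_iff.symm
  rw [hco, Model.isCoatom_iff_model hm.symm hn.symm, h1, h2, h3]

noncomputable def iso1 (hm : 2^r = 2*m) (hn : 2^s = 2*n) :
    (Subgroup.closure {(Dx r s) ^ 2, Dy r s, Dz r s}) ≃*
      Multiplicative (ZMod m) × Multiplicative (ZMod (2*n)) × Multiplicative (ZMod 2) :=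
  (((redeiEquiv hm hn).subgroupMap _).trans
    (MulEquiv.subgroupCongr (map_closure1 hm hn))).trans Model.K1_iso

noncomputable def iso2 (hm : 2^r = 2*m) (hn : 2^s = 2*n) :
    (Subgroup.closure {Dx r s, (Dy r s) ^ 2, Dz r s}) ≃*
      Multiplicative (ZMod (2*m)) × Multiplicative (ZMod n) × Multiplicative (ZMod 2) :=
  (((redeiEquiv hm hn).subgroupMap _).trans
    (MulEquiv.subgroupCongr (map_closure2 hm hn))).trans Model.K2_iso

noncomputable def iso3 (hm : 2^r = 2*m) (hn : 2^s = 2*n) (hm2 : m % 2 = 0) (hnm : n ∣ m) :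
    (Subgroup.closure {Dx r s * Dy r s, (Dx r s) ^ 2, Dz r s}) ≃*
      Multiplicative (ZMod (2*m)) × Multiplicative (ZMod n) × Multiplicative (ZMod 2) :=
  (((redeiEquiv hm hn).subgroupMap _).trans
    (MulEquiv.subgroupCongr (map_closure3 hm hn))).trans (Model.K3_iso hm2 hnm)

end Final
end Redei


theorem stmt4 (r s : ℕ) (hr : 2 ≤ r) (hs : 1 ≤ s) (hrs : s ≤ r) :
    (∀ M : Subgroup (RedeiGroup r s), IsCoatom M ↔
      (M = Subgroup.closure {(Dx r s) ^ 2, Dy r s, Dz r s} ∨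
       M = Subgroup.closure {Dx r s, (Dy r s) ^ 2, Dz r s} ∨
       M = Subgroup.closure {Dx r s * Dy r s, (Dx r s) ^ 2, Dz r s})) ∧
    Nonempty ((Subgroup.closure {(Dx r s) ^ 2, Dy r s, Dz r s}) ≃*
      Multiplicative (ZMod (2 ^ (r - 1))) × Multiplicative (ZMod (2 ^ s)) ×
        Multiplicative (ZMod 2)) ∧
    Nonempty ((Subgroup.closure {Dx r s, (Dy r s) ^ 2, Dz r s}) ≃*
      Multiplicative (ZMod (2 ^ r)) × Multiplicative (ZMod (2 ^ (s - 1))) ×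
        Multiplicative (ZMod 2)) ∧
    Nonempty ((Subgroup.closure {Dx r s * Dy r s, (Dx r s) ^ 2, Dz r s}) ≃*
      Multiplicative (ZMod (2 ^ r)) × Multiplicative (ZMod (2 ^ (s - 1))) ×
        Multiplicative (ZMod 2)) := by
  have hm : 2^r = 2 * 2^(r-1) := by
    conv_lhs => rw [show r = (r-1)+1 by omega]
    rw [pow_succ']
  have hn : 2^s = 2 * 2^(s-1) := by
    conv_lhs => rw [show s = (s-1)+1 by omega]
    rw [pow_succ']
  haveI : NeZero (2^(r-1)) := ⟨pow_ne_zero _ two_ne_zero⟩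
  haveI : NeZero (2^(s-1)) := ⟨pow_ne_zero _ two_ne_zero⟩
  have hm2 : (2^(r-1)) % 2 = 0 := by
    rw [show r-1 = (r-2)+1 by omega, pow_succ']
    exact Nat.mul_mod_right 2 _
  have hnm : (2^(s-1)) ∣ (2^(r-1)) := pow_dvd_pow 2 (by omega)
  refine ⟨fun M => Redei.coatom_iff hm hn M, ?_, ?_, ?_⟩
  · rw [hn]
    exact ⟨Redei.iso1 hm hn⟩
  · rw [hm]
    exact ⟨Redei.iso2 hm hn⟩
  · rw [hm]
    exact ⟨Redei.iso3 hm hn hm2 hnm⟩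
end

section
/- Let P = C_{2^(n₁)} × ... × C_{2^(n_k)} be a finite direct product of cyclic 2-groups with n₁,...,n_k ≥ 1. Then Aut(P) is a 2-group if and only if the exponents n₁,...,n_k are pairwise distinct. -/
-- parity map
def par2 {e : ℕ} (he : e ≠ 0) : ZMod (2 ^ e) →+* ZMod 2 :=
  ZMod.castHom (dvd_pow_self 2 he) (ZMod 2)

lemma par2_natCast {e : ℕ} (he : e ≠ 0) (c : ℕ) :
    par2 he (c : ZMod (2 ^ e)) = (c : ZMod 2) := map_natCast _ _

lemma par2_eq_zero_iff {e : ℕ} (he : e ≠ 0) (x : ZMod (2 ^ e)) :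
    par2 he x = 0 ↔ 2 ∣ x.val := by
  haveI : NeZero (2 ^ e) := ⟨pow_ne_zero _ two_ne_zero⟩
  have h1 : par2 he x = ((x.val : ℕ) : ZMod 2) := by
    conv_lhs => rw [← ZMod.natCast_zmod_val x]
    exact par2_natCast he _
  rw [h1, ZMod.natCast_eq_zero_iff]

lemma par2_kill {e s : ℕ} (hs : s < e) (x : ZMod (2 ^ e)) (hx : 2 ^ s • x = 0) :
    par2 (by omega : e ≠ 0) x = 0 := by
  haveI : NeZero (2 ^ e) := ⟨pow_ne_zero _ two_ne_zero⟩
  have hx' : ((2 ^ s : ℕ) : ZMod (2 ^ e)) * x = 0 := by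
    rw [← nsmul_eq_mul]; exact_mod_cast hx
  have h0 : ((2 ^ s * x.val : ℕ) : ZMod (2 ^ e)) = 0 := by
    push_cast [ZMod.natCast_zmod_val]
    exact_mod_cast hx'
  have hdvd : 2 ^ e ∣ 2 ^ s * x.val := (ZMod.natCast_eq_zero_iff _ _).mp h0
  have h2 : (2 : ℕ) ^ s * 2 ^ (e - s) ∣ 2 ^ s * x.val := by
    rwa [← pow_add, Nat.add_sub_cancel' hs.le]
  have h3 : (2 : ℕ) ^ (e - s) ∣ x.val :=
    (Nat.mul_dvd_mul_iff_left (pow_pos two_pos s)).mp h2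
  rw [par2_eq_zero_iff]
  exact dvd_trans (dvd_pow_self 2 (by omega)) h3

lemma par2_half {e : ℕ} (he : e ≠ 0) (x : ZMod (2 ^ e)) (hx : par2 he x = 0) :
    ∃ y : ZMod (2 ^ e), x = y + y := by
  haveI : NeZero (2 ^ e) := ⟨pow_ne_zero _ two_ne_zero⟩
  rw [par2_eq_zero_iff] at hx
  obtain ⟨c, hc⟩ := hx
  refine ⟨(c : ZMod (2 ^ e)), ?_⟩
  calc x = ((x.val : ℕ) : ZMod (2 ^ e)) := (ZMod.natCast_zmod_val x).symm
    _ = ((c + c : ℕ) : ZMod (2 ^ e)) := by rw [hc]; ring_nf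
    _ = (c : ZMod (2 ^ e)) + c := by push_cast; ring

lemma aux_choose (M s t : ℕ) (ht : 0 < t) (hts : t < 2 ^ s) (hsM : s ≤ M) :
    2 ^ (M - s) ∣ Nat.choose (2 ^ M) t := by
  have hkey : 2 ^ M ∣ Nat.choose (2 ^ M) t * t := by
    have h := Nat.add_one_mul_choose_eq (2 ^ M - 1) (t - 1)
    have h2 : (2 ^ M - 1).succ = 2 ^ M := by
      have : 0 < 2 ^ M := pow_pos two_pos M
      omega
    have h3 : (t - 1).succ = t := by omega
    simp only [Nat.succ_eq_add_one] at h2 h3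
    rw [h2, h3] at h
    exact ⟨Nat.choose (2 ^ M - 1) (t - 1), by rw [← h]⟩
  set v := t.factorization 2 with hv
  have hproj : 2 ^ v * ordCompl[2] t = t := Nat.ordProj_mul_ordCompl_eq_self t 2
  have hvle : 2 ^ v ≤ t := Nat.ordProj_le 2 ht.ne'
  have hvs : v < s := by
    by_contra hcon
    exact absurd (lt_of_le_of_lt hvle hts) (not_lt.mpr (Nat.pow_le_pow_right two_pos (by omega)))
  have hcop : Nat.Coprime 2 (ordCompl[2] t) := Nat.coprime_ordCompl Nat.prime_two ht.ne'
  have h4 : 2 ^ v * 2 ^ (M - v) ∣ 2 ^ v * (Nat.choose (2 ^ M) t * ordCompl[2] t) := by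
    rw [← pow_add, Nat.add_sub_cancel' (by omega : v ≤ M)]
    have heq : 2 ^ v * (Nat.choose (2 ^ M) t * ordCompl[2] t)
        = Nat.choose (2 ^ M) t * t := by
      rw [show 2 ^ v * (Nat.choose (2 ^ M) t * ordCompl[2] t)
          = Nat.choose (2 ^ M) t * (2 ^ v * ordCompl[2] t) by ring, hproj]
    rw [heq]; exact hkey
  have h5 : 2 ^ (M - v) ∣ Nat.choose (2 ^ M) t * ordCompl[2] t :=
    (Nat.mul_dvd_mul_iff_left (pow_pos two_pos v)).mp h4
  have h6 : 2 ^ (M - v) ∣ Nat.choose (2 ^ M) t :=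
    (Nat.Coprime.dvd_of_dvd_mul_right ((hcop.pow_left _).symm).symm) h5
  exact dvd_trans (pow_dvd_pow 2 (by omega)) h6
lemma zmod2_add_self : ∀ y : ZMod 2, y + y = 0 := by decide

abbrev AV {k : ℕ} (n : Fin k → ℕ) := ∀ i : Fin k, ZMod (2 ^ n i)

section Core
variable {k : ℕ} {n : Fin k → ℕ}

/-- `a` is "even in all coordinates of exponent `> t`". -/
def QQ (hn : ∀ i, 1 ≤ n i) (t : ℕ) (a : AV n) : Prop :=
  ∀ i, t < n i → par2 (by have := hn i; omega : n i ≠ 0) (a i) = 0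

variable (hn : ∀ i, 1 ≤ n i)



/-- even vectors map to even vectors under additive maps -/
lemma even_transfer (φ : AV n →+ AV n) (a : AV n)
    (ha : ∀ j, par2 (by have := hn j; omega : n j ≠ 0) (a j) = 0) (j : Fin k) :
    par2 (by have := hn j; omega : n j ≠ 0) ((φ a) j) = 0 := by
  have hhalf : ∀ j, ∃ y, a j = y + y := fun j => par2_half _ _ (ha j)
  choose d hd using hhalf
  have ha2 : a = d + d := funext hd
  have : φ a = φ d + φ d := by rw [← map_add, ← ha2]
  rw [this]
  show par2 _ ((φ d) j + (φ d) j) = 0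
  rw [map_add]
  exact zmod2_add_self _

lemma omega_transfer (φ : AV n →+ AV n) (t : ℕ) (a : AV n) (h : 2 ^ t • a = 0) (i : Fin k)
    (hi : t < n i) : par2 (by have := hn i; omega : n i ≠ 0) ((φ a) i) = 0 := by
  have h2 : 2 ^ t • φ a = 0 := by rw [← map_nsmul, h, map_zero]
  have h3 : 2 ^ t • (φ a) i = 0 := by
    have := congrFun h2 i; simpa using this
  exact par2_kill hi _ h3

lemma QA (φ : AV n →+ AV n) (t : ℕ) (a : AV n) (ha : QQ hn t a) : QQ hn t (φ a) := by
  classical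
  intro i hi
  set c : AV n := fun j => if t < n j then 0 else a j with hc
  set b : AV n := a - c with hb
  have hbc : φ a = φ b + φ c := by rw [← map_add]; congr 1; simp [hb]
  rw [hbc]
  show par2 _ ((φ b) i + (φ c) i) = 0
  rw [map_add]
  have h1 : par2 (by have := hn i; omega : n i ≠ 0) ((φ b) i) = 0 := by
    refine even_transfer hn φ b ?_ i
    intro j
    by_cases hj : t < n j
    · have : b j = a j := by simp [hb, hc, hj]
      rw [this]; exact ha j hj
    · have : b j = 0 := by simp [hb, hc, hj]
      rw [this, map_zero]
  have h2 : par2 (by have := hn i; omega : n i ≠ 0) ((φ c) i) = 0 := by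
    refine omega_transfer hn φ t c ?_ i hi
    funext j
    by_cases hj : t < n j
    · simp [hc, hj]
    · have hcj : c j = a j := by simp [hc, hj]
      have hz : ((2 ^ t : ℕ) : ZMod (2 ^ n j)) = 0 := by
        rw [ZMod.natCast_eq_zero_iff]
        exact pow_dvd_pow 2 (by omega)
      have : (2 ^ t • c) j = 2 ^ t • c j := by simp
      rw [this, nsmul_eq_mul]
      push_cast
      rw [show ((2 : ZMod (2 ^ n j)) ^ t) = ((2 ^ t : ℕ) : ZMod (2 ^ n j)) by push_cast; ring,
        hz, zero_mul]
      rfl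
  rw [h1, h2, add_zero]

end Core
section Core2
variable {k : ℕ} {n : Fin k → ℕ} (hn : ∀ i, 1 ≤ n i)

lemma update_QQ (hinj : Function.Injective n) (t : ℕ) (a : AV n) (i : Fin k)
    (hni : n i = t) (ha : QQ hn t a) : QQ hn (t - 1) (Function.update a i 0) := by
  classical
  intro j hj
  by_cases hji : j = i
  · subst hji; rw [Function.update_self, map_zero]
  · rw [Function.update_of_ne hji]
    have : t < n j := by
      rcases lt_or_ge t (n j) with h | h
      · exact h
      · exfalso
        have : n j = t := by omega
        exact hji (hinj (by rw [this, hni]))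
    exact ha j this

lemma split_single (a : AV n) (i : Fin k) :
    a = Function.update a i 0 + (a i).val • Pi.single i 1 := by
  classical
  haveI : NeZero (2 ^ n i) := ⟨pow_ne_zero _ two_ne_zero⟩
  funext j
  simp only [Pi.add_apply, Pi.smul_apply]
  by_cases hji : j = i
  · subst hji
    rw [Function.update_self, Pi.single_eq_same, zero_add, nsmul_eq_mul, mul_one,
      ZMod.natCast_zmod_val]
  · rw [Function.update_of_ne hji, Pi.single_eq_of_ne hji, smul_zero, add_zero]

lemma diag_odd (hinj : Function.Injective n) (φ : AV n ≃+ AV n) (i : Fin k) :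
    par2 (by have := hn i; omega : n i ≠ 0) ((φ (Pi.single i 1)) i) = 1 := by
  classical
  set t := n i with ht
  set e1 : AV n := Pi.single i 1 with he1
  set c : AV n := φ.symm e1 with hc0
  have he1Q : QQ hn t e1 := by
    intro j hj
    have hji : j ≠ i := fun h => by rw [h] at hj; omega
    rw [he1, Pi.single_eq_of_ne hji, map_zero]
  have hc : QQ hn t c := QA hn φ.symm.toAddMonoidHom t e1 he1Q
  set c' : AV n := Function.update c i 0 with hc'0
  have hc' : QQ hn (t - 1) c' := update_QQ hn hinj t c i rfl hc
  have hsplit : c = c' + (c i).val • e1 := split_single c i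
  have hkey : φ c' + (c i).val • φ e1 = e1 := by
    rw [← map_nsmul, ← map_add, ← hsplit, hc0, φ.apply_symm_apply]
  have hφc' : par2 (by have := hn i; omega : n i ≠ 0) ((φ c') i) = 0 :=
    QA hn φ.toAddMonoidHom (t - 1) c' hc' i (by have := hn i; omega)
  have happ : (φ c') i + (c i).val • (φ e1) i = e1 i := by
    have := congrFun hkey i
    simpa only [Pi.add_apply, Pi.smul_apply] using this
  have h2 : par2 (by have := hn i; omega : n i ≠ 0) ((φ c') i)
      + (c i).val • par2 (by have := hn i; omega : n i ≠ 0) ((φ e1) i) = 1 := by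
    have := congrArg (par2 (by have := hn i; omega : n i ≠ 0)) happ
    rw [map_add, map_nsmul] at this
    rw [this, he1, Pi.single_eq_same, map_one]
  rw [hφc', zero_add] at h2
  rcases (show ∀ y : ZMod 2, y = 0 ∨ y = 1 by decide)
      (par2 (by have := hn i; omega : n i ≠ 0) ((φ e1) i)) with h | h
  · rw [h, smul_zero] at h2; exact absurd h2 zero_ne_one
  · exact h

lemma QB (hinj : Function.Injective n) (φ : AV n ≃+ AV n) (t : ℕ) (a : AV n)
    (ha : QQ hn t a) : QQ hn (t - 1) (φ a - a) := by
  classical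
  intro i hi
  have hpar : ∀ x y : ZMod (2 ^ n i),
      par2 (by have := hn i; omega : n i ≠ 0) (x - y)
        = par2 (by have := hn i; omega : n i ≠ 0) x
          - par2 (by have := hn i; omega : n i ≠ 0) y := fun x y => map_sub _ _ _
  have hsub : (φ a - a) i = (φ a) i - a i := rfl
  by_cases hti : t < n i
  · have hQA : par2 (by have := hn i; omega : n i ≠ 0) ((φ a) i) = 0 :=
      QA hn φ.toAddMonoidHom t a ha i hti
    rw [hsub, hpar, hQA, ha i hti, sub_zero]
  · have hni : n i = t := by have := hn i; omega
    set a' : AV n := Function.update a i 0 with ha'0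
    have ha' : QQ hn (t - 1) a' := update_QQ hn hinj t a i hni ha
    set e1 : AV n := Pi.single i 1 with he1
    have hsplit : a = a' + (a i).val • e1 := split_single a i
    have hφ : φ a - a = (φ a' - a') + (a i).val • (φ e1 - e1) := by
      conv_lhs => rw [hsplit]
      rw [map_add, map_nsmul, smul_sub]
      abel
    have happ : (φ a - a) i = ((φ a') i - a' i) + (a i).val • ((φ e1) i - e1 i) := by
      rw [hφ]; rfl
    have h1 : par2 (by have := hn i; omega : n i ≠ 0) ((φ a') i) = 0 :=
      QA hn φ.toAddMonoidHom (t - 1) a' ha' i (by omega)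
    have h2 : par2 (by have := hn i; omega : n i ≠ 0) (a' i) = 0 := by
      rw [ha'0, Function.update_self, map_zero]
    have h3 : par2 (by have := hn i; omega : n i ≠ 0) ((φ e1) i) = 1 :=
      diag_odd hn hinj φ i
    have h4 : par2 (by have := hn i; omega : n i ≠ 0) (e1 i) = 1 := by
      rw [he1, Pi.single_eq_same, map_one]
    rw [happ, map_add, map_nsmul, hpar, hpar, h1, h2, h3, h4]
    simp
end Core2

instance addAutGroupLegacy {A : Type*} [AddMonoid A] : Group (AddAut A) :=
  inferInstanceAs (Group (Multiplicative (AddAut A)))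

lemma addAutLegacy_mul_apply {A : Type*} [AddMonoid A] (e₁ e₂ : AddAut A) (m : A) :
    (e₁ * e₂) m = e₁ (e₂ m) := rfl

lemma addAutLegacy_one_apply {A : Type*} [AddMonoid A] (m : A) : (1 : AddAut A) m = m := rfl
section Nilp
variable {k : ℕ} {n : Fin k → ℕ}

lemma charT (T : ℕ) (hT : ∀ i, n i ≤ T) (d : AV n) : (2 ^ T : ℕ) • d = 0 := by
  funext i
  have hz : ((2 ^ T : ℕ) : ZMod (2 ^ n i)) = 0 := by
    rw [ZMod.natCast_eq_zero_iff]
    exact pow_dvd_pow 2 (hT i)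
  have : ((2 ^ T : ℕ) • d) i = (2 ^ T : ℕ) • d i := rfl
  rw [this, nsmul_eq_mul, hz, zero_mul]
  rfl

lemma iterQQ (hn : ∀ i, 1 ≤ n i) (hinj : Function.Injective n) (φ : AddAut (AV n)) (T : ℕ)
    (hT : ∀ i, n i ≤ T) (x : AddMonoid.End (AV n))
    (hx : ∀ a, x a = φ a - a) :
    ∀ (j : ℕ) (a : AV n), QQ hn (T - j) ((x ^ j) a) := by
  intro j
  induction j with
  | zero =>
    intro a i hi
    exact absurd (hT i) (by omega)
  | succ j ih =>
    intro a
    have happ : (x ^ (j + 1)) a = φ ((x ^ j) a) - (x ^ j) a := by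
      have h1 : (x ^ (j + 1)) a = x ((x ^ j) a) := by
        rw [AddMonoid.End.coe_pow, AddMonoid.End.coe_pow, Function.iterate_succ_apply']
      rw [h1, hx]
    rw [happ]
    have := QB hn hinj (φ : AV n ≃+ AV n) (T - j) ((x ^ j) a) (ih a)
    have heq : T - (j + 1) = T - j - 1 := by omega
    rw [heq]
    exact this

lemma pow_nilp (hn : ∀ i, 1 ≤ n i) (hinj : Function.Injective n) (φ : AddAut (AV n)) (T : ℕ)
    (hT : ∀ i, n i ≤ T) (hT1 : 1 ≤ T) (x : AddMonoid.End (AV n))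
    (hx : ∀ a, x a = φ a - a) :
    x ^ (T * T) = 0 := by
  have h2A : ∀ a : AV n, ∃ d, (x ^ T) a = d + d := by
    intro a
    have hq : QQ hn 0 ((x ^ T) a) := by
      have := iterQQ hn hinj φ T hT x hx T a
      rwa [Nat.sub_self] at this
    have : ∀ i, ∃ y, ((x ^ T) a) i = y + y := fun i =>
      par2_half _ _ (hq i (by have := hn i; omega))
    choose d hd using this
    exact ⟨d, funext hd⟩
  have hpowq : ∀ (q : ℕ) (a : AV n), ∃ d, (x ^ (T * q)) a = (2 ^ q : ℕ) • d := by
    intro q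
    induction q with
    | zero => intro a; exact ⟨a, by simp⟩
    | succ q ih =>
      intro a
      obtain ⟨d, hd⟩ := ih a
      obtain ⟨d', hd'⟩ := h2A d
      refine ⟨d', ?_⟩
      have h1 : (x ^ (T * (q + 1))) a = (x ^ T) ((x ^ (T * q)) a) := by
        rw [show T * (q + 1) = T + T * q by ring, pow_add, AddMonoid.End.coe_mul]
        rfl
      rw [h1, hd, map_nsmul, hd']
      rw [show (2 ^ (q + 1) : ℕ) = 2 ^ q * 2 by ring, mul_comm, mul_nsmul, two_nsmul]
  refine AddMonoid.End.ext _ fun a => ?_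
  obtain ⟨d, hd⟩ := hpowq T a
  rw [show (0 : AddMonoid.End (AV n)) a = 0 from rfl, hd, charT T hT d]

lemma addaut_pow_one (hn : ∀ i, 1 ≤ n i) (hinj : Function.Injective n) (φ : AddAut (AV n)) :
    ∃ M : ℕ, φ ^ (2 ^ M) = 1 := by
  classical
  set T := max 1 (Finset.univ.sup n) with hTdef
  have hT : ∀ i, n i ≤ T := fun i =>
    le_trans (Finset.le_sup (Finset.mem_univ i)) (le_max_right _ _)
  have hT1 : 1 ≤ T := le_max_left _ _
  set f : AddMonoid.End (AV n) := φ.toAddMonoidHom with hf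
  set x : AddMonoid.End (AV n) := f - 1 with hx
  have hxa : ∀ a, x a = φ a - a := fun a => rfl
  have hnil : x ^ (T * T) = 0 := pow_nilp hn hinj φ T hT hT1 x hxa
  have hcast : ((2 ^ T : ℕ) : AddMonoid.End (AV n)) = 0 := by
    refine AddMonoid.End.ext _ fun a => ?_
    rw [AddMonoid.End.natCast_apply, charT T hT a]
    rfl
  set M := T + T * T with hM
  have hfpow : f ^ (2 ^ M) = 1 := by
    have hf1 : f = x + 1 := by rw [hx]; abel
    rw [hf1, Commute.add_pow (Commute.one_right x)]
    rw [Finset.sum_eq_single 0]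
    · simp
    · intro m hm hm0
      have hm1 : 1 ≤ m := Nat.one_le_iff_ne_zero.mpr hm0
      by_cases hmT : T * T ≤ m
      · have : x ^ m = 0 := by
          rw [show m = T * T + (m - T * T) by omega, pow_add, hnil, zero_mul]
        rw [this, zero_mul, zero_mul]
      · have hdvd : 2 ^ T ∣ Nat.choose (2 ^ M) m := by
          have := aux_choose M (T * T) m hm1 (lt_of_lt_of_le (by omega) (Nat.lt_two_pow_self (n := T * T)).le)
            (by omega)
          rwa [hM, Nat.add_sub_cancel] at this
        obtain ⟨r, hr⟩ := hdvd
        rw [hr, Nat.cast_mul, hcast, zero_mul, mul_zero]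
    · intro h
      exact absurd (Finset.mem_range.mpr (by positivity)) h
  refine ⟨M, ?_⟩
  have hpowap : ∀ (j : ℕ) (a : AV n), (φ ^ j) a = (f ^ j) a := by
    intro j
    induction j with
    | zero => intro a; rfl
    | succ j ih =>
      intro a
      rw [pow_succ, addAutLegacy_mul_apply, pow_succ, AddMonoid.End.coe_mul]
      show (φ ^ j) (φ a) = (f ^ j) (f a)
      exact ih (φ a)
  refine AddEquiv.ext fun a => ?_
  rw [hpowap, hfpow]
  rfl

theorem ispgroup_addaut (hn : ∀ i, 1 ≤ n i) (hinj : Function.Injective n) :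
    IsPGroup 2 (AddAut (AV n)) := by
  intro φ
  obtain ⟨M, hM⟩ := addaut_pow_one hn hinj φ
  exact ⟨M, hM⟩
end Nilp
section Glue
variable {k : ℕ} {n : Fin k → ℕ}

/-- Transfer between `AddAut` of the pi type and `MulAut` of the multiplicative pi type. -/
def addAutToMulAut : AddAut (AV n) ≃* MulAut (∀ i : Fin k, Multiplicative (ZMod (2 ^ n i))) :=
  MulEquiv.trans
    ({ AddEquiv.toMultiplicative with
        map_mul' := fun _ _ => rfl } :
      AddAut (AV n) ≃* MulAut (Multiplicative (AV n)))
    (MulAut.congr (MulEquiv.piMultiplicative fun i => ZMod (2 ^ n i)))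

end Glue

section Order3
variable {k : ℕ} {n : Fin k → ℕ} (i j : Fin k) (cc : ZMod (2 ^ n j) ≃+ ZMod (2 ^ n i))

def F0 (a : AV n) : AV n :=
  Function.update (Function.update a i (cc (- a j))) j (cc.symm (a i) - a j)

variable {i j}

lemma F0j (a : AV n) : F0 i j cc a j = cc.symm (a i) - a j := Function.update_self _ _ _

lemma F0i (hij : i ≠ j) (a : AV n) : F0 i j cc a i = cc (- a j) := by
  rw [F0, Function.update_of_ne hij, Function.update_self]

lemma F0o {l : Fin k} (hli : l ≠ i) (hlj : l ≠ j) (a : AV n) : F0 i j cc a l = a l := by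
  rw [F0, Function.update_of_ne hlj, Function.update_of_ne hli]

lemma F0add (hij : i ≠ j) (a b : AV n) :
    F0 i j cc (a + b) = F0 i j cc a + F0 i j cc b := by
  funext l
  rcases eq_or_ne l j with rfl | hlj
  · rw [Pi.add_apply, F0j, F0j, F0j, Pi.add_apply, Pi.add_apply, map_add]
    abel
  rcases eq_or_ne l i with rfl | hli
  · rw [Pi.add_apply, F0i cc hij, F0i cc hij, F0i cc hij, Pi.add_apply, neg_add, map_add]
  · rw [Pi.add_apply, F0o cc hli hlj, F0o cc hli hlj, F0o cc hli hlj, Pi.add_apply]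

lemma F03 (hij : i ≠ j) (a : AV n) : F0 i j cc (F0 i j cc (F0 i j cc a)) = a := by
  funext l
  rcases eq_or_ne l j with rfl | hlj
  · simp only [F0j cc, F0i cc hij]
    simp only [map_sub, map_neg, AddEquiv.symm_apply_apply, AddEquiv.apply_symm_apply]
    abel
  rcases eq_or_ne l i with rfl | hli
  · simp only [F0j cc, F0i cc hij]
    simp only [map_sub, map_neg, AddEquiv.symm_apply_apply, AddEquiv.apply_symm_apply]
    abel
  · simp only [F0o cc hli hlj]

def sigma3 (hij : i ≠ j) : AddAut (AV n) :=
  { toFun := F0 i j cc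
    invFun := fun a => F0 i j cc (F0 i j cc a)
    left_inv := fun a => F03 cc hij a
    right_inv := fun a => F03 cc hij a
    map_add' := F0add cc hij }

lemma sigma3_cube (hij : i ≠ j) : sigma3 cc hij ^ 3 = 1 := by
  refine AddEquiv.ext fun a => ?_
  have h : (sigma3 cc hij ^ 3) a = sigma3 cc hij (sigma3 cc hij (sigma3 cc hij a)) := by
    rw [pow_succ, pow_succ, pow_one, addAutLegacy_mul_apply, addAutLegacy_mul_apply]
  rw [h]
  exact F03 cc hij a

lemma sigma3_ne_one (hn : ∀ i, 1 ≤ n i) (hij : i ≠ j) : sigma3 cc hij ≠ 1 := by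
  classical
  intro h
  haveI : Fact (1 < 2 ^ n i) :=
    ⟨by have := hn i; calc 1 < 2 ^ 1 := by norm_num
        _ ≤ 2 ^ n i := Nat.pow_le_pow_right (by norm_num) this⟩
  have h1 : sigma3 cc hij (Pi.single i 1) i = (1 : ZMod (2 ^ n i)) := by
    rw [h]; rw [addAutLegacy_one_apply, Pi.single_eq_same]
  have h2 : sigma3 cc hij (Pi.single i 1) i = 0 := by
    show F0 i j cc (Pi.single i 1) i = 0
    rw [F0i cc hij, Pi.single_eq_of_ne (Ne.symm hij), neg_zero, map_zero]
  rw [h2] at h1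
  exact zero_ne_one h1

end Order3
theorem stmt8 (k : ℕ) (hk : 1 ≤ k) (n : Fin k → ℕ) (hn : ∀ i, 1 ≤ n i) :
    IsPGroup 2 (MulAut (∀ i : Fin k, Multiplicative (ZMod (2 ^ n i)))) ↔
      Function.Injective n := by
  constructor
  · intro hP
    by_contra hninj
    obtain ⟨i, j, hnij, hij⟩ := Function.not_injective_iff.mp hninj
    have hA : IsPGroup 2 (AddAut (AV n)) := hP.of_equiv (addAutToMulAut (n := n)).symm
    have h2 : (2 : ℕ) ^ n j = 2 ^ n i := by rw [hnij]
    set cc : ZMod (2 ^ n j) ≃+ ZMod (2 ^ n i) := (ZMod.ringEquivCongr h2).toAddEquiv with hcc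
    set σ : AddAut (AV n) := sigma3 cc hij with hσ
    obtain ⟨m, hm⟩ := hA σ
    have h1 : orderOf σ ∣ 2 ^ m := orderOf_dvd_of_pow_eq_one hm
    have h3 : orderOf σ ∣ 3 := orderOf_dvd_of_pow_eq_one (sigma3_cube cc hij)
    have hco : Nat.Coprime (2 ^ m) 3 := Nat.Coprime.pow_left _ (by decide)
    have hdvd1 : orderOf σ ∣ 1 := hco ▸ Nat.dvd_gcd h1 h3
    have : σ = 1 := orderOf_eq_one_iff.mp (Nat.dvd_one.mp hdvd1)
    exact sigma3_ne_one cc hn hij this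
  · intro hinj
    exact (ispgroup_addaut hn hinj).of_equiv (addAutToMulAut (n := n))
end
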